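/- arXiv:math/0612606 — 8 statements merged into one kernel-verified Lean document; each statement's English description precedes it below -/
import Mathlib

section
/- Assume 𝐒 is bounded but 𝐒₋₁ is not bounded on 𝐄. Let T be a Toeplitz operator on 𝐄. Then for every z in the open disk { z ∈ ℂ : |z| < ρ(𝐒) } the series T̃(z) = Σ_{n∈ℤ} T̂(n) zⁿ converges, and T̃ is holomorphic there with |T̃(z)| ≤ ‖T‖ (i.e. T̃ belongs to H^∞ of the open disk of radius ρ(𝐒)). -/
set_option linter.unusedSectionVars false
set_option maxHeartbeats 1600000


open scoped ENNReal NNReal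
open Complex

section Setup

variable {E : Type*} [NormedAddCommGroup E] [NormedSpace ℂ E] [CompleteSpace E]
    (ι : E →ₗ[ℂ] (ℕ → ℂ)) (hι : Function.Injective ι)
    (e : ℕ → E) (he : ∀ k : ℕ, ι (e k) = Pi.single k 1)
    (hdense : Dense (Submodule.span ℂ (Set.range e) : Set E))
    (hcoord : ∀ n : ℕ, Continuous fun x : E => ι x n)
    (Γ : ℂ → E → E)
    (hΓ : ∀ z : ℂ, ‖z‖ = 1 → ∀ x : E, ∀ n : ℕ, ι (Γ z x) n = z ^ n * ι x n)
    (hΓiso : ∀ z : ℂ, ‖z‖ = 1 → ∀ x : E, ‖Γ z x‖ = ‖x‖)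

include he in
lemma ι_e (k n : ℕ) : ι (e k) n = if n = k then 1 else 0 := by
  rw [he k]; by_cases h : n = k <;> simp [Pi.single_apply, h]

include hdense in
lemma ext_CLM {F : Type*} [NormedAddCommGroup F] [NormedSpace ℂ F]
    (f g : E →L[ℂ] F) (h : ∀ k, f (e k) = g (e k)) : f = g := by
  refine ContinuousLinearMap.ext_on hdense ?_
  rintro x ⟨k, rfl⟩
  exact h k

include hι in
lemma ext_vec (x y : E) (h : ∀ n, ι x n = ι y n) : x = y := by
  apply hι; funext n; exact h n

include hι hΓ in
lemma Γ_add {z : ℂ} (hz : ‖z‖ = 1) (x y : E) : Γ z (x + y) = Γ z x + Γ z y := by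
  apply ext_vec ι hι; intro n
  simp [hΓ z hz, mul_add]

include hι hΓ in
lemma Γ_smul {z : ℂ} (hz : ‖z‖ = 1) (c : ℂ) (x : E) : Γ z (c • x) = c • Γ z x := by
  apply ext_vec ι hι; intro n
  simp [hΓ z hz]; ring

include hι hΓ in
lemma Γ_sub {z : ℂ} (hz : ‖z‖ = 1) (x y : E) : Γ z (x - y) = Γ z x - Γ z y := by
  apply ext_vec ι hι; intro n
  simp [hΓ z hz, mul_sub]

include hι he hΓ in
lemma Γ_e {z : ℂ} (hz : ‖z‖ = 1) (k : ℕ) : Γ z (e k) = z ^ k • e k := by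
  apply ext_vec ι hι; intro n
  rw [hΓ z hz]
  simp only [map_smul, Pi.smul_apply, smul_eq_mul]
  rw [ι_e ι e he]
  by_cases h : n = k <;> simp [h]

include hι he hdense hΓ hΓiso in
lemma contΓ (x : E) : Continuous fun θ : ℝ => Γ (Complex.exp (θ * I)) x := by
  have hz : ∀ θ : ℝ, ‖Complex.exp ((θ:ℂ) * I)‖ = 1 := fun θ => by
    simpa using Complex.abs_exp_ofReal_mul_I θ
  -- continuity for elements of the span
  have hspan : ∀ y ∈ Submodule.span ℂ (Set.range e),
      Continuous fun θ : ℝ => Γ (Complex.exp (θ * I)) y := by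
    intro y hy
    induction hy using Submodule.span_induction with
    | mem y hy =>
      obtain ⟨k, rfl⟩ := hy
      have : (fun θ : ℝ => Γ (Complex.exp (θ * I)) (e k))
          = fun θ : ℝ => (Complex.exp (θ * I)) ^ k • e k := by
        funext θ; exact Γ_e ι hι e he Γ hΓ (hz θ) k
      rw [this]
      exact ((Complex.continuous_exp.comp (by continuity)).pow k).smul continuous_const
    | zero =>
      have : ∀ θ : ℝ, Γ (Complex.exp ((θ:ℂ) * I)) (0 : E) = 0 := by
        intro θ
        have := Γ_smul ι hι Γ hΓ (hz θ) 0 (0:E)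
        simpa using this
      simpa [funext this] using continuous_const
    | add y z _ _ hy hz' =>
      have : (fun θ : ℝ => Γ (Complex.exp (θ * I)) (y + z))
          = fun θ : ℝ => Γ (Complex.exp (θ * I)) y + Γ (Complex.exp (θ * I)) z := by
        funext θ; exact Γ_add ι hι Γ hΓ (hz θ) y z
      rw [this]; exact hy.add hz'
    | smul c y _ hy =>
      have : (fun θ : ℝ => Γ (Complex.exp (θ * I)) (c • y))
          = fun θ : ℝ => c • Γ (Complex.exp (θ * I)) y := by
        funext θ; exact Γ_smul ι hι Γ hΓ (hz θ) c y
      rw [this]; exact hy.const_smul c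
  -- choose approximations
  have happrox : ∀ j : ℕ, ∃ y, y ∈ Submodule.span ℂ (Set.range e) ∧
      ‖x - y‖ < 1 / (j + 1) := by
    intro j
    have := (Metric.dense_iff).mp hdense
    rcases Metric.mem_closure_iff.mp (hdense x) (1 / (j + 1)) (by positivity) with ⟨y, hy, hdist⟩
    exact ⟨y, hy, by rwa [dist_eq_norm] at hdist⟩
  choose y hy hnorm using happrox
  have htu : TendstoUniformly (fun j (θ:ℝ) => Γ (Complex.exp (θ * I)) (y j))
      (fun θ : ℝ => Γ (Complex.exp (θ * I)) x) Filter.atTop := by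
    rw [Metric.tendstoUniformly_iff]
    intro ε hε
    obtain ⟨N, hN⟩ := exists_nat_gt (1/ε)
    filter_upwards [Filter.eventually_ge_atTop N] with j hj θ
    have h1 : dist (Γ (Complex.exp (θ * I)) x) (Γ (Complex.exp (θ * I)) (y j))
        = ‖x - y j‖ := by
      rw [dist_eq_norm, ← Γ_sub ι hι Γ hΓ (hz θ)]
      exact hΓiso _ (hz θ) _
    rw [h1]
    refine lt_of_lt_of_le (hnorm j) ?_
    rw [div_le_iff₀ (by positivity)]
    have : (1:ℝ)/ε ≤ j + 1 := le_trans (le_of_lt hN) (by exact_mod_cast le_trans hj (Nat.le_succ j))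
    calc (1:ℝ) = ε * (1/ε) := by field_simp
    _ ≤ ε * (j+1) := by nlinarith [hε]
  exact htu.continuous (Filter.Eventually.of_forall fun j => hspan (y j) (hy j)).frequently

include hι he hdense hΓ hΓiso in
lemma contΓ2 {g : ℝ → E} (hg : Continuous g) :
    Continuous fun θ : ℝ => Γ (Complex.exp (θ * I)) (g θ) := by
  have hz : ∀ θ : ℝ, ‖Complex.exp ((θ:ℂ) * I)‖ = 1 := fun θ => by
    simpa using Complex.abs_exp_ofReal_mul_I θ
  rw [continuous_iff_continuousAt]
  intro θ₀
  have key : (fun θ : ℝ => Γ (Complex.exp (θ * I)) (g θ))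
      = fun θ : ℝ => (Γ (Complex.exp (θ * I)) (g θ) - Γ (Complex.exp (θ * I)) (g θ₀))
        + Γ (Complex.exp (θ * I)) (g θ₀) := by
    funext θ; abel
  rw [key]
  have h2 : ContinuousAt (fun θ : ℝ => Γ (Complex.exp (θ * I)) (g θ₀)) θ₀ :=
    (contΓ ι hι e he hdense Γ hΓ hΓiso (g θ₀)).continuousAt
  have h1 : Filter.Tendsto
      (fun θ : ℝ => Γ (Complex.exp (θ * I)) (g θ) - Γ (Complex.exp (θ * I)) (g θ₀))
      (nhds θ₀) (nhds 0) := by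
    have hb : ∀ θ : ℝ, ‖Γ (Complex.exp (θ * I)) (g θ) - Γ (Complex.exp (θ * I)) (g θ₀)‖
        ≤ ‖g θ - g θ₀‖ := by
      intro θ
      rw [← Γ_sub ι hι Γ hΓ (hz θ), hΓiso _ (hz θ)]
    have hgt : Filter.Tendsto (fun θ => ‖g θ - g θ₀‖) (nhds θ₀) (nhds 0) := by
      have : Filter.Tendsto (fun θ => g θ - g θ₀) (nhds θ₀) (nhds 0) := by
        have h := ((hg.sub (continuous_const : Continuous fun _ : ℝ => g θ₀))).tendsto θ₀
        simp only [Pi.sub_apply, sub_self] at h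
        exact h
      simpa using this.norm
    exact squeeze_zero_norm hb hgt
  have h3 := h1.add (h2 : Filter.Tendsto _ _ _)
  simpa [ContinuousAt] using h3

end Setup
section Core

variable {E : Type*} [NormedAddCommGroup E] [NormedSpace ℂ E] [CompleteSpace E]
    (ι : E →ₗ[ℂ] (ℕ → ℂ)) (hι : Function.Injective ι)
    (e : ℕ → E) (he : ∀ k : ℕ, ι (e k) = Pi.single k 1)
    (hdense : Dense (Submodule.span ℂ (Set.range e) : Set E))
    (hcoord : ∀ n : ℕ, Continuous fun x : E => ι x n)
    (Γ : ℂ → E → E)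
    (hΓ : ∀ z : ℂ, ‖z‖ = 1 → ∀ x : E, ∀ n : ℕ, ι (Γ z x) n = z ^ n * ι x n)
    (hΓiso : ∀ z : ℂ, ‖z‖ = 1 → ∀ x : E, ‖Γ z x‖ = ‖x‖)
    (Sop : E →L[ℂ] E)
    (hSop : ∀ x : E, ι (Sop x) 0 = 0 ∧ ∀ n : ℕ, ι (Sop x) (n + 1) = ι x n)

/-- coordinate functionals as CLMs -/
noncomputable def coordCLM (n : ℕ) : E →L[ℂ] ℂ :=
  { toLinearMap := (LinearMap.proj n).comp ι
    cont := hcoord n }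

@[simp] lemma coordCLM_apply (n : ℕ) (x : E) : coordCLM ι hcoord n x = ι x n := rfl

include hSop in
lemma Sop_pow_coord (j : ℕ) (x : E) (n : ℕ) :
    ι ((Sop ^ j) x) n = if n < j then 0 else ι x (n - j) := by
  induction j generalizing n with
  | zero => simp
  | succ j ih =>
    have hstep : (Sop ^ (j+1)) x = Sop ((Sop ^ j) x) := by
      rw [pow_succ']; rfl
    rw [hstep]
    cases n with
    | zero => simp [(hSop _).1]
    | succ n =>
      rw [(hSop _).2 n, ih n]
      by_cases h : n < j
      · simp [h, Nat.succ_lt_succ h]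
      · have : ¬ (n + 1 < j + 1) := by omega
        simp [h, this, Nat.succ_sub_succ]

include hι he hSop in
lemma Sop_pow_e (j k : ℕ) : (Sop ^ j) (e k) = e (k + j) := by
  apply hι; funext n
  rw [Sop_pow_coord ι Sop hSop j (e k) n, ι_e ι e he, ι_e ι e he]
  by_cases h : n < j
  · have : ¬ (n = k + j) := by omega
    simp [h, this]
  · have h2 : n - j = k ↔ n = k + j := by omega
    by_cases h3 : n = k + j <;> simp [h, h2, h3]

lemma intExp (d : ℤ) :
    ∫ θ in (0:ℝ)..(2*Real.pi), Complex.exp ((d:ℂ) * θ * I) =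
      if d = 0 then (2*Real.pi:ℂ) else 0 := by
  by_cases hd : d = 0
  · simp [hd]
  · have hform : ∀ θ : ℝ, (d:ℂ) * θ * I = ((d:ℂ) * I) * θ := by intro θ; ring
    simp only [hform]
    rw [integral_exp_mul_complex (by simp [hd, Complex.I_ne_zero])]
    have h1 : (d:ℂ) * I * (2*Real.pi:ℝ) = (d:ℤ) * (2 * Real.pi * I) := by
      push_cast; ring
    rw [h1, Complex.exp_int_mul_two_pi_mul_I]
    simp [hd]

end Core
section Core2

variable {E : Type*} [NormedAddCommGroup E] [NormedSpace ℂ E] [CompleteSpace E]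
    (ι : E →ₗ[ℂ] (ℕ → ℂ)) (hι : Function.Injective ι)
    (e : ℕ → E) (he : ∀ k : ℕ, ι (e k) = Pi.single k 1)
    (hdense : Dense (Submodule.span ℂ (Set.range e) : Set E))
    (hcoord : ∀ n : ℕ, Continuous fun x : E => ι x n)
    (Γ : ℂ → E → E)
    (hΓ : ∀ z : ℂ, ‖z‖ = 1 → ∀ x : E, ∀ n : ℕ, ι (Γ z x) n = z ^ n * ι x n)
    (hΓiso : ∀ z : ℂ, ‖z‖ = 1 → ∀ x : E, ‖Γ z x‖ = ‖x‖)

include hι he hdense hcoord hΓ hΓiso in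
lemma core (A : E →L[ℂ] E) (c : ℝ → ℂ) (hc : Continuous c) :
    ∃ D : E →L[ℂ] E,
      (∀ x : E, ‖D x‖ ≤ ((2*Real.pi)⁻¹ * (∫ θ in (0:ℝ)..(2*Real.pi), ‖c θ‖) * ‖A‖) * ‖x‖) ∧
      (∀ k n : ℕ, ι (D (e k)) n =
        ((2*Real.pi:ℝ):ℂ)⁻¹ * ((∫ θ in (0:ℝ)..(2*Real.pi), c θ *
          Complex.exp ((((n:ℤ) - (k:ℤ) : ℤ):ℂ) * θ * I)) * ι (A (e k)) n)) := by
  have hz : ∀ θ : ℝ, ‖Complex.exp ((θ:ℂ) * I)‖ = 1 := fun θ => by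
    simpa using Complex.abs_exp_ofReal_mul_I θ
  set G : ℝ → E → E := fun θ x =>
    c θ • Γ (Complex.exp (θ * I)) (A (Γ (Complex.exp (↑(-θ) * I)) x)) with hG
  have hGcont : ∀ x : E, Continuous fun θ : ℝ => G θ x := by
    intro x
    apply hc.smul
    exact contΓ2 ι hι e he hdense Γ hΓ hΓiso
      (A.continuous.comp ((contΓ ι hι e he hdense Γ hΓ hΓiso x).comp continuous_neg))
  have hGint : ∀ x : E, IntervalIntegrable (fun θ => G θ x)
      MeasureTheory.volume 0 (2*Real.pi) := fun x => (hGcont x).intervalIntegrable _ _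
  have hGadd : ∀ θ x y, G θ (x + y) = G θ x + G θ y := by
    intro θ x y
    rw [hG]
    simp only
    rw [Γ_add ι hι Γ hΓ (hz (-θ)) x y, map_add,
      Γ_add ι hι Γ hΓ (hz θ), smul_add]
  have hGsmul : ∀ θ (a : ℂ) x, G θ (a • x) = a • G θ x := by
    intro θ a x
    rw [hG]
    simp only
    rw [Γ_smul ι hι Γ hΓ (hz (-θ)) a x, map_smul,
      Γ_smul ι hι Γ hΓ (hz θ), smul_comm]
  have hGnorm : ∀ θ x, ‖G θ x‖ ≤ ‖c θ‖ * (‖A‖ * ‖x‖) := by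
    intro θ x
    rw [hG]
    simp only [norm_smul]
    apply mul_le_mul_of_nonneg_left _ (norm_nonneg _)
    rw [hΓiso _ (hz θ)]
    calc ‖A (Γ (Complex.exp (↑(-θ) * I)) x)‖ ≤ ‖A‖ * ‖Γ (Complex.exp (↑(-θ) * I)) x‖ :=
          A.le_opNorm _
    _ = ‖A‖ * ‖x‖ := by rw [hΓiso _ (hz (-θ))]
  set Dlin : E →ₗ[ℂ] E :=
    { toFun := fun x => (2*Real.pi)⁻¹ • ∫ θ in (0:ℝ)..(2*Real.pi), G θ x
      map_add' := by
        intro x y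
        simp only [hGadd]
        rw [intervalIntegral.integral_add (hGint x) (hGint y), smul_add]
      map_smul' := by
        intro a x
        simp only [hGsmul]
        rw [intervalIntegral.integral_smul, RingHom.id_apply, smul_comm] } with hDlin
  have hbound : ∀ x : E, ‖Dlin x‖ ≤
      ((2*Real.pi)⁻¹ * (∫ θ in (0:ℝ)..(2*Real.pi), ‖c θ‖) * ‖A‖) * ‖x‖ := by
    intro x
    have h2pi : (0:ℝ) ≤ 2*Real.pi := by positivity
    have h1 : ‖Dlin x‖ = (2*Real.pi)⁻¹ * ‖∫ θ in (0:ℝ)..(2*Real.pi), G θ x‖ := by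
      rw [hDlin]
      simp only [LinearMap.coe_mk, AddHom.coe_mk, norm_smul, Real.norm_eq_abs]
      congr 1
      exact _root_.abs_of_nonneg (by positivity)
    rw [h1]
    have h2 : ‖∫ θ in (0:ℝ)..(2*Real.pi), G θ x‖ ≤
        ∫ θ in (0:ℝ)..(2*Real.pi), ‖c θ‖ * (‖A‖ * ‖x‖) := by
      refine le_trans (intervalIntegral.norm_integral_le_integral_norm h2pi) ?_
      apply intervalIntegral.integral_mono_on h2pi
        ((hGcont x).norm.intervalIntegrable _ _)
        ((hc.norm.mul continuous_const).intervalIntegrable _ _)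
      intro θ _
      exact hGnorm θ x
    rw [intervalIntegral.integral_mul_const] at h2
    calc (2*Real.pi)⁻¹ * ‖∫ θ in (0:ℝ)..(2*Real.pi), G θ x‖
        ≤ (2*Real.pi)⁻¹ * ((∫ θ in (0:ℝ)..(2*Real.pi), ‖c θ‖) * (‖A‖ * ‖x‖)) := by
          apply mul_le_mul_of_nonneg_left h2 (by positivity)
    _ = ((2*Real.pi)⁻¹ * (∫ θ in (0:ℝ)..(2*Real.pi), ‖c θ‖) * ‖A‖) * ‖x‖ := by ring
  refine ⟨Dlin.mkContinuous _ hbound, fun x => Dlin.mkContinuous_apply _ hbound x ▸ hbound x, ?_⟩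
  intro k n
  have happ : (Dlin.mkContinuous _ hbound) (e k) =
      (2*Real.pi)⁻¹ • ∫ θ in (0:ℝ)..(2*Real.pi), G θ (e k) := rfl
  rw [happ]
  have hsmul : ι ((2*Real.pi)⁻¹ • ∫ θ in (0:ℝ)..(2*Real.pi), G θ (e k)) n
      = ((2*Real.pi:ℝ):ℂ)⁻¹ * ι (∫ θ in (0:ℝ)..(2*Real.pi), G θ (e k)) n := by
    have h1 := (coordCLM ι hcoord n).map_smul_of_tower ((2*Real.pi)⁻¹ : ℝ)
      (∫ θ in (0:ℝ)..(2*Real.pi), G θ (e k))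
    simp only [coordCLM_apply] at h1
    rw [h1, Complex.real_smul, Complex.ofReal_inv]
  rw [hsmul]
  have hcomm : ι (∫ θ in (0:ℝ)..(2*Real.pi), G θ (e k)) n
      = ∫ θ in (0:ℝ)..(2*Real.pi), ι (G θ (e k)) n := by
    have := (coordCLM ι hcoord n).intervalIntegral_comp_comm (hGint (e k))
    simpa using this.symm
  rw [hcomm]
  have hpt : ∀ θ : ℝ, ι (G θ (e k)) n =
      (c θ * Complex.exp ((((n:ℤ) - (k:ℤ) : ℤ):ℂ) * θ * I)) * ι (A (e k)) n := by
    intro θ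
    rw [hG]
    simp only
    rw [map_smul]
    simp only [Pi.smul_apply, smul_eq_mul]
    rw [hΓ _ (hz θ), Γ_e ι hι e he Γ hΓ (hz (-θ)) k, map_smul, map_smul]
    simp only [Pi.smul_apply, smul_eq_mul]
    have hexp1 : Complex.exp ((θ:ℂ) * I) ^ n = Complex.exp ((n:ℂ) * θ * I) := by
      rw [← Complex.exp_nat_mul]; ring_nf
    have hexp2 : Complex.exp (((-θ:ℝ):ℂ) * I) ^ k = Complex.exp (-(k:ℂ) * θ * I) := by
      rw [← Complex.exp_nat_mul]; push_cast; ring_nf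
    rw [hexp1, hexp2]
    have hsplit : Complex.exp ((((n:ℤ) - (k:ℤ) : ℤ):ℂ) * θ * I)
        = Complex.exp ((n:ℂ) * θ * I) * Complex.exp (-(k:ℂ) * θ * I) := by
      rw [← Complex.exp_add]; congr 1; push_cast; ring
    rw [hsplit]; ring
  simp only [hpt]
  rw [intervalIntegral.integral_mul_const]

end Core2
section Diag

variable {E : Type*} [NormedAddCommGroup E] [NormedSpace ℂ E] [CompleteSpace E]
    (ι : E →ₗ[ℂ] (ℕ → ℂ)) (hι : Function.Injective ι)
    (e : ℕ → E) (he : ∀ k : ℕ, ι (e k) = Pi.single k 1)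
    (hdense : Dense (Submodule.span ℂ (Set.range e) : Set E))
    (hcoord : ∀ n : ℕ, Continuous fun x : E => ι x n)
    (Γ : ℂ → E → E)
    (hΓ : ∀ z : ℂ, ‖z‖ = 1 → ∀ x : E, ∀ n : ℕ, ι (Γ z x) n = z ^ n * ι x n)
    (hΓiso : ∀ z : ℂ, ‖z‖ = 1 → ∀ x : E, ‖Γ z x‖ = ‖x‖)
    (Sop : E →L[ℂ] E)
    (hSop : ∀ x : E, ι (Sop x) 0 = 0 ∧ ∀ n : ℕ, ι (Sop x) (n + 1) = ι x n)
    (A : E →L[ℂ] E)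
    (hA : ∀ k n : ℕ, ι (A (e (k + 1))) (n + 1) = ι (A (e k)) n)

include hA in
lemma ent_shift (j k n : ℕ) : ι (A (e (k + j))) (n + j) = ι (A (e k)) n := by
  induction j with
  | zero => rfl
  | succ j ih => rw [show k + (j+1) = (k+j) + 1 by ring, show n + (j+1) = (n+j) + 1 by ring,
      hA (k+j) (n+j), ih]

/-- norm of the unimodular weight -/
lemma exp_norm_one (a : ℤ) (θ : ℝ) : ‖Complex.exp ((a:ℂ) * θ * I)‖ = 1 := by
  rw [Complex.norm_exp]
  have : ((a:ℂ) * θ * I).re = 0 := by simp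
  rw [this, Real.exp_zero]

lemma exp_int_continuous (a : ℤ) : Continuous fun θ : ℝ => Complex.exp ((a:ℂ) * θ * I) := by
  apply Complex.continuous_exp.comp
  continuity

/-- the integral ∫ exp(-mθI) exp(dθI) = ite (d = m) 2π 0 -/
lemma intExp2 (a d : ℤ) :
    ∫ θ in (0:ℝ)..(2*Real.pi), Complex.exp ((a:ℂ) * θ * I) *
      Complex.exp ((d:ℂ) * θ * I) = if d = -a then (2*Real.pi:ℂ) else 0 := by
  have h1 : ∀ θ : ℝ, Complex.exp ((a:ℂ) * θ * I) * Complex.exp ((d:ℂ) * θ * I)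
      = Complex.exp (((a + d : ℤ):ℂ) * θ * I) := by
    intro θ; rw [← Complex.exp_add]; congr 1; push_cast; ring
  simp only [h1]
  rw [intExp (a + d)]
  by_cases h : a + d = 0
  · rw [if_pos h, if_pos (by omega)]
  · rw [if_neg h, if_neg (by omega)]

include hι he hdense hcoord hΓ hΓiso hA in
lemma diag_extract (m : ℤ) :
    ∃ D : E →L[ℂ] E, ‖D‖ ≤ ‖A‖ ∧ ∀ k n : ℕ,
      ι (D (e k)) n = if (n:ℤ) - k = m then ι (A (e k)) n else 0 := by
  obtain ⟨D, hb, hent⟩ := core ι hι e he hdense hcoord Γ hΓ hΓiso A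
    (fun θ => Complex.exp (((-m : ℤ):ℂ) * θ * I)) (exp_int_continuous (-m))
  have hpi : (0:ℝ) < 2*Real.pi := by positivity
  refine ⟨D, ?_, ?_⟩
  · apply ContinuousLinearMap.opNorm_le_bound _ (norm_nonneg A)
    intro x
    refine le_trans (hb x) ?_
    apply mul_le_mul_of_nonneg_right _ (norm_nonneg x)
    have hint : (∫ θ in (0:ℝ)..(2*Real.pi), ‖Complex.exp (((-m : ℤ):ℂ) * θ * I)‖)
        = 2*Real.pi := by
      have : ∀ θ : ℝ, ‖Complex.exp (((-m : ℤ):ℂ) * θ * I)‖ = 1 := exp_norm_one (-m)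
      simp only [this]
      simp
    rw [hint]
    rw [inv_mul_cancel₀ (ne_of_gt hpi), one_mul]
  · intro k n
    rw [hent k n, intExp2 (-m) ((n:ℤ) - k)]
    simp only [neg_neg]
    by_cases h : (n:ℤ) - k = m
    · rw [if_pos h, if_pos h]
      have hpine : (Real.pi:ℂ) ≠ 0 := by
        simp [Real.pi_ne_zero]
      push_cast
      field_simp
    · rw [if_neg h, if_neg h]
      simp

include hA in
lemma ent0 (k m : ℕ) : ι (A (e k)) (m + k) = ι (A (e 0)) m := by
  have := ent_shift ι e A hA k 0 m
  simpa using this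

include hι he hdense hcoord hΓ hΓiso hSop hA in
lemma diag_nonneg (m : ℕ) : ‖ι (A (e 0)) m‖ * ‖Sop ^ m‖ ≤ ‖A‖ := by
  obtain ⟨D, hD, hent⟩ := diag_extract ι hι e he hdense hcoord Γ hΓ hΓiso A hA (m : ℤ)
  have hDeq : D = ι (A (e 0)) m • (Sop ^ m) := by
    apply ext_CLM e hdense
    intro k
    apply hι
    funext n
    rw [hent k n]
    have hrhs : ι ((ι (A (e 0)) m • (Sop ^ m)) (e k)) n
        = ι (A (e 0)) m * ι ((Sop ^ m) (e k)) n := by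
      simp only [ContinuousLinearMap.smul_apply, map_smul, Pi.smul_apply, smul_eq_mul]
    rw [hrhs, Sop_pow_e ι hι e he Sop hSop m k, ι_e ι e he]
    by_cases h : (n:ℤ) - k = m
    · have hn : n = k + m := by omega
      rw [if_pos h, if_pos hn, hn, mul_one]
      rw [show k + m = m + k by ring]
      exact ent0 ι e A hA k m
    · have hn : ¬ (n = k + m) := by omega
      rw [if_neg h, if_neg hn, mul_zero]
  have hns : ‖ι (A (e 0)) m • (Sop ^ m)‖ = ‖ι (A (e 0)) m‖ * ‖Sop ^ m‖ := norm_smul (β := E →L[ℂ] E) (ι (A (e 0)) m) (Sop ^ m)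
  rw [hDeq, hns] at hD
  exact hD

end Diag
section Neg

variable {E : Type*} [NormedAddCommGroup E] [NormedSpace ℂ E] [CompleteSpace E]
    (ι : E →ₗ[ℂ] (ℕ → ℂ)) (hι : Function.Injective ι)
    (e : ℕ → E) (he : ∀ k : ℕ, ι (e k) = Pi.single k 1)
    (hdense : Dense (Submodule.span ℂ (Set.range e) : Set E))
    (hcoord : ∀ n : ℕ, Continuous fun x : E => ι x n)
    (Γ : ℂ → E → E)
    (hΓ : ∀ z : ℂ, ‖z‖ = 1 → ∀ x : E, ∀ n : ℕ, ι (Γ z x) n = z ^ n * ι x n)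
    (hΓiso : ∀ z : ℂ, ‖z‖ = 1 → ∀ x : E, ‖Γ z x‖ = ‖x‖)
    (Sop : E →L[ℂ] E)
    (hSop : ∀ x : E, ι (Sop x) 0 = 0 ∧ ∀ n : ℕ, ι (Sop x) (n + 1) = ι x n)
    (A : E →L[ℂ] E)
    (hA : ∀ k n : ℕ, ι (A (e (k + 1))) (n + 1) = ι (A (e k)) n)

include hι he hdense hcoord hΓ hΓiso hA in
lemma diag_neg_op (m : ℕ) :
    ∃ D : E →L[ℂ] E, ∀ x : E, ∀ n : ℕ,
      ι (D x) n = ι (A (e (m+1))) 0 * ι x (n + (m+1)) := by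
  obtain ⟨D, _, hent⟩ := diag_extract ι hι e he hdense hcoord Γ hΓ hΓiso A hA (-(m+1) : ℤ)
  refine ⟨D, ?_⟩
  have key : ∀ n : ℕ, (coordCLM ι hcoord n).comp D
      = ι (A (e (m+1))) 0 • coordCLM ι hcoord (n + (m+1)) := by
    intro n
    apply ext_CLM e hdense
    intro k
    simp only [ContinuousLinearMap.comp_apply, ContinuousLinearMap.smul_apply,
      coordCLM_apply, smul_eq_mul]
    rw [hent k n, ι_e ι e he]
    by_cases h : (n:ℤ) - k = -((m:ℤ)+1)
    · have hk : k = n + (m+1) := by omega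
      rw [if_pos (by push_cast; omega), if_pos hk.symm, hk, mul_one]
      have := ent_shift ι e A hA n (m+1) 0
      rw [show (m+1) + n = n + (m+1) by ring, show (0:ℕ) + n = n by ring] at this
      exact this
    · have hk : ¬ (n + (m+1) = k) := by omega
      rw [if_neg (by push_cast; omega), if_neg hk, mul_zero]
  intro x n
  have := congrArg (fun L : E →L[ℂ] ℂ => L x) (key n)
  simpa using this

include hι he hdense hcoord hΓ hΓiso hSop hA in
lemma Aneg_zero (hMnb : ¬ ∀ x : E, ∃ y : E, ∀ n : ℕ, ι y n = ι x (n + 1)) :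
    ∀ m : ℕ, ι (A (e (m+1))) 0 = 0 := by
  intro m
  by_contra hc
  apply hMnb
  intro x
  obtain ⟨D, hent⟩ := diag_neg_op ι hι e he hdense hcoord Γ hΓ hΓiso A hA m
  set a := ι (A (e (m+1))) 0 with ha
  refine ⟨a⁻¹ • (Sop ^ m) (D x) + ∑ k ∈ Finset.range m, ι x (k+1) • e k, ?_⟩
  intro n
  rw [map_add]
  have h1 : ι (a⁻¹ • (Sop ^ m) (D x)) n = a⁻¹ * ι ((Sop ^ m) (D x)) n := by
    rw [map_smul]; simp
  have h2 : ι ((Sop ^ m) (D x)) n = if n < m then 0 else ι (D x) (n - m) :=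
    Sop_pow_coord ι Sop hSop m (D x) n
  have h3 : ι (∑ k ∈ Finset.range m, ι x (k+1) • e k) n
      = if n < m then ι x (n+1) else 0 := by
    rw [map_sum, Finset.sum_apply]
    have hterm : ∀ k, (ι (ι x (k+1) • e k)) n = ι x (k+1) * (if n = k then 1 else 0) := by
      intro k
      rw [map_smul, Pi.smul_apply, smul_eq_mul, ι_e ι e he]
    simp only [hterm]
    by_cases h : n < m
    · rw [Finset.sum_eq_single_of_mem n (Finset.mem_range.mpr h)]
      · simp [h]
      · intro b _ hb
        simp [Ne.symm hb]
    · rw [if_neg h]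
      apply Finset.sum_eq_zero
      intro k hk
      have hnk : ¬ (n = k) := by
        have := Finset.mem_range.mp hk; omega
      simp [hnk]
  rw [Pi.add_apply, h1, h2, h3]
  by_cases h : n < m
  · simp [h]
  · rw [if_neg h, if_neg h, hent x (n - m), show n - m + (m+1) = n + 1 by omega, add_zero]
    rw [← mul_assoc, inv_mul_cancel₀ hc, one_mul]

end Neg
section Fejer

variable {E : Type*} [NormedAddCommGroup E] [NormedSpace ℂ E] [CompleteSpace E]
    (ι : E →ₗ[ℂ] (ℕ → ℂ)) (hι : Function.Injective ι)
    (e : ℕ → E) (he : ∀ k : ℕ, ι (e k) = Pi.single k 1)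
    (hdense : Dense (Submodule.span ℂ (Set.range e) : Set E))
    (hcoord : ∀ n : ℕ, Continuous fun x : E => ι x n)
    (Γ : ℂ → E → E)
    (hΓ : ∀ z : ℂ, ‖z‖ = 1 → ∀ x : E, ∀ n : ℕ, ι (Γ z x) n = z ^ n * ι x n)
    (hΓiso : ∀ z : ℂ, ‖z‖ = 1 → ∀ x : E, ‖Γ z x‖ = ‖x‖)
    (Sop : E →L[ℂ] E)
    (hSop : ∀ x : E, ι (Sop x) 0 = 0 ∧ ∀ n : ℕ, ι (Sop x) (n + 1) = ι x n)
    (A : E →L[ℂ] E)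
    (hA : ∀ k n : ℕ, ι (A (e (k + 1))) (n + 1) = ι (A (e k)) n)

include hA in
lemma ent_zero_of_lt (hA0 : ∀ k : ℕ, ι (A (e (k+1))) 0 = 0) (k n : ℕ) (hnk : n < k) :
    ι (A (e k)) n = 0 := by
  have h1 : k = (k - n - 1 + 1) + n := by omega
  have := ent_shift ι e A hA n (k - n - 1 + 1) 0
  rw [← h1, Nat.zero_add] at this
  rw [this, hA0]

include hι he hdense hcoord hΓ hΓiso hSop hA in
lemma fejer_bound (hA0 : ∀ k : ℕ, ι (A (e (k+1))) 0 = 0) (N : ℕ) :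
    ‖∑ m ∈ Finset.range N, ((((N - m : ℕ) : ℂ) / (N:ℂ)) • (ι (A (e 0)) m • (Sop ^ m)))‖
      ≤ ‖A‖ := by
  rcases Nat.eq_zero_or_pos N with hN | hN
  · subst hN; simp
  have hNC : (N:ℂ) ≠ 0 := by exact_mod_cast Nat.pos_iff_ne_zero.mp hN
  have hNR : (N:ℝ) ≠ 0 := by exact_mod_cast Nat.pos_iff_ne_zero.mp hN
  have hpi : (0:ℝ) < 2*Real.pi := by positivity
  have hpiC : ((2*Real.pi:ℝ):ℂ) ≠ 0 := by
    simp only [ne_eq, Complex.ofReal_eq_zero]; exact ne_of_gt hpi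
  set SN : ℝ → ℂ := fun θ => ∑ j ∈ Finset.range N, Complex.exp (((j:ℤ):ℂ) * θ * I) with hSN
  have hSNcont : Continuous SN := by
    apply continuous_finset_sum
    intro j _
    exact exp_int_continuous (j:ℤ)
  set c : ℝ → ℂ := fun θ => (((N:ℝ)⁻¹ * Complex.normSq (SN θ) : ℝ) : ℂ) with hc
  have hccont : Continuous c :=
    Complex.continuous_ofReal.comp (continuous_const.mul
      (Complex.continuous_normSq.comp hSNcont))
  -- pointwise expansion
  have hpt : ∀ (d : ℤ) (θ : ℝ), c θ * Complex.exp ((d:ℂ) * θ * I)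
      = (N:ℂ)⁻¹ * ∑ j ∈ Finset.range N, ∑ l ∈ Finset.range N,
          Complex.exp (((j - l + d : ℤ):ℂ) * θ * I) := by
    intro d θ
    have h1 : c θ = (N:ℂ)⁻¹ * (SN θ * (starRingEnd ℂ) (SN θ)) := by
      rw [hc]
      simp only
      rw [Complex.mul_conj]
      push_cast
      ring
    have h2 : (starRingEnd ℂ) (SN θ) = ∑ l ∈ Finset.range N,
        Complex.exp ((((-l : ℤ)):ℂ) * θ * I) := by
      rw [hSN]
      simp only [map_sum]
      apply Finset.sum_congr rfl
      intro l _
      rw [← Complex.exp_conj]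
      congr 1
      simp [map_mul, Complex.conj_I, Complex.conj_ofReal]
    rw [h1, h2, hSN]
    simp only
    rw [Finset.sum_mul_sum]
    rw [mul_assoc, Finset.sum_mul]
    congr 1
    apply Finset.sum_congr rfl
    intro j _
    rw [Finset.sum_mul]
    apply Finset.sum_congr rfl
    intro l _
    rw [← Complex.exp_add, ← Complex.exp_add]
    congr 1
    push_cast
    ring
  -- the Fourier coefficients
  have hfour : ∀ d : ℤ, (∫ θ in (0:ℝ)..(2*Real.pi), c θ * Complex.exp ((d:ℂ) * θ * I))
      = (N:ℂ)⁻¹ * ∑ j ∈ Finset.range N, ∑ l ∈ Finset.range N,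
          (if (j:ℤ) - l + d = 0 then (2*Real.pi:ℂ) else 0) := by
    intro d
    simp only [hpt d]
    rw [intervalIntegral.integral_const_mul]
    congr 1
    rw [intervalIntegral.integral_finset_sum]
    · apply Finset.sum_congr rfl
      intro j _
      rw [intervalIntegral.integral_finset_sum]
      · apply Finset.sum_congr rfl
        intro l _
        exact intExp _
      · intro l _
        exact (exp_int_continuous _).intervalIntegrable _ _
    · intro j _
      apply Continuous.intervalIntegrable
      apply continuous_finset_sum
      intro l _
      exact exp_int_continuous _
  -- counting for nonnegative diagonals
  have hsum_m : ∀ m : ℕ, (∫ θ in (0:ℝ)..(2*Real.pi), c θ * Complex.exp (((m:ℤ):ℂ) * θ * I))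
      = (N:ℂ)⁻¹ * (((N - m : ℕ):ℂ) * (2*Real.pi:ℂ)) := by
    intro m
    rw [hfour (m:ℤ)]
    congr 1
    have hinner : ∀ j ∈ Finset.range N,
        (∑ l ∈ Finset.range N, if (j:ℤ) - l + m = 0 then (2*Real.pi:ℂ) else 0)
          = if j + m < N then (2*Real.pi:ℂ) else 0 := by
      intro j _
      have hcong : ∀ l ∈ Finset.range N,
          (if (j:ℤ) - l + m = 0 then (2*Real.pi:ℂ) else 0)
            = if l = j + m then (2*Real.pi:ℂ) else 0 := by
        intro l _
        congr 1
        simp only [eq_iff_iff]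
        omega
      rw [Finset.sum_congr rfl hcong, Finset.sum_ite_eq' (Finset.range N) (j+m)
        (fun _ => (2*Real.pi:ℂ))]
      simp [Finset.mem_range]
    rw [Finset.sum_congr rfl hinner]
    have hfilt : Finset.filter (fun j => j + m < N) (Finset.range N) = Finset.range (N - m) := by
      ext j
      simp only [Finset.mem_filter, Finset.mem_range]
      omega
    rw [← Finset.sum_filter, hfilt, Finset.sum_const, Finset.card_range, nsmul_eq_mul]
  -- apply core
  obtain ⟨D, hb, hent⟩ := core ι hι e he hdense hcoord Γ hΓ hΓiso A c hccont
  -- the norm of c integrates to 2π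
  have hpiC' : (Real.pi:ℂ) ≠ 0 := by exact_mod_cast Real.pi_ne_zero
  have hcnorm : (∫ θ in (0:ℝ)..(2*Real.pi), ‖c θ‖) = 2*Real.pi := by
    have h1 : ∀ θ : ℝ, ‖c θ‖ = (N:ℝ)⁻¹ * Complex.normSq (SN θ) := by
      intro θ
      rw [hc]
      simp only [Complex.norm_real, Real.norm_eq_abs]
      exact _root_.abs_of_nonneg (mul_nonneg (by positivity) (Complex.normSq_nonneg _))
    have hgint : IntervalIntegrable (fun θ => (N:ℝ)⁻¹ * Complex.normSq (SN θ))
        MeasureTheory.volume 0 (2*Real.pi) :=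
      (continuous_const.mul (Complex.continuous_normSq.comp hSNcont)).intervalIntegrable _ _
    set r : ℝ := ∫ θ in (0:ℝ)..(2*Real.pi), ((N:ℝ)⁻¹ * Complex.normSq (SN θ)) with hr
    have hcoe : (∫ θ in (0:ℝ)..(2*Real.pi), c θ) = ((r:ℝ):ℂ) := by
      have h := Complex.ofRealCLM.intervalIntegral_comp_comm hgint
      rw [← hr] at h
      simpa [hc, Complex.ofRealCLM_apply] using h
    have hc0 : (∫ θ in (0:ℝ)..(2*Real.pi), c θ) = ((2*Real.pi:ℝ):ℂ) := by
      have h3 : ∀ θ ∈ Set.uIcc (0:ℝ) (2*Real.pi),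
          c θ = c θ * Complex.exp (((((0:ℕ)):ℤ):ℂ) * θ * I) := by
        intro θ _; simp
      rw [intervalIntegral.integral_congr h3, hsum_m 0, Nat.sub_zero]
      push_cast
      field_simp
    have hval : r = 2*Real.pi := by
      have h4 : ((r:ℝ):ℂ) = ((2*Real.pi:ℝ):ℂ) := hcoe.symm.trans hc0
      exact_mod_cast h4
    simp only [h1]
    exact hval
  -- identify D with the Fejér polynomial in Sop
  have hDeq : D = ∑ m ∈ Finset.range N,
      ((((N - m : ℕ) : ℂ) / (N:ℂ)) • (ι (A (e 0)) m • (Sop ^ m))) := by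
    apply ext_CLM e hdense
    intro k
    apply hι
    funext n
    rw [hent k n]
    have hrhs : ι ((∑ m ∈ Finset.range N,
        ((((N - m : ℕ) : ℂ) / (N:ℂ)) • (ι (A (e 0)) m • (Sop ^ m)))) (e k)) n
        = ∑ m ∈ Finset.range N, (((N - m : ℕ) : ℂ) / (N:ℂ)) * ι (A (e 0)) m
            * (if n = k + m then 1 else 0) := by
      rw [ContinuousLinearMap.sum_apply, map_sum, Finset.sum_apply]
      apply Finset.sum_congr rfl
      intro m _
      simp only [ContinuousLinearMap.smul_apply, map_smul, Pi.smul_apply, smul_eq_mul]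
      rw [Sop_pow_e ι hι e he Sop hSop m k, ι_e ι e he]
      ring
    rw [hrhs]
    by_cases hkn : k ≤ n
    · -- nonnegative diagonal m0 = n - k
      set m0 := n - k with hm0
      have hd : ((n:ℤ) - (k:ℤ) : ℤ) = (m0 : ℤ) := by omega
      rw [hd, hsum_m m0]
      have hA0k : ι (A (e k)) n = ι (A (e 0)) m0 := by
        have := ent0 ι e A hA k m0
        rw [show m0 + k = n by omega] at this
        exact this
      rw [hA0k]
      by_cases hm0N : m0 < N
      · rw [Finset.sum_eq_single_of_mem m0 (Finset.mem_range.mpr hm0N)]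
        · rw [if_pos (by omega), mul_one]
          push_cast
          field_simp
        · intro b _ hb
          rw [if_neg (by omega), mul_zero]
      · have hz : ((N - m0 : ℕ):ℂ) = 0 := by
          rw [show N - m0 = 0 by omega]; simp
        rw [hz]
        rw [Finset.sum_eq_zero]
        · simp
        · intro b hb
          rw [if_neg (by have := Finset.mem_range.mp hb; omega), mul_zero]
    · -- negative diagonal: entry of A vanishes
      rw [ent_zero_of_lt ι e A hA hA0 k n (by omega)]
      rw [Finset.sum_eq_zero]
      · simp
      · intro b _
        rw [if_neg (by omega), mul_zero]
    
  rw [← hDeq]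
  apply ContinuousLinearMap.opNorm_le_bound _ (norm_nonneg A)
  intro x
  refine le_trans (hb x) ?_
  apply mul_le_mul_of_nonneg_right _ (norm_nonneg x)
  rw [hcnorm, inv_mul_cancel₀ (ne_of_gt hpi), one_mul]

end Fejer
section Spec

variable {E : Type*} [NormedAddCommGroup E] [NormedSpace ℂ E] [CompleteSpace E]
    (ι : E →ₗ[ℂ] (ℕ → ℂ)) (hι : Function.Injective ι)
    (e : ℕ → E) (he : ∀ k : ℕ, ι (e k) = Pi.single k 1)
    (hdense : Dense (Submodule.span ℂ (Set.range e) : Set E))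
    (hcoord : ∀ n : ℕ, Continuous fun x : E => ι x n)
    (Γ : ℂ → E → E)
    (hΓ : ∀ z : ℂ, ‖z‖ = 1 → ∀ x : E, ∀ n : ℕ, ι (Γ z x) n = z ^ n * ι x n)
    (hΓiso : ∀ z : ℂ, ‖z‖ = 1 → ∀ x : E, ‖Γ z x‖ = ‖x‖)
    (Sop : E →L[ℂ] E)
    (hSop : ∀ x : E, ι (Sop x) 0 = 0 ∧ ∀ n : ℕ, ι (Sop x) (n + 1) = ι x n)

include he in
lemma e0_ne : e 0 ≠ (0 : E) := by
  intro h
  have h1 : ι (e 0) 0 = 1 := by rw [he 0]; simp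
  rw [h] at h1
  simp at h1

include hι he hdense hcoord hΓ hΓiso hSop in
lemma spec_mem (z : ℂ) (hz : (‖z‖₊ : ℝ≥0∞) < spectralRadius ℂ Sop) :
    z ∈ spectrum ℂ Sop := by
  haveI : Nontrivial E := ⟨e 0, 0, e0_ne ι e he⟩
  by_contra hmem
  rw [spectrum.notMem_iff] at hmem
  obtain ⟨u, hu⟩ := hmem
  set R : E →L[ℂ] E := ↑u⁻¹ with hR
  have hRu : (algebraMap ℂ (E →L[ℂ] E) z - Sop) * R = 1 := by
    rw [← hu]; exact u.mul_inv
  have huR : R * (algebraMap ℂ (E →L[ℂ] E) z - Sop) = 1 := by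
    rw [← hu]; exact u.inv_mul
  have hresolv : ∀ x : E, z • (R x) - Sop (R x) = x := by
    intro x
    have h1 : ((algebraMap ℂ (E →L[ℂ] E) z - Sop) * R) x = x := by rw [hRu]; rfl
    rw [ContinuousLinearMap.mul_apply, ContinuousLinearMap.sub_apply,
      Algebra.algebraMap_eq_smul_one, ContinuousLinearMap.smul_apply,
      ContinuousLinearMap.one_apply] at h1
    exact h1
  -- z ≠ 0
  by_cases hz0 : z = 0
  · have h1 := hresolv (e 0)
    have h2 := congrArg (fun v => ι v 0) h1
    rw [map_sub, Pi.sub_apply] at h2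
    rw [hz0, zero_smul, map_zero] at h2
    have h3 := (hSop (R (e 0))).1
    rw [Pi.zero_apply, h3] at h2
    have h4 : ι (e 0) 0 = 1 := by rw [he 0]; simp
    rw [h4] at h2
    norm_num at h2
  -- R is a Toeplitz operator
  have hcommu : Commute (↑u : E →L[ℂ] E) Sop := by
    rw [hu]
    unfold Commute SemiconjBy
    rw [sub_mul, mul_sub, Algebra.commutes]
  have hcommR : Commute R Sop := (Commute.units_inv_left hcommu)
  have hSope : ∀ k : ℕ, Sop (e k) = e (k + 1) := by
    intro k
    have := Sop_pow_e ι hι e he Sop hSop 1 k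
    rwa [pow_one] at this
  have hRe : ∀ k : ℕ, R (e (k + 1)) = Sop (R (e k)) := by
    intro k
    rw [← hSope k]
    have := congrArg (fun L : E →L[ℂ] E => L (e k)) hcommR.eq
    simpa [ContinuousLinearMap.mul_apply] using this
  have hAR : ∀ k n : ℕ, ι (R (e (k + 1))) (n + 1) = ι (R (e k)) n := by
    intro k n
    rw [hRe k, (hSop (R (e k))).2 n]
  -- coefficients of R
  have hxcoef : ∀ m : ℕ, ι (R (e 0)) m = (z ^ (m + 1))⁻¹ := by
    intro m
    induction m with
    | zero =>
      have h2 := congrArg (fun v => ι v 0) (hresolv (e 0))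
      rw [map_sub, Pi.sub_apply, map_smul, Pi.smul_apply, smul_eq_mul,
        (hSop (R (e 0))).1] at h2
      have h4 : ι (e 0) 0 = 1 := by rw [he 0]; simp
      rw [h4, sub_zero] at h2
      rw [pow_one]
      field_simp
      linear_combination h2
    | succ m ih =>
      have h2 := congrArg (fun v => ι v (m + 1)) (hresolv (e 0))
      rw [map_sub, Pi.sub_apply, map_smul, Pi.smul_apply, smul_eq_mul,
        (hSop (R (e 0))).2 m, ih] at h2
      have h4 : ι (e 0) (m + 1) = 0 := by rw [he 0]; simp [Pi.single_apply]
      rw [h4] at h2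
      have hw : z * ι (R (e 0)) (m+1) = (z ^ (m + 1))⁻¹ := by linear_combination h2
      have hww : ι (R (e 0)) (m+1) = z⁻¹ * (z ^ (m+1))⁻¹ := by
        calc ι (R (e 0)) (m+1) = z⁻¹ * (z * ι (R (e 0)) (m+1)) := by
              field_simp
        _ = z⁻¹ * (z ^ (m + 1))⁻¹ := by rw [hw]
      rw [hww, pow_succ, mul_inv]
      ring
  -- norm bounds
  have hbound : ∀ m : ℕ, ‖Sop ^ m‖ ≤ ‖R‖ * ‖z‖ ^ (m + 1) := by
    intro m
    have h1 := diag_nonneg ι hι e he hdense hcoord Γ hΓ hΓiso Sop hSop R hAR m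
    rw [hxcoef m] at h1
    rw [norm_inv, norm_pow] at h1
    have hznorm : (0:ℝ) < ‖z‖ := norm_pos_iff.mpr hz0
    have hzp : (0:ℝ) < ‖z‖ ^ (m + 1) := by positivity
    calc ‖Sop ^ m‖ = ((‖z‖ ^ (m+1))⁻¹ * ‖Sop ^ m‖) * ‖z‖ ^ (m+1) := by
          rw [mul_comm ((‖z‖ ^ (m+1))⁻¹) (‖Sop ^ m‖), mul_assoc,
            inv_mul_cancel₀ (ne_of_gt hzp), mul_one]
    _ ≤ ‖R‖ * ‖z‖ ^ (m + 1) := by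
        apply mul_le_mul_of_nonneg_right h1 (le_of_lt hzp)
  -- pick t between ‖z‖ and the spectral radius
  obtain ⟨t, hzt, htρ⟩ := ENNReal.lt_iff_exists_nnreal_btwn.mp hz
  have htpow : ∀ m : ℕ, (t:ℝ) ^ (m + 1) ≤ ‖Sop ^ (m + 1)‖ := by
    intro m
    have h1 := spectrum.spectralRadius_le_pow_nnnorm_pow_one_div ℂ Sop m
    have h2 : (‖(1 : E →L[ℂ] E)‖₊ : ℝ≥0∞) = 1 := by
      rw [nnnorm_one]; rfl
    rw [h2, ENNReal.one_rpow, mul_one] at h1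
    have h3 : (t : ℝ≥0∞) < (‖Sop ^ (m + 1)‖₊ : ℝ≥0∞) ^ (1 / (m + 1) : ℝ) :=
      lt_of_lt_of_le htρ h1
    have h4 : ((t : ℝ≥0∞)) ^ ((m + 1 : ℕ) : ℝ)
        ≤ ((‖Sop ^ (m + 1)‖₊ : ℝ≥0∞) ^ (1 / (m + 1) : ℝ)) ^ ((m + 1 : ℕ) : ℝ) :=
      ENNReal.rpow_le_rpow (le_of_lt h3) (by positivity)
    rw [← ENNReal.rpow_mul] at h4
    have hexp : (1 / ((m:ℝ) + 1)) * (((m + 1 : ℕ)):ℝ) = 1 := by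
      push_cast
      field_simp
    rw [hexp, ENNReal.rpow_one, ENNReal.rpow_natCast, ← ENNReal.coe_pow] at h4
    have h5 : (t : ℝ≥0) ^ (m + 1) ≤ ‖Sop ^ (m + 1)‖₊ := by
      exact_mod_cast h4
    calc (t:ℝ) ^ (m+1) = ((t ^ (m+1) : ℝ≥0) : ℝ) := by push_cast; ring
    _ ≤ (‖Sop ^ (m+1)‖₊ : ℝ) := by exact_mod_cast h5
    _ = ‖Sop ^ (m+1)‖ := rfl
  -- contradiction via growth
  have hznorm : (0:ℝ) < ‖z‖ := norm_pos_iff.mpr hz0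
  have hq : (1:ℝ) < (t:ℝ) / ‖z‖ := by
    rw [lt_div_iff₀ hznorm, one_mul]
    exact_mod_cast hzt
  have hgrow := tendsto_pow_atTop_atTop_of_one_lt hq
  have hev := (hgrow.eventually_gt_atTop (‖R‖ * ‖z‖)).and (Filter.eventually_ge_atTop 1)
  obtain ⟨n, hn1, hn2⟩ := hev.exists
  set m := n - 1 with hm
  have hmn : n = m + 1 := by omega
  have hcon : ((t:ℝ) / ‖z‖) ^ (m + 1) ≤ ‖R‖ * ‖z‖ := by
    have h1 : (t:ℝ) ^ (m + 1) ≤ ‖R‖ * ‖z‖ ^ (m + 2) := by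
      calc (t:ℝ) ^ (m+1) ≤ ‖Sop ^ (m+1)‖ := htpow m
      _ ≤ ‖R‖ * ‖z‖ ^ (m + 2) := hbound (m+1)
    rw [div_pow, div_le_iff₀ (by positivity)]
    calc (t:ℝ) ^ (m+1) ≤ ‖R‖ * ‖z‖ ^ (m + 2) := h1
    _ = ‖R‖ * ‖z‖ * ‖z‖ ^ (m+1) := by ring
  rw [hmn] at hn1
  exact absurd hcon (not_le.mpr hn1)

end Spec
section PowLemma

lemma pow_le_norm_pow {E : Type*} [NormedAddCommGroup E] [NormedSpace ℂ E]
    [CompleteSpace E] [Nontrivial E] (B : E →L[ℂ] E) {t : NNReal}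
    (ht : (t : ℝ≥0∞) < spectralRadius ℂ B) (m : ℕ) : (t:ℝ) ^ m ≤ ‖B ^ m‖ := by
  cases m with
  | zero =>
    have h1 : ‖(B:E →L[ℂ] E) ^ 0‖ = 1 := by
      rw [pow_zero]
      exact norm_one
    rw [pow_zero, h1]
  | succ m =>
    have h1 := spectrum.spectralRadius_le_pow_nnnorm_pow_one_div ℂ B m
    have h2 : (‖(1 : E →L[ℂ] E)‖₊ : ℝ≥0∞) = 1 := by
      rw [nnnorm_one]; rfl
    rw [h2, ENNReal.one_rpow, mul_one] at h1
    have h3 : (t : ℝ≥0∞) < (‖B ^ (m + 1)‖₊ : ℝ≥0∞) ^ (1 / (m + 1) : ℝ) :=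
      lt_of_lt_of_le ht h1
    have h4 : ((t : ℝ≥0∞)) ^ ((m + 1 : ℕ) : ℝ)
        ≤ ((‖B ^ (m + 1)‖₊ : ℝ≥0∞) ^ (1 / (m + 1) : ℝ)) ^ ((m + 1 : ℕ) : ℝ) :=
      ENNReal.rpow_le_rpow (le_of_lt h3) (by positivity)
    rw [← ENNReal.rpow_mul] at h4
    have hexp : (1 / ((m:ℝ) + 1)) * (((m + 1 : ℕ)):ℝ) = 1 := by
      push_cast; field_simp
    rw [hexp, ENNReal.rpow_one, ENNReal.rpow_natCast, ← ENNReal.coe_pow] at h4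
    have h5 : (t : NNReal) ^ (m + 1) ≤ ‖B ^ (m + 1)‖₊ := by exact_mod_cast h4
    calc (t:ℝ) ^ (m+1) = ((t ^ (m+1) : NNReal) : ℝ) := by push_cast; ring
    _ ≤ (‖B ^ (m+1)‖₊ : ℝ) := by exact_mod_cast h5
    _ = ‖B ^ (m+1)‖ := rfl

end PowLemma





/-- If `𝐒` is bounded but `𝐒₋₁` is not bounded, then for every Toeplitz operator `T`
the series `T̃(z) = Σ_{n∈ℤ} T̂(n) zⁿ` converges on the open disk `{ |z| < ρ(𝐒) }`, and
`T̃` is holomorphic there with `|T̃(z)| ≤ ‖T‖`. -/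
theorem stmt7
    {E : Type*} [NormedAddCommGroup E] [NormedSpace ℂ E] [CompleteSpace E]
    (ι : E →ₗ[ℂ] (ℕ → ℂ)) (hι : Function.Injective ι)
    (e : ℕ → E) (he : ∀ k : ℕ, ι (e k) = Pi.single k 1)
    (hdense : Dense (Submodule.span ℂ (Set.range e) : Set E))
    (hcoord : ∀ n : ℕ, Continuous fun x : E => ι x n)
    -- (ℋ3), strengthened so that each `γ_z` is an isometry of `𝐄`:
    (Γ : ℂ → E → E)
    (hΓ : ∀ z : ℂ, ‖z‖ = 1 → ∀ x : E, ∀ n : ℕ, ι (Γ z x) n = z ^ n * ι x n)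
    (hΓiso : ∀ z : ℂ, ‖z‖ = 1 → ∀ x : E, ‖Γ z x‖ = ‖x‖)
    -- `𝐒` is bounded, with restriction `Sop` to `𝐄`:
    (Sop : E →L[ℂ] E)
    (hSop : ∀ x : E, ι (Sop x) 0 = 0 ∧ ∀ n : ℕ, ι (Sop x) (n + 1) = ι x n)
    -- `𝐒₋₁` is not bounded:
    (hMnb : ¬ ∀ x : E, ∃ y : E, ∀ n : ℕ, ι y n = ι x (n + 1))
    -- `T` is a Toeplitz operator on `𝐄`:
    (T : E →L[ℂ] E)
    (hT : ∀ k n : ℕ, ι (T (e (k + 1))) (n + 1) = ι (T (e k)) n)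
    -- `Th` is the symbol sequence `T̂`:
    (Th : ℤ → ℂ)
    (hTh₁ : ∀ n : ℕ, Th n = ι (T (e 0)) n)
    (hTh₂ : ∀ n : ℕ, Th (-(n : ℤ)) = ι (T (e n)) 0) :
    ∃ f : ℂ → ℂ,
      (∀ z ∈ {z : ℂ | (‖z‖₊ : ℝ≥0∞) < spectralRadius ℂ Sop},
        HasSum (fun n : ℤ => Th n * z ^ n) (f z)) ∧
      DifferentiableOn ℂ f {z : ℂ | (‖z‖₊ : ℝ≥0∞) < spectralRadius ℂ Sop} ∧
      ∀ z ∈ {z : ℂ | (‖z‖₊ : ℝ≥0∞) < spectralRadius ℂ Sop}, ‖f z‖ ≤ ‖T‖ := by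
  classical
  haveI : Nontrivial E := ⟨e 0, 0, e0_ne ι e he⟩
  by_cases hρ : spectralRadius ℂ Sop = 0
  · refine ⟨0, ?_, ?_, ?_⟩
    · intro z hz
      exfalso
      rw [Set.mem_setOf_eq, hρ] at hz
      simp at hz
    · exact differentiableOn_const 0
    · intro z hz
      exfalso
      rw [Set.mem_setOf_eq, hρ] at hz
      simp at hz
  have hρpos : 0 < spectralRadius ℂ Sop := pos_iff_ne_zero.mpr hρ
  -- negative coefficients vanish
  have hTnegZ : ∀ n : ℤ, n < 0 → Th n = 0 := by
    intro n hn
    obtain ⟨m, rfl⟩ : ∃ m : ℕ, n = -(((m+1):ℕ):ℤ) := ⟨(-n - 1).toNat, by omega⟩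
    have h1 : (-((((m+1):ℕ)):ℤ)) = -(((m+1):ℕ):ℤ) := rfl
    rw [show -(((m+1):ℕ):ℤ) = -(((m+1:ℕ)):ℤ) from rfl]
    rw [hTh₂ (m+1)]
    exact Aneg_zero ι hι e he hdense hcoord Γ hΓ hΓiso Sop hSop T hT hMnb m
  -- coefficient bounds
  have hcb : ∀ m : ℕ, ‖Th (m:ℤ)‖ * ‖Sop ^ m‖ ≤ ‖T‖ := by
    intro m
    rw [hTh₁ m]
    exact diag_nonneg ι hι e he hdense hcoord Γ hΓ hΓiso Sop hSop T hT m
  -- summability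
  have hsummable : ∀ s : NNReal, (s:ℝ≥0∞) < spectralRadius ℂ Sop →
      Summable (fun m : ℕ => ‖Th (m:ℤ)‖ * (s:ℝ)^m) := by
    intro s hs
    obtain ⟨t, hst, htρ⟩ := ENNReal.lt_iff_exists_nnreal_btwn.mp hs
    have hst' : (s:ℝ) < (t:ℝ) := by exact_mod_cast hst
    have ht0 : (0:ℝ) < t := lt_of_le_of_lt s.coe_nonneg hst'
    have hr : (s:ℝ)/t < 1 := (div_lt_one ht0).mpr hst'
    have hr0 : (0:ℝ) ≤ (s:ℝ)/t := by positivity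
    apply Summable.of_nonneg_of_le (fun m => by positivity) (fun m => ?_)
      ((summable_geometric_of_lt_one hr0 hr).mul_left ‖T‖)
    have h1 : ‖Th (m:ℤ)‖ * (t:ℝ)^m ≤ ‖T‖ :=
      le_trans (mul_le_mul_of_nonneg_left (pow_le_norm_pow Sop htρ m) (norm_nonneg _)) (hcb m)
    have h2 : (s:ℝ)^m = (t:ℝ)^m * ((s:ℝ)/t)^m := by
      rw [div_pow]
      field_simp
    calc ‖Th (m:ℤ)‖ * (s:ℝ)^m = (‖Th (m:ℤ)‖ * (t:ℝ)^m) * ((s:ℝ)/t)^m := by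
          rw [h2]; ring
    _ ≤ ‖T‖ * ((s:ℝ)/t)^m := mul_le_mul_of_nonneg_right h1 (by positivity)
  -- the power series
  set p : FormalMultilinearSeries ℂ ℂ ℂ :=
    fun n => ContinuousMultilinearMap.mkPiRing ℂ (Fin n) (Th n) with hp
  have hpnorm : ∀ n : ℕ, ‖p n‖ = ‖Th (n:ℤ)‖ :=
    fun n => ContinuousMultilinearMap.norm_mkPiRing (Th n)
  have hrad : spectralRadius ℂ Sop ≤ p.radius := by
    apply ENNReal.le_of_forall_nnreal_lt
    intro t ht
    apply p.le_radius_of_summable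
    have h1 := hsummable t ht
    apply h1.congr
    intro n
    rw [hpnorm n]
  have hpapp : ∀ (z : ℂ) (n : ℕ), (p n fun _ => z) = Th n * z ^ n := by
    intro z n
    rw [hp]
    simp only [ContinuousMultilinearMap.mkPiRing_apply, Finset.prod_const,
      Finset.card_univ, Fintype.card_fin, smul_eq_mul]
    ring
  have hball : ∀ z : ℂ, (‖z‖₊:ℝ≥0∞) < spectralRadius ℂ Sop →
      z ∈ Metric.eball (0:ℂ) p.radius := by
    intro z hz
    rw [Metric.mem_eball, edist_eq_enorm_sub, sub_zero]
    exact lt_of_lt_of_le hz hrad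
  have hhasN : ∀ z : ℂ, (‖z‖₊:ℝ≥0∞) < spectralRadius ℂ Sop →
      HasSum (fun n : ℕ => Th n * z ^ n) (p.sum z) := by
    intro z hz
    have h1 := p.hasSum (hball z hz)
    have h2 : (fun n : ℕ => p n fun _ => z) = fun n : ℕ => Th n * z ^ n := by
      funext n; exact hpapp z n
    rwa [h2] at h1
  refine ⟨p.sum, ?_, ?_, ?_⟩
  · -- HasSum over ℤ
    intro z hz
    rw [Set.mem_setOf_eq] at hz
    have hN := hhasN z hz
    have hinj : Function.Injective (Int.ofNat) := fun a b hab => Int.ofNat.inj hab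
    have hvanish : ∀ x : ℤ, x ∉ Set.range (Int.ofNat) → Th x * z ^ x = 0 := by
      intro x hx
      have hxneg : x < 0 := by
        by_contra h
        push_neg at h
        refine hx ⟨x.toNat, ?_⟩
        show Int.ofNat x.toNat = x
        rw [Int.ofNat_eq_natCast]
        omega
      rw [hTnegZ x hxneg, zero_mul]
    rw [← Function.Injective.hasSum_iff hinj hvanish]
    have hcomp : ((fun n : ℤ => Th n * z ^ n) ∘ Int.ofNat) = fun n : ℕ => Th n * z ^ n := by
      funext n
      simp only [Function.comp_apply]
      rw [show (Int.ofNat n) = (n:ℤ) from rfl, zpow_natCast]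
    rw [hcomp]
    exact hN
  · -- differentiability
    have h0 : 0 < p.radius := lt_of_lt_of_le hρpos hrad
    exact ((p.hasFPowerSeriesOnBall h0).differentiableOn).mono
      (fun z hz => hball z hz)
  · -- bound
    intro z hz
    rw [Set.mem_setOf_eq] at hz
    have hzspec := spec_mem ι hι e he hdense hcoord Γ hΓ hΓiso Sop hSop z hz
    have hfej := fejer_bound ι hι e he hdense hcoord Γ hΓ hΓiso Sop hSop T hT
      (fun k => Aneg_zero ι hι e he hdense hcoord Γ hΓ hΓiso Sop hSop T hT hMnb k)
    have hval : ∀ N : ℕ,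
        ‖∑ m ∈ Finset.range N, (((N - m : ℕ):ℂ)/(N:ℂ)) * Th (m:ℤ) * z^m‖ ≤ ‖T‖ := by
      intro N
      set P : Polynomial ℂ := ∑ m ∈ Finset.range N,
        Polynomial.C ((((N - m:ℕ):ℂ)/(N:ℂ)) * Th (m:ℤ)) * Polynomial.X ^ m with hP
      have heval : Polynomial.eval z P
          = ∑ m ∈ Finset.range N, (((N-m:ℕ):ℂ)/(N:ℂ)) * Th (m:ℤ) * z^m := by
        rw [hP, Polynomial.eval_finset_sum]
        apply Finset.sum_congr rfl
        intro m _
        simp [mul_assoc]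
      have haeval : Polynomial.aeval Sop P = ∑ m ∈ Finset.range N,
          ((((N - m:ℕ):ℂ)/(N:ℂ)) • (Th (m:ℤ) • Sop ^ m)) := by
        rw [hP, map_sum]
        apply Finset.sum_congr rfl
        intro m _
        rw [map_mul, Polynomial.aeval_C, map_pow, Polynomial.aeval_X, smul_smul]
        rw [Algebra.algebraMap_eq_smul_one, smul_mul_assoc, one_mul]
      have hmem := spectrum.subset_polynomial_aeval Sop P ⟨z, hzspec, rfl⟩
      have hnorm : ‖Polynomial.eval z P‖ ≤ ‖(Polynomial.aeval Sop) P‖ :=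
        spectrum.norm_le_norm_of_mem hmem
      rw [heval, haeval] at hnorm
      have hfn := hfej N
      simp only [← hTh₁] at hfn
      exact le_trans hnorm hfn
    -- limit of Fejér means
    have hsum := hhasN z hz
    have hbound_sum : Summable (fun m : ℕ => ‖Th (m:ℤ) * z ^ m‖) := by
      have h1 := hsummable ‖z‖₊ hz
      apply h1.congr
      intro m
      rw [norm_mul, norm_pow, coe_nnnorm]
    have hptwise : ∀ m : ℕ, Filter.Tendsto
        (fun N : ℕ => (((N - m : ℕ):ℂ)/(N:ℂ)) * Th (m:ℤ) * z^m)
        Filter.atTop (nhds (Th (m:ℤ) * z^m)) := by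
      intro m
      have h1 : Filter.Tendsto (fun N : ℕ => (m:ℝ)/(N:ℝ)) Filter.atTop (nhds 0) :=
        tendsto_const_div_atTop_nhds_zero_nat (m:ℝ)
      have h2 : Filter.Tendsto (fun N : ℕ => (((m:ℝ)/(N:ℝ) : ℝ) : ℂ)) Filter.atTop
          (nhds 0) := by
        have h := (Complex.continuous_ofReal.tendsto 0).comp h1
        simpa [Function.comp_def] using h
      have h3 : Filter.Tendsto (fun N : ℕ => 1 - (((m:ℝ)/(N:ℝ) : ℝ) : ℂ)) Filter.atTop
          (nhds 1) := by
        have := (tendsto_const_nhds (x := (1:ℂ))).sub h2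
        simpa using this
      have h4 : Filter.Tendsto (fun N : ℕ => (((N - m : ℕ):ℂ)/(N:ℂ))) Filter.atTop
          (nhds 1) := by
        apply Filter.Tendsto.congr' _ h3
        filter_upwards [Filter.eventually_ge_atTop (m+1)] with N hN
        have hNm : m ≤ N := by omega
        have hN0 : (N:ℂ) ≠ 0 := by
          simp only [ne_eq, Nat.cast_eq_zero]
          omega
        rw [Nat.cast_sub hNm]
        push_cast
        field_simp
      have h5 := h4.mul_const (Th (m:ℤ) * z^m)
      simp only [one_mul] at h5
      apply h5.congr
      intro N
      ring
    have hdombound : ∀ (N : ℕ) (m : ℕ),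
        ‖(((N - m : ℕ):ℂ)/(N:ℂ)) * Th (m:ℤ) * z^m‖ ≤ ‖Th (m:ℤ) * z^m‖ := by
      intro N m
      rw [mul_assoc, norm_mul]
      have h1 : ‖(((N - m : ℕ):ℂ)/(N:ℂ))‖ ≤ 1 := by
        rw [norm_div]
        simp only [Complex.norm_natCast]
        apply div_le_one_of_le₀
        · exact_mod_cast Nat.sub_le N m
        · positivity
      calc ‖(((N - m : ℕ):ℂ)/(N:ℂ))‖ * ‖Th (m:ℤ) * z^m‖
          ≤ 1 * ‖Th (m:ℤ) * z^m‖ :=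
            mul_le_mul_of_nonneg_right h1 (norm_nonneg _)
      _ = ‖Th (m:ℤ) * z^m‖ := one_mul _
    have hdom := tendsto_tsum_of_dominated_convergence hbound_sum hptwise
      (Filter.Eventually.of_forall hdombound)
    have hts : ∀ N : ℕ, (∑' (m:ℕ), (((N - m : ℕ):ℂ)/(N:ℂ)) * Th (m:ℤ) * z^m)
        = ∑ m ∈ Finset.range N, (((N - m : ℕ):ℂ)/(N:ℂ)) * Th (m:ℤ) * z^m := by
      intro N
      apply tsum_eq_sum
      intro m hm
      rw [Finset.mem_range] at hm
      push_neg at hm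
      have : N - m = 0 := by omega
      rw [this]
      simp
    rw [hsum.tsum_eq] at hdom
    have htendsto : Filter.Tendsto
        (fun N : ℕ => ∑ m ∈ Finset.range N, (((N - m : ℕ):ℂ)/(N:ℂ)) * Th (m:ℤ) * z^m)
        Filter.atTop (nhds (p.sum z)) := by
      apply hdom.congr
      intro N
      exact hts N
    exact le_of_tendsto htendsto.norm (Filter.Eventually.of_forall hval)
end

section
/- For every x ∈ E, the Fejér (Cesàro) means of the partial sums converge to x in E: lim_{k→∞} ‖ Σ_{p=0}^{k} (1/(k+1)) (Σ_{n=−p}^{p} x(n) e_n) − x ‖ = 0; equivalently, lim_{k→∞} ‖ Σ_{n=−k}^{k} (1 − |n|/(k+1)) x(n) e_n − x ‖ = 0. -/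
open Filter Complex Finset

open Filter Complex Finset

namespace Stmt8Aux

/-- The basic root-of-unity sum. -/
lemma sum_pow_eq (N : ℕ) (hN : 0 < N) (t : ℤ) (ht : t.natAbs < N) :
    ∑ j ∈ range N, ((Complex.exp (((2 * Real.pi / N : ℝ) : ℂ) * Complex.I)) ^ t) ^ j
      = if t = 0 then (N : ℂ) else 0 := by
  set w : ℂ := ((2 * Real.pi / N : ℝ) : ℂ) * Complex.I with hw
  set ω : ℂ := Complex.exp w with hω
  have hNR : (N : ℂ) ≠ 0 := Nat.cast_ne_zero.mpr hN.ne'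
  have hωt : ω ^ t = Complex.exp ((t : ℂ) * w) := (Complex.exp_int_mul w t).symm
  by_cases h0 : t = 0
  · subst h0; simp
  · rw [if_neg h0]
    have h2 : ((2:ℂ) * (Real.pi:ℂ) * Complex.I) ≠ 0 := by
      refine mul_ne_zero (mul_ne_zero two_ne_zero ?_) Complex.I_ne_zero
      exact Complex.ofReal_ne_zero.mpr Real.pi_ne_zero
    have hne : ω ^ t ≠ 1 := by
      rw [hωt]
      intro hcon
      obtain ⟨m, hm⟩ := Complex.exp_eq_one_iff.mp hcon
      rw [hw] at hm
      have key : (t : ℂ) * (((2 * Real.pi / N : ℝ) : ℂ) * Complex.I) * N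
          = (t:ℂ) * (2 * (Real.pi:ℂ) * Complex.I) := by
        push_cast
        field_simp
      have hm2 : (t:ℂ) * (2 * (Real.pi:ℂ) * Complex.I)
          = ((m * N : ℤ) : ℂ) * (2 * (Real.pi:ℂ) * Complex.I) := by
        rw [← key, hm]; push_cast; ring
      have ht2 : (t : ℂ) = ((m * N : ℤ) : ℂ) := mul_right_cancel₀ h2 hm2
      have ht' : t = m * N := by exact_mod_cast ht2
      rcases eq_or_ne m 0 with rfl | hm0
      · simp at ht'; exact h0 ht'
      · have hNle : N ≤ t.natAbs := by
          rw [ht', Int.natAbs_mul, Int.natAbs_natCast]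
          have h1m : 1 ≤ m.natAbs := Int.natAbs_pos.mpr hm0
          calc N = 1 * N := (one_mul N).symm
          _ ≤ m.natAbs * N := Nat.mul_le_mul_right N h1m
        omega
    have hpow : (ω ^ t) ^ N = 1 := by
      have h1 : Complex.exp ((N:ℂ) * w) = 1 := by
        have heq : (N : ℂ) * w = ((1:ℤ):ℂ) * (2 * (Real.pi:ℂ) * Complex.I) := by
          rw [hw]; push_cast; field_simp
        rw [heq, Complex.exp_int_mul_two_pi_mul_I]
      calc (ω ^ t) ^ N = (ω ^ (N:ℤ)) ^ t := by
            rw [← zpow_natCast (ω ^ t), ← zpow_mul, mul_comm, zpow_mul]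
        _ = (Complex.exp ((N:ℂ) * w)) ^ t := by rw [zpow_natCast, hω, ← Complex.exp_nat_mul]
        _ = 1 := by rw [h1, one_zpow]
    rw [geom_sum_eq hne, hpow, sub_self, zero_div]

end Stmt8Aux

namespace Stmt8Aux

lemma count_lemma (k : ℕ) (n : ℤ) :
    ∑ a ∈ Finset.Icc (0:ℤ) k, ∑ b ∈ Finset.Icc (0:ℤ) k, (if a - b + n = 0 then (1:ℂ) else 0)
      = ((((k:ℤ) + 1 - n.natAbs).toNat : ℕ) : ℂ) := by
  have h1 : ∀ a : ℤ, ∑ b ∈ Finset.Icc (0:ℤ) k, (if a - b + n = 0 then (1:ℂ) else 0)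
      = if a + n ∈ Finset.Icc (0:ℤ) k then (1:ℂ) else 0 := by
    intro a
    rw [← Finset.sum_ite_eq (Finset.Icc (0:ℤ) k) (a+n) (fun _ => (1:ℂ))]
    apply Finset.sum_congr rfl
    intro b _
    simp only [show (a - b + n = 0) ↔ (a + n = b) from by omega]
  simp only [h1]
  simp only [show ∀ a : ℤ, (a + n ∈ Finset.Icc (0:ℤ) k) ↔ (a ∈ Finset.Icc (-n) ((k:ℤ) - n))
    from fun a => by simp only [Finset.mem_Icc]; omega]
  rw [Finset.sum_ite_mem]
  have hinter : Finset.Icc (0:ℤ) k ∩ Finset.Icc (-n) ((k:ℤ) - n)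
      = Finset.Icc (max 0 (-n)) (min (k:ℤ) ((k:ℤ) - n)) := by
    ext a; simp only [Finset.mem_inter, Finset.mem_Icc, le_max_iff, max_le_iff, le_min_iff,
      min_le_iff]
    omega
  rw [hinter, Finset.sum_const, Int.card_Icc]
  have : (min (k:ℤ) ((k:ℤ) - n) + 1 - max 0 (-n)).toNat = ((k:ℤ) + 1 - n.natAbs).toNat := by
    omega
  rw [this]
  simp

lemma key (k N : ℕ) (hN : 0 < N) (n : ℤ) (hn : n.natAbs + k < N) :
    ∑ j ∈ Finset.range N, ∑ a ∈ Finset.Icc (0:ℤ) k, ∑ b ∈ Finset.Icc (0:ℤ) k,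
        ((Complex.exp (((2 * Real.pi / N : ℝ):ℂ) * Complex.I)) ^ j) ^ (a - b + n)
      = (N : ℂ) * ((((k:ℤ) + 1 - n.natAbs).toNat : ℕ) : ℂ) := by
  set ω : ℂ := Complex.exp (((2 * Real.pi / N : ℝ):ℂ) * Complex.I) with hω
  rw [Finset.sum_comm]
  have swap2 : ∀ a ∈ Finset.Icc (0:ℤ) k,
      ∑ j ∈ Finset.range N, ∑ b ∈ Finset.Icc (0:ℤ) k, (ω ^ j) ^ (a - b + n)
      = ∑ b ∈ Finset.Icc (0:ℤ) k, ∑ j ∈ Finset.range N, (ω ^ j) ^ (a - b + n) :=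
    fun a _ => Finset.sum_comm
  rw [Finset.sum_congr rfl swap2]
  have hinner : ∀ a ∈ Finset.Icc (0:ℤ) k, ∀ b ∈ Finset.Icc (0:ℤ) k,
      ∑ j ∈ Finset.range N, (ω ^ j) ^ (a - b + n)
        = if a - b + n = 0 then (N:ℂ) else 0 := by
    intro a ha b hb
    have habs : (a - b + n).natAbs < N := by
      simp only [Finset.mem_Icc] at ha hb
      omega
    have hcomm : ∀ j : ℕ, (ω ^ j) ^ (a - b + n) = (ω ^ (a - b + n)) ^ j := by
      intro j
      rw [← zpow_natCast ω j, ← zpow_mul, mul_comm, zpow_mul, zpow_natCast]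
    simp only [hcomm]
    exact sum_pow_eq N hN (a - b + n) habs
  calc ∑ a ∈ Finset.Icc (0:ℤ) k, ∑ b ∈ Finset.Icc (0:ℤ) k,
        ∑ j ∈ Finset.range N, (ω ^ j) ^ (a - b + n)
      = ∑ a ∈ Finset.Icc (0:ℤ) k, ∑ b ∈ Finset.Icc (0:ℤ) k,
        (if a - b + n = 0 then (N:ℂ) else 0) := by
        apply Finset.sum_congr rfl; intro a ha
        apply Finset.sum_congr rfl; intro b hb
        exact hinner a ha b hb
    _ = ∑ a ∈ Finset.Icc (0:ℤ) k, ∑ b ∈ Finset.Icc (0:ℤ) k,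
        (N:ℂ) * (if a - b + n = 0 then (1:ℂ) else 0) := by
        simp only [mul_ite, mul_one, mul_zero]
    _ = (N : ℂ) * ((((k:ℤ) + 1 - n.natAbs).toNat : ℕ) : ℂ) := by
        simp only [← Finset.mul_sum]
        rw [count_lemma]

lemma kernel_nonneg (k : ℕ) (z : ℂ) (hz : ‖z‖ = 1) :
    ∃ r : ℝ, 0 ≤ r ∧ (∑ a ∈ Finset.Icc (0:ℤ) k, ∑ b ∈ Finset.Icc (0:ℤ) k, z ^ (a - b)) = (r : ℂ) := by
  have hz0 : z ≠ 0 := by intro h; rw [h] at hz; simp at hz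
  have hsplit : ∀ a b : ℤ, z ^ (a - b) = z ^ a * (starRingEnd ℂ) (z ^ b) := by
    intro a b
    rw [sub_eq_add_neg, zpow_add₀ hz0, zpow_neg]
    congr 1
    exact Complex.inv_eq_conj (by rw [norm_zpow, hz, one_zpow])
  refine ⟨Complex.normSq (∑ a ∈ Finset.Icc (0:ℤ) k, z ^ a), Complex.normSq_nonneg _, ?_⟩
  simp only [hsplit]
  rw [← Finset.sum_mul_sum, ← map_sum, Complex.mul_conj]

end Stmt8Aux

/-- For every `x ∈ E`, the Fejér (Cesàro) means of the partial sums converge to `x`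
in `E`:
`lim_{k→∞} ‖ Σ_{n=−k}^{k} (1 − |n|/(k+1)) x(n) e_n − x ‖ = 0`. -/
theorem stmt8
    {E : Type*} [NormedAddCommGroup E] [NormedSpace ℂ E] [CompleteSpace E]
    (ι : E →ₗ[ℂ] (ℤ → ℂ)) (hι : Function.Injective ι)
    (e : ℤ → E) (he : ∀ k : ℤ, ι (e k) = Pi.single k 1)
    (hdense : Dense (Submodule.span ℂ (Set.range e) : Set E))
    (hcoord : ∀ n : ℤ, Continuous fun x : E => ι x n)
    (Ψ : ℂ → E → E)
    (hΨ : ∀ z : ℂ, ‖z‖ = 1 → ∀ x : E, ∀ n : ℤ, ι (Ψ z x) n = ι x n * z ^ n)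
    (hΨbdd : ∃ C : ℝ, ∀ z : ℂ, ‖z‖ = 1 → ∀ x : E, ‖Ψ z x‖ ≤ C * ‖x‖) :
    ∀ x : E,
      Tendsto (fun k : ℕ =>
          ‖(∑ n ∈ Finset.Icc (-(k : ℤ)) (k : ℤ),
              (((((1 : ℝ) - ((|n| : ℤ) : ℝ) / ((k : ℝ) + 1)) : ℝ) : ℂ) * ι x n) • e n) - x‖)
        atTop (nhds 0) := by
  classical
  obtain ⟨C₀, hC₀⟩ := hΨbdd
  set C : ℝ := max C₀ 1 with hCdef
  have hC1 : (1:ℝ) ≤ C := le_max_right _ _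
  have hC0 : (0:ℝ) < C := lt_of_lt_of_le one_pos hC1
  have hCb : ∀ z : ℂ, ‖z‖ = 1 → ∀ x : E, ‖Ψ z x‖ ≤ C * ‖x‖ := fun z hz x =>
    (hC₀ z hz x).trans (mul_le_mul_of_nonneg_right (le_max_left _ _) (norm_nonneg _))
  set T : ℕ → E → E := fun k x => ∑ n ∈ Finset.Icc (-(k : ℤ)) (k : ℤ),
      (((((1 : ℝ) - ((|n| : ℤ) : ℝ) / ((k : ℝ) + 1)) : ℝ) : ℂ) * ι x n) • e n with hT
  -- basic properties of T
  have hTcont : ∀ k, Continuous (T k) := by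
    intro k
    simp only [hT]
    apply continuous_finset_sum
    intro n _
    exact (continuous_const.mul (hcoord n)).smul continuous_const
  have hTadd : ∀ k x y, T k (x + y) = T k x + T k y := by
    intro k x y
    simp only [hT, map_add, Pi.add_apply, mul_add, add_smul, Finset.sum_add_distrib]
  have hTsmul : ∀ k (a : ℂ) x, T k (a • x) = a • T k x := by
    intro k a x
    simp only [hT, map_smul, Pi.smul_apply, smul_eq_mul, Finset.smul_sum, smul_smul,
      mul_left_comm]
  have hTsub : ∀ k x y, T k (x - y) = T k x - T k y := by
    intro k x y
    simp only [hT, map_sub, Pi.sub_apply, mul_sub, sub_smul, Finset.sum_sub_distrib]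
  have hTzero : ∀ k, T k (0 : E) = 0 := by
    intro k; simp [hT]
  -- coefficient description
  set ck : ℕ → ℤ → ℝ := fun k n =>
    if n.natAbs ≤ k then 1 - (n.natAbs : ℝ) / ((k : ℝ) + 1) else 0 with hck
  have hcoordT : ∀ (k : ℕ) (x : E) (n : ℤ), ι (T k x) n = ((ck k n : ℝ) : ℂ) * ι x n := by
    intro k x n
    simp only [hT]
    rw [map_sum, Finset.sum_apply]
    simp only [map_smul, he, Pi.smul_apply, Pi.single_apply, smul_eq_mul, mul_ite, mul_one,
      mul_zero]
    rw [Finset.sum_ite_eq]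
    have hmem : n ∈ Finset.Icc (-(k:ℤ)) (k:ℤ) ↔ n.natAbs ≤ k := by
      simp only [Finset.mem_Icc]; omega
    by_cases h : n.natAbs ≤ k
    · rw [if_pos (hmem.mpr h), hck]
      simp only [if_pos h]
      congr 2
      rw [Int.abs_eq_natAbs, Int.cast_natCast]
    · rw [if_neg (fun hc => h (hmem.mp hc)), hck]
      simp only [if_neg h]
      simp
  -- coordinates of span elements
  have hxcoord : ∀ (c : ℤ →₀ ℂ) (n : ℤ), ι (c.sum fun m a => a • e m) n = c n := by
    intro c n
    rw [map_finsuppSum]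
    rw [Finsupp.sum, Finset.sum_apply]
    simp only [map_smul, he, Pi.smul_apply, Pi.single_apply, smul_eq_mul, mul_ite, mul_one,
      mul_zero]
    rw [Finset.sum_ite_eq]
    by_cases hmem : n ∈ c.support
    · rw [if_pos hmem]
    · rw [if_neg hmem, eq_comm]
      exact Finsupp.notMem_support_iff.mp hmem
  have hk1 : ∀ k : ℕ, ((k:ℂ) + 1) ≠ 0 := fun k => Nat.cast_add_one_ne_zero k
  have hckval : ∀ (k : ℕ) (n : ℤ), ((ck k n : ℝ) : ℂ)
      = ((((k:ℤ) + 1 - n.natAbs).toNat : ℕ) : ℂ) / ((k:ℂ) + 1) := by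
    intro k n
    simp only [hck]
    by_cases h : n.natAbs ≤ k
    · have h2 : (((k:ℤ) + 1 - n.natAbs).toNat : ℕ) = k + 1 - n.natAbs := by omega
      rw [h2]
      simp only [if_pos h]
      push_cast [Nat.cast_sub (by omega : n.natAbs ≤ k + 1)]
      rw [eq_div_iff (hk1 k)]
      have hkk : ((k:ℂ) + 1) * ((k:ℂ)+1)⁻¹ = 1 := mul_inv_cancel₀ (hk1 k)
      field_simp [hk1 k]
    · have h2 : (((k:ℤ) + 1 - n.natAbs).toNat : ℕ) = 0 := by omega
      rw [h2, if_neg h]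
      norm_num
  -- bound on the span
  have hbound_span : ∀ k : ℕ, ∀ x ∈ Submodule.span ℂ (Set.range e), ‖T k x‖ ≤ C * ‖x‖ := by
    intro k x hx
    obtain ⟨c, rfl⟩ := Finsupp.mem_span_range_iff_exists_finsupp.mp hx
    set x : E := c.sum fun m a => a • e m with hxdef
    set M : ℕ := c.support.sup (fun m => m.natAbs) with hM
    set N : ℕ := M + k + 1 with hN
    clear_value N
    have hNpos : 0 < N := by omega
    set z : ℕ → ℂ := fun j => (Complex.exp (((2 * Real.pi / N : ℝ):ℂ) * Complex.I)) ^ j with hz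
    have hznorm : ∀ j : ℕ, ‖z j‖ = 1 := by
      intro j
      rw [hz]
      simp only [norm_pow, Complex.norm_exp_ofReal_mul_I, one_pow]
    have hzne : ∀ j : ℕ, z j ≠ 0 := fun j => pow_ne_zero _ (Complex.exp_ne_zero _)
    set K : ℕ → ℂ := fun j =>
      ∑ a ∈ Finset.Icc (0:ℤ) k, ∑ b ∈ Finset.Icc (0:ℤ) k, (z j) ^ (a - b) with hK
    have hcoeff : ∀ n : ℤ, n.natAbs ≤ M →
        ∑ j ∈ Finset.range N, K j * (z j) ^ n
          = (N:ℂ) * ((((k:ℤ) + 1 - n.natAbs).toNat : ℕ) : ℂ) := by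
      intro n hn
      rw [← Stmt8Aux.key k N hNpos n (by omega)]
      apply Finset.sum_congr rfl; intro j _
      rw [hK, Finset.sum_mul]
      apply Finset.sum_congr rfl; intro a _
      rw [Finset.sum_mul]
      apply Finset.sum_congr rfl; intro b _
      rw [← zpow_add₀ (hzne j)]
    have hNne : (N:ℂ) ≠ 0 := Nat.cast_ne_zero.mpr hNpos.ne'
    -- the identity expressing T k x as a positive combination of Ψ's
    have hident : T k x = ∑ j ∈ Finset.range N,
        (K j / ((N:ℂ) * ((k:ℂ) + 1))) • Ψ (z j) x := by
      apply hι
      funext n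
      rw [hcoordT, map_sum, Finset.sum_apply]
      simp only [map_smul, Pi.smul_apply, smul_eq_mul]
      have hψc : ∀ j ∈ Finset.range N,
          K j / ((N:ℂ) * ((k:ℂ) + 1)) * ι (Ψ (z j) x) n
            = K j / ((N:ℂ) * ((k:ℂ) + 1)) * (ι x n * (z j) ^ n) := by
        intro j _
        rw [hΨ (z j) (hznorm j) x n]
      rw [Finset.sum_congr rfl hψc]
      by_cases hn0 : ι x n = 0
      · simp [hn0]
      · have hnM : n.natAbs ≤ M := by
          have : n ∈ c.support := by
            rw [Finsupp.mem_support_iff, ← hxcoord c n]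
            exact hn0
          exact Finset.le_sup (f := fun m => m.natAbs) this
        have h1 : ∑ j ∈ Finset.range N,
            K j / ((N:ℂ) * ((k:ℂ) + 1)) * (ι x n * (z j) ^ n)
            = (ι x n / ((N:ℂ) * ((k:ℂ) + 1))) * ∑ j ∈ Finset.range N, K j * (z j) ^ n := by
          rw [Finset.mul_sum]
          apply Finset.sum_congr rfl; intro j _
          ring
        have hgen : ∀ (Nc : ℂ), Nc ≠ 0 → ∀ t u : ℂ,
            u / (Nc * ((k:ℂ) + 1)) * (Nc * t) = t / ((k:ℂ) + 1) * u := by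
          intro Nc hNc t u
          field_simp [hNc, hk1 k]
        rw [h1, hcoeff n hnM, hckval, hgen (N:ℂ) hNne]
    -- kernel positivity
    have hr : ∀ j : ℕ, ∃ r : ℝ, 0 ≤ r ∧ K j = (r : ℂ) := fun j =>
      Stmt8Aux.kernel_nonneg k (z j) (hznorm j)
    choose r hr0 hrK using hr
    -- total mass of the kernel
    have hmass : ∑ j ∈ Finset.range N, r j = (N : ℝ) * ((k : ℝ) + 1) := by
      have h0 := hcoeff 0 (Nat.zero_le M)
      simp only [zpow_zero, mul_one] at h0
      have h2 : (((((k:ℤ) + 1 - (0:ℤ).natAbs).toNat : ℕ)) : ℂ) = (k:ℂ) + 1 := by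
        rw [show ((k:ℤ) + 1 - (0:ℤ).natAbs).toNat = k + 1 from by omega]
        push_cast
        ring
      rw [h2] at h0
      simp only [hrK] at h0
      exact_mod_cast h0
    have hNk : (0:ℝ) < (N:ℝ) * ((k:ℝ) + 1) := by positivity
    calc ‖T k x‖
        = ‖∑ j ∈ Finset.range N, (K j / ((N:ℂ) * ((k:ℂ) + 1))) • Ψ (z j) x‖ := by rw [hident]
      _ ≤ ∑ j ∈ Finset.range N, ‖(K j / ((N:ℂ) * ((k:ℂ) + 1))) • Ψ (z j) x‖ :=
          norm_sum_le _ _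
      _ ≤ ∑ j ∈ Finset.range N, (r j / ((N:ℝ) * ((k:ℝ) + 1))) * (C * ‖x‖) := by
          apply Finset.sum_le_sum
          intro j _
          rw [norm_smul]
          have hα : ‖K j / ((N:ℂ) * ((k:ℂ) + 1))‖ = r j / ((N:ℝ) * ((k:ℝ) + 1)) := by
            rw [hrK j]
            have : ((r j : ℝ) : ℂ) / ((N:ℂ) * ((k:ℂ) + 1))
                = (((r j / ((N:ℝ) * ((k:ℝ) + 1))) : ℝ) : ℂ) := by push_cast; ring
            rw [this, Complex.norm_real, Real.norm_eq_abs,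
              _root_.abs_of_nonneg (div_nonneg (hr0 j) hNk.le)]
          rw [hα]
          exact mul_le_mul_of_nonneg_left (hCb (z j) (hznorm j) x)
            (div_nonneg (hr0 j) hNk.le)
      _ = C * ‖x‖ := by
          rw [← Finset.sum_mul, ← Finset.sum_div, hmass, div_self hNk.ne', one_mul]
  -- bound everywhere by density
  have hbound : ∀ (k : ℕ) (x : E), ‖T k x‖ ≤ C * ‖x‖ := by
    intro k x
    have hcl : IsClosed {y : E | ‖T k y‖ ≤ C * ‖y‖} :=
      isClosed_le ((hTcont k).norm) (continuous_const.mul continuous_norm)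
    exact (hcl.closure_subset_iff.mpr (fun y hy => hbound_span k y hy)) (hdense x)
  -- action on the generators
  have hTe : ∀ (k : ℕ) (m : ℤ), T k (e m) = if m ∈ Finset.Icc (-(k:ℤ)) (k:ℤ) then
      (((((1 : ℝ) - ((|m| : ℤ) : ℝ) / ((k : ℝ) + 1)) : ℝ) : ℂ)) • e m else 0 := by
    intro k m
    simp only [hT, he, Pi.single_apply, mul_ite, mul_one, mul_zero, ite_smul, zero_smul]
    rw [Finset.sum_ite_eq']
  -- convergence on the generators
  have hgen : ∀ m : ℤ, Tendsto (fun k => T k (e m)) atTop (nhds (e m)) := by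
    intro m
    rw [tendsto_iff_norm_sub_tendsto_zero]
    have hb : ∀ k : ℕ, ‖T k (e m) - e m‖ ≤ (m.natAbs : ℝ) / ((k:ℝ) + 1) * ‖e m‖ := by
      intro k
      have hk0 : (0:ℝ) < (k:ℝ) + 1 := by positivity
      by_cases hmem : m ∈ Finset.Icc (-(k:ℤ)) (k:ℤ)
      · rw [hTe, if_pos hmem]
        have habs : m.natAbs ≤ k := by
          simp only [Finset.mem_Icc] at hmem; omega
        have : (((((1 : ℝ) - ((|m| : ℤ) : ℝ) / ((k : ℝ) + 1)) : ℝ) : ℂ)) • e m - e m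
            = ((((-((m.natAbs : ℝ) / ((k:ℝ) + 1))) : ℝ) : ℂ)) • e m := by
          rw [show ((((-((m.natAbs : ℝ) / ((k:ℝ) + 1))) : ℝ) : ℂ))
              = (((((1 : ℝ) - ((|m| : ℤ) : ℝ) / ((k : ℝ) + 1)) : ℝ) : ℂ)) - 1 by
            rw [Int.abs_eq_natAbs, Int.cast_natCast]; push_cast; ring]
          rw [sub_smul, one_smul]
        rw [this, norm_smul, Complex.norm_real, Real.norm_eq_abs, abs_neg,
          _root_.abs_of_nonneg (div_nonneg (Nat.cast_nonneg _) hk0.le)]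
      · rw [hTe, if_neg hmem, zero_sub, norm_neg]
        have habs : k + 1 ≤ m.natAbs := by
          simp only [Finset.mem_Icc] at hmem; omega
        have h1 : (1:ℝ) ≤ (m.natAbs : ℝ) / ((k:ℝ) + 1) := by
          rw [le_div_iff₀ hk0, one_mul]
          exact_mod_cast habs
        exact le_mul_of_one_le_left (norm_nonneg _) h1
    have hconv : Tendsto (fun k : ℕ => (m.natAbs : ℝ) / ((k:ℝ) + 1) * ‖e m‖)
        atTop (nhds 0) := by
      have h0 := tendsto_one_div_add_atTop_nhds_zero_nat.const_mul
        ((m.natAbs : ℝ) * ‖e m‖)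
      rw [mul_zero] at h0
      apply h0.congr
      intro k
      field_simp
    exact squeeze_zero (fun k => norm_nonneg _) hb hconv
  -- convergence on the span
  have hspan : ∀ y ∈ Submodule.span ℂ (Set.range e),
      Tendsto (fun k => T k y) atTop (nhds y) := by
    intro y hy
    refine Submodule.span_induction
      (p := fun y _ => Tendsto (fun k => T k y) atTop (nhds y)) ?_ ?_ ?_ ?_ hy
    · rintro _ ⟨m, rfl⟩
      exact hgen m
    · simpa [hTzero] using (tendsto_const_nhds :
        Tendsto (fun _ : ℕ => (0:E)) atTop (nhds 0))
    · intro a b _ _ ha hb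
      simpa [hTadd] using ha.add hb
    · intro a y _ hy'
      simpa [hTsmul] using hy'.const_smul a
  -- conclusion
  intro x
  have hx : Tendsto (fun k => T k x) atTop (nhds x) := by
    rw [Metric.tendsto_atTop]
    intro ε hε
    obtain ⟨y, hymem, hyd⟩ :=
      Metric.mem_closure_iff.mp (hdense x) (ε / (3 * C)) (by positivity)
    obtain ⟨K0, hK0⟩ := Metric.tendsto_atTop.mp (hspan y hymem) (ε/3) (by positivity)
    refine ⟨K0, fun k hk => ?_⟩
    have e1 : dist (T k x) (T k y) ≤ C * dist x y := by
      rw [dist_eq_norm, dist_eq_norm, ← hTsub]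
      exact hbound k (x - y)
    have e2 : dist (T k y) y < ε/3 := hK0 k hk
    have e4 : C * dist x y < C * (ε / (3 * C)) := mul_lt_mul_of_pos_left hyd hC0
    have e5 : C * (ε / (3 * C)) = ε/3 := by field_simp
    have e6 : ε / (3 * C) ≤ ε/3 := by
      rw [div_le_div_iff₀ (by positivity) (by norm_num)]
      nlinarith
    calc dist (T k x) x
        ≤ dist (T k x) (T k y) + dist (T k y) y + dist y x := dist_triangle4 _ _ _ _
      _ < ε := by
          rw [dist_comm y x]
          have := hyd
          linarith
  have hfinal := tendsto_iff_norm_sub_tendsto_zero.mp hx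
  simp only [hT] at hfinal
  exact hfinal
end

section
/- For every x ∈ E and every multiplier M on E, the map from the unit circle 𝕋 to E given by z ↦ ψ_z(M(ψ_{z⁻¹}(x))) is continuous. -/
/-- For every `x ∈ E` and every multiplier `M` on `E`, the map
`z ↦ ψ_z(M(ψ_{z⁻¹}(x)))` is continuous from the unit circle `𝕋` into `E`. -/
theorem stmt9
    {E : Type*} [NormedAddCommGroup E] [NormedSpace ℂ E] [CompleteSpace E]
    (ι : E →ₗ[ℂ] (ℤ → ℂ)) (hι : Function.Injective ι)
    (e : ℤ → E) (he : ∀ k : ℤ, ι (e k) = Pi.single k 1)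
    (hdense : Dense (Submodule.span ℂ (Set.range e) : Set E))
    (hcoord : ∀ n : ℤ, Continuous fun x : E => ι x n)
    (Ψ : ℂ → E → E)
    (hΨ : ∀ z : ℂ, ‖z‖ = 1 → ∀ x : E, ∀ n : ℤ, ι (Ψ z x) n = ι x n * z ^ n)
    (hΨbdd : ∃ C : ℝ, ∀ z : ℂ, ‖z‖ = 1 → ∀ x : E, ‖Ψ z x‖ ≤ C * ‖x‖)
    -- `M` is a multiplier on `E`:
    (M : E →L[ℂ] E)
    (hM : ∀ k n : ℤ, ι (M (e (k + 1))) n = ι (M (e k)) (n - 1)) :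
    ∀ x : E, ContinuousOn (fun z : ℂ => Ψ z (M (Ψ z⁻¹ x))) {z : ℂ | ‖z‖ = 1} := by
  obtain ⟨C₀, hC₀⟩ := hΨbdd
  set C : ℝ := max C₀ 0 with hCdef
  have hC : ∀ z : ℂ, ‖z‖ = 1 → ∀ x : E, ‖Ψ z x‖ ≤ C * ‖x‖ := by
    intro z hz x
    exact (hC₀ z hz x).trans (mul_le_mul_of_nonneg_right (le_max_left _ _) (norm_nonneg _))
  have hC0 : 0 ≤ C := le_max_right _ _
  -- `Ψ z` is additive / homogeneous
  have hadd : ∀ z : ℂ, ‖z‖ = 1 → ∀ a b : E, Ψ z (a + b) = Ψ z a + Ψ z b := by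
    intro z hz a b
    apply hι
    funext n
    have : ι (Ψ z a + Ψ z b) n = ι (Ψ z a) n + ι (Ψ z b) n := by simp
    rw [this, hΨ z hz, hΨ z hz, hΨ z hz]
    have : ι (a + b) n = ι a n + ι b n := by simp
    rw [this]; ring
  have hsub : ∀ z : ℂ, ‖z‖ = 1 → ∀ a b : E, Ψ z (a - b) = Ψ z a - Ψ z b := by
    intro z hz a b
    apply hι
    funext n
    have h1 : ι (Ψ z a - Ψ z b) n = ι (Ψ z a) n - ι (Ψ z b) n := by simp
    rw [h1, hΨ z hz, hΨ z hz, hΨ z hz]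
    have : ι (a - b) n = ι a n - ι b n := by simp
    rw [this]; ring
  have hsmul : ∀ z : ℂ, ‖z‖ = 1 → ∀ (c : ℂ) (a : E), Ψ z (c • a) = c • Ψ z a := by
    intro z hz c a
    apply hι
    funext n
    have h1 : ι (c • Ψ z a) n = c * ι (Ψ z a) n := by simp
    rw [h1, hΨ z hz, hΨ z hz]
    have : ι (c • a) n = c * ι a n := by simp
    rw [this]; ring
  have hzero : ∀ z : ℂ, ‖z‖ = 1 → Ψ z 0 = 0 := by
    intro z hz
    have := hsmul z hz 0 0
    simpa using this
  -- Ψ z (e k) = z ^ k • e k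
  have hpsiE : ∀ z : ℂ, ‖z‖ = 1 → ∀ k : ℤ, Ψ z (e k) = z ^ k • e k := by
    intro z hz k
    apply hι
    funext n
    rw [hΨ z hz]
    have h1 : ι ((z ^ k) • e k) n = z ^ k * ι (e k) n := by simp
    rw [h1, he]
    by_cases hnk : n = k
    · subst hnk; ring
    · simp [Pi.single_eq_of_ne hnk]
  set S : Set ℂ := {z : ℂ | ‖z‖ = 1} with hS
  -- continuity of z ↦ Ψ z y on S for y in the span
  have hspan : ∀ y ∈ Submodule.span ℂ (Set.range e),
      ContinuousOn (fun z : ℂ => Ψ z y) S := by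
    intro y hy
    induction hy using Submodule.span_induction with
    | mem v hv =>
        obtain ⟨k, rfl⟩ := hv
        have hc : ContinuousOn (fun z : ℂ => z ^ k • e k) S := by
          apply ContinuousOn.smul _ continuousOn_const
          intro z hz
          have hz0 : z ≠ 0 := by
            intro h; rw [hS] at hz; simp [h] at hz
          exact (continuousAt_zpow₀ z k (Or.inl hz0)).continuousWithinAt
        exact hc.congr fun z hz => hpsiE z hz k
    | zero =>
        have : ContinuousOn (fun _ : ℂ => (0 : E)) S := continuousOn_const
        exact this.congr fun z hz => hzero z hz
    | add a b ha hb iha ihb =>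
        exact (iha.add ihb).congr fun z hz => hadd z hz a b
    | smul c a ha iha =>
        exact (iha.const_smul c).congr fun z hz => hsmul z hz c a
  -- continuity of z ↦ Ψ z y on S for all y, by density & uniform bound
  have hall : ∀ y : E, ContinuousOn (fun z : ℂ => Ψ z y) S := by
    intro y
    have hyc : y ∈ closure (Submodule.span ℂ (Set.range e) : Set E) := hdense y
    rw [mem_closure_iff_seq_limit] at hyc
    obtain ⟨u, hu, hul⟩ := hyc
    have : TendstoUniformlyOn (fun n z => Ψ z (u n)) (fun z => Ψ z y) Filter.atTop S := by
      rw [Metric.tendstoUniformlyOn_iff]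
      intro ε hε
      have hn : Filter.Tendsto (fun n => C * ‖y - u n‖) Filter.atTop (nhds 0) := by
        have h1 : Filter.Tendsto (fun n => ‖y - u n‖) Filter.atTop (nhds 0) := by
          have := (tendsto_const_nhds (x := y)).sub hul
          simpa using this.norm
        simpa using h1.const_mul C
      have hev := hn.eventually (gt_mem_nhds hε)
      filter_upwards [hev] with n hn z hz
      have hzS : ‖z‖ = 1 := hz
      have : dist (Ψ z y) (Ψ z (u n)) = ‖Ψ z (y - u n)‖ := by
        rw [dist_eq_norm, hsub z hzS]
      rw [this]
      exact lt_of_le_of_lt (hC z hzS _) hn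
    exact this.continuousOn (Filter.Eventually.of_forall fun n => hspan (u n) (hu n)).frequently
  -- now the main statement
  intro x
  have hinvS : Set.MapsTo (fun z : ℂ => z⁻¹) S S := by
    intro z hz
    have : ‖z‖ = 1 := hz
    simp only [hS, Set.mem_setOf_eq, norm_inv, this, inv_one]
  have hinvc : ContinuousOn (fun z : ℂ => z⁻¹) S := by
    apply ContinuousOn.inv₀ continuousOn_id
    intro z hz h
    simp only [id_eq] at h
    rw [hS] at hz; simp [h] at hz
  have hA : ContinuousOn (fun z : ℂ => M (Ψ z⁻¹ x)) S :=
    M.continuous.comp_continuousOn ((hall x).comp hinvc hinvS)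
  intro w hw
  have hwS : ‖w‖ = 1 := hw
  set A : ℂ → E := fun z => M (Ψ z⁻¹ x) with hAdef
  have h1 : Filter.Tendsto (fun z => Ψ z (A z - A w)) (nhdsWithin w S) (nhds 0) := by
    have hb : ∀ᶠ z in nhdsWithin w S, ‖Ψ z (A z - A w)‖ ≤ C * ‖A z - A w‖ := by
      filter_upwards [self_mem_nhdsWithin] with z hz
      exact hC z hz _
    have hg : Filter.Tendsto (fun z => C * ‖A z - A w‖) (nhdsWithin w S) (nhds 0) := by
      have h2 : Filter.Tendsto A (nhdsWithin w S) (nhds (A w)) := hA w hw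
      have h3 : Filter.Tendsto (fun z => ‖A z - A w‖) (nhdsWithin w S) (nhds 0) := by
        have := h2.sub (tendsto_const_nhds (x := A w))
        simpa using this.norm
      simpa using h3.const_mul C
    exact squeeze_zero_norm' hb hg
  have h2 : Filter.Tendsto (fun z => Ψ z (A w)) (nhdsWithin w S) (nhds (Ψ w (A w))) :=
    hall (A w) w hw
  have h3 := h1.add h2
  rw [zero_add] at h3
  have : ContinuousWithinAt (fun z : ℂ => Ψ z (A z)) S w := by
    unfold ContinuousWithinAt
    apply h3.congr'
    filter_upwards [self_mem_nhdsWithin] with z hz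
    rw [hsub z hz, sub_add_cancel]
  exact this
end

section
/- If S is bounded on E but S⁻¹ is not bounded, then every multiplier M on E satisfies M̂(n) = 0 for all n < 0; symmetrically, if S⁻¹ is bounded on E but S is not bounded, then every multiplier M on E satisfies M̂(n) = 0 for all n > 0. -/
open Complex MeasureTheory intervalIntegral Real

lemma intK (K : ℤ) : (∫ t in (0:ℝ)..(2*π), Complex.exp (K * (t * I)))
    = if K = 0 then ((2*π:ℝ):ℂ) else 0 := by
  split_ifs with h
  · subst h; simp
  · have hc : (K:ℂ) * I ≠ 0 := by
      simp [Complex.ext_iff, Int.cast_injective.ne_iff]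
      exact_mod_cast h
    have : ∀ t : ℝ, (K:ℂ) * ((t:ℂ) * I) = ((K:ℂ)*I) * (t:ℂ) := fun t => by ring
    simp_rw [this]
    rw [integral_exp_mul_complex hc]
    have h1 : (K:ℂ) * I * ((2*π:ℝ):ℂ) = K * (2 * π * I) := by push_cast; ring
    have h2 : (K:ℂ) * I * ((0:ℝ):ℂ) = 0 := by push_cast; ring
    rw [h1, h2, Complex.exp_int_mul_two_pi_mul_I, Complex.exp_zero, sub_self, zero_div]
open Complex

section
variable {E : Type*} [NormedAddCommGroup E] [NormedSpace ℂ E]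
    (ι : E →ₗ[ℂ] (ℤ → ℂ)) (hι : Function.Injective ι)
    (e : ℤ → E) (he : ∀ k : ℤ, ι (e k) = Pi.single k 1)
    (Ψ : ℂ → E → E)
    (hΨ : ∀ z : ℂ, ‖z‖ = 1 → ∀ x : E, ∀ n : ℤ, ι (Ψ z x) n = ι x n * z ^ n)

include hι hΨ in
lemma psi_add {z : ℂ} (hz : ‖z‖ = 1) (x y : E) : Ψ z (x + y) = Ψ z x + Ψ z y := by
  apply hι; funext n
  simp [hΨ z hz, add_mul]

include hι hΨ in
lemma psi_smul {z : ℂ} (hz : ‖z‖ = 1) (a : ℂ) (x : E) : Ψ z (a • x) = a • Ψ z x := by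
  apply hι; funext n
  simp [hΨ z hz]; ring

include hι he hΨ in
lemma psi_e {z : ℂ} (hz : ‖z‖ = 1) (k : ℤ) : Ψ z (e k) = z ^ k • e k := by
  apply hι; funext n
  simp only [hΨ z hz, _root_.map_smul, he, Pi.smul_apply, smul_eq_mul, Pi.single_apply]
  split_ifs with h
  · subst h; ring
  · ring

end

section
variable {E : Type*} [NormedAddCommGroup E] [NormedSpace ℂ E]
    (ι : E →ₗ[ℂ] (ℤ → ℂ))
    (e : ℤ → E)
    (M : E →L[ℂ] E)
    (hM : ∀ k n : ℤ, ι (M (e (k + 1))) n = ι (M (e k)) (n - 1))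

include hM in
lemma Mek (k : ℤ) : ∀ n, ι (M (e k)) n = ι (M (e 0)) (n - k) := by
  induction k using Int.induction_on with
  | zero => intro n; simp
  | succ i ih =>
      intro n
      rw [hM i n, ih (n-1)]
      congr 1; ring
  | pred i ih =>
      intro n
      have := hM (-i-1) (n+1)
      rw [show (-i-1+1 : ℤ) = -i by ring] at this
      rw [show ((-i-1:ℤ)) = (-(i:ℤ)-1) from rfl] at this
      have h2 : ι (M (e (-(i:ℤ)-1))) n = ι (M (e (-(i:ℤ)))) (n+1) := by
        rw [this]; congr 1; ring
      rw [h2, ih (n+1)]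
      congr 1; ring
end

section
variable {E : Type*} [NormedAddCommGroup E] [NormedSpace ℂ E]
    (ι : E →ₗ[ℂ] (ℤ → ℂ)) (hι : Function.Injective ι)
    (e : ℤ → E) (he : ∀ k : ℤ, ι (e k) = Pi.single k 1)
    (hdense : Dense (Submodule.span ℂ (Set.range e) : Set E))
    (Ψ : ℂ → E → E)
    (hΨ : ∀ z : ℂ, ‖z‖ = 1 → ∀ x : E, ∀ n : ℤ, ι (Ψ z x) n = ι x n * z ^ n)
    {C : ℝ} (hC : ∀ z : ℂ, ‖z‖ = 1 → ∀ x : E, ‖Ψ z x‖ ≤ C * ‖x‖)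

lemma norm_exp_unit (t : ℝ) : ‖Complex.exp ((t:ℂ) * I)‖ = 1 :=
  Complex.norm_exp_ofReal_mul_I t

include hι he hΨ in
lemma contPsiSpan (f : ℝ → ℝ) (hf : Continuous f)
    (v : E) (hv : v ∈ Submodule.span ℂ (Set.range e)) :
    Continuous (fun t : ℝ => Ψ (Complex.exp ((f t : ℂ) * I)) v) := by
  induction hv using Submodule.span_induction with
  | mem x hx =>
      obtain ⟨k, rfl⟩ := hx
      have hk : ∀ t : ℝ, Ψ (Complex.exp ((f t : ℂ) * I)) (e k)
          = Complex.exp ((k : ℂ) * ((f t : ℂ) * I)) • e k := by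
        intro t
        rw [psi_e ι hι e he Ψ hΨ (norm_exp_unit (f t)) k, Complex.exp_int_mul]
      simp_rw [hk]
      exact (Continuous.smul (by continuity) continuous_const)
  | zero =>
      have h0 : ∀ z : ℂ, ‖z‖ = 1 → Ψ z (0 : E) = 0 := by
        intro z hz
        have := psi_smul ι hι Ψ hΨ hz 0 (0 : E)
        simpa using this
      simp_rw [fun t : ℝ => h0 _ (norm_exp_unit (f t))]
      exact continuous_const
  | add x y hx hy ihx ihy =>
      simp_rw [fun t : ℝ => psi_add ι hι Ψ hΨ (norm_exp_unit (f t)) x y]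
      exact ihx.add ihy
  | smul a x hx ihx =>
      simp_rw [fun t : ℝ => psi_smul ι hι Ψ hΨ (norm_exp_unit (f t)) a x]
      exact continuous_const.smul ihx

include hι he hdense hΨ hC in
lemma contPsi (f : ℝ → ℝ) (hf : Continuous f) (x : E) :
    Continuous (fun t : ℝ => Ψ (Complex.exp ((f t : ℂ) * I)) x) := by
  have hC0 : 0 ≤ C := by
    have h1 := hC 1 (by simp) (e 0)
    have h2 : (0:ℝ) < ‖e 0‖ := by
      rw [norm_pos_iff]
      intro h
      have := he 0
      rw [h] at this
      simp at this
      have := congrFun this.symm 0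
      simp at this
    nlinarith [norm_nonneg (Ψ 1 (e 0))]
  rw [Metric.continuous_iff]
  intro t₀ ε hε
  -- choose v in span close to x
  have hx : x ∈ closure (Submodule.span ℂ (Set.range e) : Set E) := hdense x
  rw [Metric.mem_closure_iff] at hx
  obtain ⟨v, hvmem, hvd⟩ := hx (ε / (3 * (C + 1))) (by positivity)
  rw [dist_eq_norm] at hvd
  have hCx : ∀ z : ℂ, ‖z‖ = 1 → ‖Ψ z x - Ψ z v‖ ≤ C * ‖x - v‖ := by
    intro z hz
    have : Ψ z x = Ψ z v + Ψ z (x - v) := by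
      rw [← psi_add ι hι Ψ hΨ hz]; congr 1; abel
    rw [this]
    simpa using hC z hz (x - v)
  have hnear : C * ‖x - v‖ < ε / 3 := by
    calc C * ‖x - v‖ ≤ (C+1) * ‖x - v‖ := by nlinarith [norm_nonneg (x - v)]
    _ < (C+1) * (ε / (3 * (C + 1))) := by
        apply mul_lt_mul_of_pos_left hvd; positivity
    _ = ε / 3 := by field_simp
  have hcv := contPsiSpan ι hι e he Ψ hΨ f hf v hvmem
  rw [Metric.continuous_iff] at hcv
  obtain ⟨δ, hδ, hδ2⟩ := hcv t₀ (ε/3) (by positivity)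
  refine ⟨δ, hδ, fun t ht => ?_⟩
  have h1 := hCx _ (norm_exp_unit (f t))
  have h2 := hCx _ (norm_exp_unit (f t₀))
  have h3 := hδ2 t ht
  calc dist (Ψ (Complex.exp ((f t : ℂ) * I)) x) (Ψ (Complex.exp ((f t₀ : ℂ) * I)) x)
      ≤ dist (Ψ (Complex.exp ((f t : ℂ) * I)) x) (Ψ (Complex.exp ((f t : ℂ) * I)) v)
        + dist (Ψ (Complex.exp ((f t : ℂ) * I)) v) (Ψ (Complex.exp ((f t₀ : ℂ) * I)) v)
        + dist (Ψ (Complex.exp ((f t₀ : ℂ) * I)) v) (Ψ (Complex.exp ((f t₀ : ℂ) * I)) x) :=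
        dist_triangle4 _ _ _ _
    _ < ε := by
        rw [dist_eq_norm, dist_eq_norm (Ψ (Complex.exp ((f t₀ : ℂ) * I)) v)]
        rw [norm_sub_rev (Ψ (Complex.exp ((f t₀ : ℂ) * I)) v)]
        have := h3
        linarith
end
section
variable {E : Type*} [NormedAddCommGroup E] [NormedSpace ℂ E]
    (ι : E →ₗ[ℂ] (ℤ → ℂ)) (hι : Function.Injective ι)
    (e : ℤ → E) (he : ∀ k : ℤ, ι (e k) = Pi.single k 1)
    (hdense : Dense (Submodule.span ℂ (Set.range e) : Set E))
    (Ψ : ℂ → E → E)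
    (hΨ : ∀ z : ℂ, ‖z‖ = 1 → ∀ x : E, ∀ n : ℤ, ι (Ψ z x) n = ι x n * z ^ n)
    {C : ℝ} (hC : ∀ z : ℂ, ‖z‖ = 1 → ∀ x : E, ‖Ψ z x‖ ≤ C * ‖x‖)

include hι hΨ in
lemma psi_zero {z : ℂ} (hz : ‖z‖ = 1) : Ψ z (0 : E) = 0 := by
  have := psi_smul ι hι Ψ hΨ hz 0 (0 : E)
  simpa using this

include he hC in
lemma Cnonneg : 0 ≤ C := by
  have h1 := hC 1 (by simp) (e 0)
  have h2 : (0:ℝ) < ‖e 0‖ := by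
    rw [norm_pos_iff]
    intro h
    have h3 := he 0
    rw [h] at h3
    simp at h3
    have := congrFun h3.symm 0
    simp at this
  nlinarith [norm_nonneg (Ψ 1 (e 0))]

include hι he hdense hΨ hC in
lemma contPsi2 (w : ℝ → E) (hw : Continuous w) :
    Continuous (fun t : ℝ => Ψ (Complex.exp ((t:ℂ) * Complex.I)) (w t)) := by
  rw [continuous_iff_continuousAt]
  intro t₀
  rw [ContinuousAt, tendsto_iff_norm_sub_tendsto_zero]
  apply squeeze_zero (fun t => norm_nonneg _)
    (g := fun t => C * ‖w t - w t₀‖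
      + ‖Ψ (Complex.exp ((t:ℂ) * Complex.I)) (w t₀)
          - Ψ (Complex.exp ((t₀:ℂ) * Complex.I)) (w t₀)‖)
  · intro t
    have hdec : Ψ (Complex.exp ((t:ℂ) * Complex.I)) (w t)
        = Ψ (Complex.exp ((t:ℂ) * Complex.I)) (w t - w t₀)
          + Ψ (Complex.exp ((t:ℂ) * Complex.I)) (w t₀) := by
      rw [← psi_add ι hι Ψ hΨ (norm_exp_unit t)]
      congr 1; abel
    rw [hdec]
    have h1 : ‖Ψ (Complex.exp ((t:ℂ) * Complex.I)) (w t - w t₀)‖ ≤ C * ‖w t - w t₀‖ :=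
      hC _ (norm_exp_unit t) _
    calc ‖_‖ ≤ ‖Ψ (Complex.exp ((t:ℂ) * Complex.I)) (w t - w t₀)‖
        + ‖Ψ (Complex.exp ((t:ℂ) * Complex.I)) (w t₀)
            - Ψ (Complex.exp ((t₀:ℂ) * Complex.I)) (w t₀)‖ := by
          rw [add_sub_assoc]; exact norm_add_le _ _
      _ ≤ _ := by gcongr
  · have hl1 : Filter.Tendsto (fun t => ‖w t - w t₀‖) (nhds t₀) (nhds 0) := by
      rw [← tendsto_iff_norm_sub_tendsto_zero]
      exact hw.continuousAt
    have hl2 : Filter.Tendsto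
        (fun t : ℝ => ‖Ψ (Complex.exp ((t:ℂ) * Complex.I)) (w t₀)
          - Ψ (Complex.exp ((t₀:ℂ) * Complex.I)) (w t₀)‖) (nhds t₀) (nhds 0) := by
      rw [← tendsto_iff_norm_sub_tendsto_zero]
      exact (contPsi ι hι e he hdense Ψ hΨ hC (fun t => t) continuous_id (w t₀)).continuousAt
    have := (hl1.const_mul C).add hl2
    simpa using this
end
section
variable {E : Type*} [NormedAddCommGroup E] [NormedSpace ℂ E] [CompleteSpace E]
    (ι : E →ₗ[ℂ] (ℤ → ℂ)) (hι : Function.Injective ι)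
    (e : ℤ → E) (he : ∀ k : ℤ, ι (e k) = Pi.single k 1)
    (hdense : Dense (Submodule.span ℂ (Set.range e) : Set E))
    (hcoord : ∀ n : ℤ, Continuous fun x : E => ι x n)
    (Ψ : ℂ → E → E)
    (hΨ : ∀ z : ℂ, ‖z‖ = 1 → ∀ x : E, ∀ n : ℤ, ι (Ψ z x) n = ι x n * z ^ n)
    {C : ℝ} (hC : ∀ z : ℂ, ‖z‖ = 1 → ∀ x : E, ‖Ψ z x‖ ≤ C * ‖x‖)
    (M : E →L[ℂ] E)
    (hM : ∀ k n : ℤ, ι (M (e (k + 1))) n = ι (M (e k)) (n - 1))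

include hι he hdense hcoord hΨ hC hM in
lemma key (m : ℤ) (x : E) :
    ∃ y : E, ∀ n : ℤ, ι y n = ι (M (e 0)) m * ι x (n - m) := by
  classical
  have hC0 : 0 ≤ C := Cnonneg (he := he) (hC := hC)
  set g : E → ℝ → E := fun x t =>
    Complex.exp (-((m:ℂ) * ((t:ℂ) * I))) •
      Ψ (Complex.exp ((t:ℂ) * I)) (M (Ψ (Complex.exp (((-t:ℝ):ℂ) * I)) x)) with hgdef
  have harg : ∀ t : ℝ, -((m:ℂ) * ((t:ℂ) * I)) = ((-(m*t) : ℝ) : ℂ) * I := by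
    intro t; push_cast; ring
  -- continuity and integrability
  have hgcont : ∀ x : E, Continuous (g x) := by
    intro x
    apply Continuous.smul
    · apply Complex.continuous_exp.comp
      continuity
    · apply contPsi2 ι hι e he hdense Ψ hΨ hC
      exact M.continuous.comp
        (contPsi ι hι e he hdense Ψ hΨ hC (fun t => -t) (by continuity) x)
  have hgint : ∀ x : E, IntervalIntegrable (g x) MeasureTheory.volume 0 (2*π) :=
    fun x => (hgcont x).intervalIntegrable _ _
  -- the averaged operator
  set A : E → E := fun x => (((2*π:ℝ):ℂ))⁻¹ • ∫ t in (0:ℝ)..(2*π), g x t with hAdef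
  -- additivity etc.
  have hgadd : ∀ u v : E, ∀ t : ℝ, g (u+v) t = g u t + g v t := by
    intro u v t
    simp only [hgdef]
    rw [psi_add ι hι Ψ hΨ (norm_exp_unit (-t)) u v, map_add,
      psi_add ι hι Ψ hΨ (norm_exp_unit t), smul_add]
  have hgsmul : ∀ (a : ℂ) (u : E) (t : ℝ), g (a • u) t = a • g u t := by
    intro a u t
    simp only [hgdef]
    rw [psi_smul ι hι Ψ hΨ (norm_exp_unit (-t)) a u, _root_.map_smul,
      psi_smul ι hι Ψ hΨ (norm_exp_unit t), smul_comm]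
  have hAadd : ∀ u v : E, A (u+v) = A u + A v := by
    intro u v
    simp only [hAdef]
    rw [← smul_add, ← intervalIntegral.integral_add (hgint u) (hgint v)]
    congr 1
    apply intervalIntegral.integral_congr
    intro t _
    exact hgadd u v t
  have hAsub : ∀ u v : E, A u - A v = A (u - v) := by
    intro u v
    have h1 : A u = A (u - v) + A v := by
      rw [← hAadd]; congr 1; abel
    rw [h1]; abel
  -- norm bound
  have hgnorm : ∀ (u : E) (t : ℝ), ‖g u t‖ ≤ C * (‖M‖ * (C * ‖u‖)) := by
    intro u t
    simp only [hgdef]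
    rw [norm_smul, harg t, Complex.norm_exp_ofReal_mul_I, one_mul]
    calc ‖Ψ (Complex.exp ((t:ℂ) * I)) (M (Ψ (Complex.exp (((-t:ℝ):ℂ) * I)) u))‖
        ≤ C * ‖M (Ψ (Complex.exp (((-t:ℝ):ℂ) * I)) u)‖ := hC _ (norm_exp_unit t) _
      _ ≤ C * (‖M‖ * ‖Ψ (Complex.exp (((-t:ℝ):ℂ) * I)) u‖) :=
          mul_le_mul_of_nonneg_left (M.le_opNorm _) hC0
      _ ≤ C * (‖M‖ * (C * ‖u‖)) :=
          mul_le_mul_of_nonneg_left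
            (mul_le_mul_of_nonneg_left (hC _ (norm_exp_unit (-t)) u) (norm_nonneg _)) hC0
  have hAnorm : ∀ u : E, ‖A u‖ ≤ (C * (‖M‖ * C)) * ‖u‖ := by
    intro u
    simp only [hAdef]
    rw [norm_smul]
    have h1 : ‖(((2*π:ℝ):ℂ))⁻¹‖ = (2*π)⁻¹ := by
      rw [norm_inv, Complex.norm_real, Real.norm_eq_abs, abs_of_pos (by positivity)]
    rw [h1]
    calc (2*π)⁻¹ * ‖∫ t in (0:ℝ)..(2*π), g u t‖
        ≤ (2*π)⁻¹ * ((C * (‖M‖ * (C * ‖u‖))) * |2*π - 0|) := by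
          apply mul_le_mul_of_nonneg_left _ (by positivity)
          exact intervalIntegral.norm_integral_le_of_norm_le_const (fun t _ => hgnorm u t)
      _ = (C * (‖M‖ * C)) * ‖u‖ := by
          rw [sub_zero, abs_of_pos (by positivity)]
          have hπ : (2*π) ≠ 0 := by positivity
          field_simp
  -- coordinate functionals
  set φ : ℤ → (E →L[ℂ] ℂ) := fun n => ⟨(LinearMap.proj n).comp ι, hcoord n⟩ with hφdef
  have hφ : ∀ (n : ℤ) (u : E), φ n u = ι u n := fun n u => rfl
  -- coordinates of A on basis vectors
  have hAe : ∀ k n : ℤ, ι (A (e k)) n = ι (M (e 0)) m * ι (e k) (n - m) := by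
    intro k n
    have hptwise : ∀ t : ℝ, φ n (g (e k) t)
        = ι (M (e 0)) (n - k) * Complex.exp (((n - k - m : ℤ) : ℂ) * ((t:ℂ) * I)) := by
      intro t
      simp only [hgdef]
      rw [psi_e ι hι e he Ψ hΨ (norm_exp_unit (-t)) k, _root_.map_smul, _root_.map_smul,
        psi_smul ι hι Ψ hΨ (norm_exp_unit t), _root_.map_smul]
      rw [smul_eq_mul, smul_eq_mul, hφ, hΨ _ (norm_exp_unit t), Mek ι e M hM k n]
      rw [show ((Complex.exp ((t:ℂ) * I)) ^ n) = Complex.exp ((n:ℂ) * ((t:ℂ)*I)) from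
        (Complex.exp_int_mul _ n).symm]
      rw [show ((Complex.exp (((-t:ℝ):ℂ) * I)) ^ k) = Complex.exp ((k:ℂ) * (((-t:ℝ):ℂ)*I)) from
        (Complex.exp_int_mul _ k).symm]
      rw [show ((n - k - m : ℤ) : ℂ) * ((t:ℂ) * I) = -((m:ℂ) * ((t:ℂ) * I))
          + ((k:ℂ) * (((-t:ℝ):ℂ) * I) + (n:ℂ) * ((t:ℂ) * I)) by push_cast; ring,
        Complex.exp_add, Complex.exp_add]
      ring
    have hint : ι (A (e k)) n
        = (((2*π:ℝ):ℂ))⁻¹ * ∫ t in (0:ℝ)..(2*π), φ n (g (e k) t) := by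
      rw [← hφ n]
      simp only [hAdef]
      rw [_root_.map_smul, smul_eq_mul, (φ n).intervalIntegral_comp_comm (hgint (e k))]
    rw [hint]
    have hI : (∫ t in (0:ℝ)..(2*π), φ n (g (e k) t))
        = ι (M (e 0)) (n - k) * (if (n - k - m : ℤ) = 0 then ((2*π:ℝ):ℂ) else 0) := by
      rw [show (fun t : ℝ => φ n (g (e k) t))
          = fun t : ℝ => ι (M (e 0)) (n - k)
              * Complex.exp (((n - k - m : ℤ) : ℂ) * ((t:ℂ) * I)) from funext hptwise]
      rw [intervalIntegral.integral_const_mul, intK]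
    rw [hI, he k, Pi.single_apply]
    have hπ : ((2*π:ℝ):ℂ) ≠ 0 := Complex.ofReal_ne_zero.mpr (by positivity)
    split_ifs with h1 h2
    · have h3 : n - k = m := by omega
      rw [h3, mul_one, mul_comm, mul_assoc, mul_inv_cancel₀ hπ, mul_one]
    · exfalso; omega
    · exfalso; omega
    · simp
  -- coordinates of A on the span
  have hAspan : ∀ v ∈ Submodule.span ℂ (Set.range e),
      ∀ n : ℤ, ι (A v) n = ι (M (e 0)) m * ι v (n - m) := by
    intro v hv
    induction hv using Submodule.span_induction with
    | mem v hv => obtain ⟨k, rfl⟩ := hv; exact hAe k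
    | zero =>
        intro n
        have hg0 : ∀ t : ℝ, g (0 : E) t = 0 := by
          intro t
          simp only [hgdef]
          rw [psi_zero ι hι Ψ hΨ (norm_exp_unit (-t)), map_zero,
            psi_zero ι hι Ψ hΨ (norm_exp_unit t), smul_zero]
        have : A (0 : E) = 0 := by
          simp only [hAdef]
          rw [show (fun t : ℝ => g (0:E) t) = fun _ : ℝ => (0:E) from funext hg0]
          simp
        rw [this]
        simp
    | add u v hu hv ihu ihv =>
        intro n
        rw [hAadd u v, map_add, Pi.add_apply, ihu n, ihv n, map_add, Pi.add_apply]
        ring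
    | smul a u hu ihu =>
        intro n
        have hAs : A (a • u) = a • A u := by
          simp only [hAdef]
          rw [show (fun t : ℝ => g (a • u) t) = fun t : ℝ => a • g u t from
            funext (hgsmul a u), intervalIntegral.integral_smul, smul_comm]
        rw [hAs, _root_.map_smul, Pi.smul_apply, smul_eq_mul, ihu n, _root_.map_smul, Pi.smul_apply,
          smul_eq_mul]
        ring
  -- general x by density
  have hx := hdense x
  rw [mem_closure_iff_seq_limit] at hx
  obtain ⟨u, humem, hulim⟩ := hx
  refine ⟨A x, fun n => ?_⟩
  have hK0 : 0 ≤ C * (‖M‖ * C) := by positivity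
  have hAtend : Filter.Tendsto (fun j => A (u j)) Filter.atTop (nhds (A x)) := by
    rw [tendsto_iff_norm_sub_tendsto_zero]
    apply squeeze_zero (fun j => norm_nonneg _) (g := fun j => (C * (‖M‖ * C)) * ‖u j - x‖)
    · intro j
      rw [hAsub]
      exact hAnorm _
    · have h1 : Filter.Tendsto (fun j => ‖u j - x‖) Filter.atTop (nhds 0) := by
        rw [← tendsto_iff_norm_sub_tendsto_zero]
        exact hulim
      have := h1.const_mul (C * (‖M‖ * C))
      simpa using this
  have h2 : Filter.Tendsto (fun j => ι (A (u j)) n) Filter.atTop (nhds (ι (A x) n)) :=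
    ((hcoord n).tendsto (A x)).comp hAtend
  have h3 : Filter.Tendsto (fun j => ι (M (e 0)) m * ι (u j) (n - m)) Filter.atTop
      (nhds (ι (M (e 0)) m * ι x (n - m))) :=
    (((hcoord (n-m)).tendsto x).comp hulim).const_mul _
  have heq : (fun j => ι (A (u j)) n) = fun j => ι (M (e 0)) m * ι (u j) (n - m) :=
    funext fun j => hAspan (u j) (humem j) n
  rw [heq] at h2
  exact tendsto_nhds_unique h2 h3
end
lemma shiftN {E : Type*} [NormedAddCommGroup E] [NormedSpace ℂ E] (ι : E →ₗ[ℂ] (ℤ → ℂ))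
    (hS : ∀ x : E, ∃ y : E, ∀ n : ℤ, ι y n = ι x (n - 1)) :
    ∀ j : ℕ, ∀ x : E, ∃ y : E, ∀ n : ℤ, ι y n = ι x (n - j) := by
  intro j
  induction j with
  | zero => intro x; exact ⟨x, fun n => by simp⟩
  | succ j ih =>
      intro x
      obtain ⟨y₁, hy₁⟩ := hS x
      obtain ⟨y, hy⟩ := ih y₁
      refine ⟨y, fun n => ?_⟩
      rw [hy n, hy₁ (n - j)]
      congr 1
      push_cast
      ring

lemma shiftN' {E : Type*} [NormedAddCommGroup E] [NormedSpace ℂ E] (ι : E →ₗ[ℂ] (ℤ → ℂ))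
    (hS : ∀ x : E, ∃ y : E, ∀ n : ℤ, ι y n = ι x (n + 1)) :
    ∀ j : ℕ, ∀ x : E, ∃ y : E, ∀ n : ℤ, ι y n = ι x (n + j) := by
  intro j
  induction j with
  | zero => intro x; exact ⟨x, fun n => by simp⟩
  | succ j ih =>
      intro x
      obtain ⟨y₁, hy₁⟩ := hS x
      obtain ⟨y, hy⟩ := ih y₁
      refine ⟨y, fun n => ?_⟩
      rw [hy n, hy₁ (n + j)]
      congr 1
      push_cast
      ring

/-- If `S` is bounded on `E` but `S⁻¹` is not, then every multiplier `M` satisfies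
`M̂(n) = 0` for `n < 0`; symmetrically, if `S⁻¹` is bounded but `S` is not, then
`M̂(n) = 0` for `n > 0`. -/
theorem stmt11
    {E : Type*} [NormedAddCommGroup E] [NormedSpace ℂ E] [CompleteSpace E]
    (ι : E →ₗ[ℂ] (ℤ → ℂ)) (hι : Function.Injective ι)
    (e : ℤ → E) (he : ∀ k : ℤ, ι (e k) = Pi.single k 1)
    (hdense : Dense (Submodule.span ℂ (Set.range e) : Set E))
    (hcoord : ∀ n : ℤ, Continuous fun x : E => ι x n)
    (Ψ : ℂ → E → E)
    (hΨ : ∀ z : ℂ, ‖z‖ = 1 → ∀ x : E, ∀ n : ℤ, ι (Ψ z x) n = ι x n * z ^ n)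
    (hΨbdd : ∃ C : ℝ, ∀ z : ℂ, ‖z‖ = 1 → ∀ x : E, ‖Ψ z x‖ ≤ C * ‖x‖)
    -- `M` is a multiplier on `E`:
    (M : E →L[ℂ] E)
    (hM : ∀ k n : ℤ, ι (M (e (k + 1))) n = ι (M (e k)) (n - 1)) :
    -- if `S` is bounded but `S⁻¹` is not bounded, then `M̂(n) = 0` for `n < 0`:
    ((∀ x : E, ∃ y : E, ∀ n : ℤ, ι y n = ι x (n - 1)) →
      (¬ ∀ x : E, ∃ y : E, ∀ n : ℤ, ι y n = ι x (n + 1)) →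
      ∀ n : ℤ, n < 0 → ι (M (e 0)) n = 0) ∧
    -- if `S⁻¹` is bounded but `S` is not bounded, then `M̂(n) = 0` for `n > 0`:
    ((∀ x : E, ∃ y : E, ∀ n : ℤ, ι y n = ι x (n + 1)) →
      (¬ ∀ x : E, ∃ y : E, ∀ n : ℤ, ι y n = ι x (n - 1)) →
      ∀ n : ℤ, 0 < n → ι (M (e 0)) n = 0) := by
  obtain ⟨C, hC⟩ := hΨbdd
  constructor
  · intro hS hS' n₀ hn₀
    by_contra hne
    apply hS'
    intro x
    obtain ⟨y₀, hy₀⟩ := key ι hι e he hdense hcoord Ψ hΨ hC M hM n₀ x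
    obtain ⟨y₁, hy₁⟩ := shiftN ι hS (-n₀-1).toNat y₀
    refine ⟨(ι (M (e 0)) n₀)⁻¹ • y₁, fun n => ?_⟩
    rw [_root_.map_smul, Pi.smul_apply, smul_eq_mul, hy₁ n,
      show (((-n₀-1).toNat : ℤ)) = -n₀ - 1 from Int.toNat_of_nonneg (by omega),
      hy₀ (n - (-n₀-1)),
      show n - (-n₀-1) - n₀ = n + 1 by ring,
      inv_mul_cancel_left₀ hne]
  · intro hS hS' n₀ hn₀
    by_contra hne
    apply hS'
    intro x
    obtain ⟨y₀, hy₀⟩ := key ι hι e he hdense hcoord Ψ hΨ hC M hM n₀ x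
    obtain ⟨y₁, hy₁⟩ := shiftN' ι hS (n₀-1).toNat y₀
    refine ⟨(ι (M (e 0)) n₀)⁻¹ • y₁, fun n => ?_⟩
    rw [_root_.map_smul, Pi.smul_apply, smul_eq_mul, hy₁ n,
      show (((n₀-1).toNat : ℤ)) = n₀ - 1 from Int.toNat_of_nonneg (by omega),
      hy₀ (n + (n₀-1)),
      show n + (n₀-1) - n₀ = n - 1 by ring,
      inv_mul_cancel_left₀ hne]
end

section
/- Assume S and S⁻¹ are both bounded on E. Let φ ∈ F(ℤ) be such that φ ∗ x ∈ E for every x ∈ E, and let M_φ : E → E be the (bounded) operator x ↦ φ ∗ x. Then |φ̃(z)| ≤ ‖M_φ‖ for every z ∈ ℂ with 1/ρ(S⁻¹) ≤ |z| ≤ ρ(S), where φ̃(z) = Σ_n φ(n) zⁿ (a finite sum). -/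
open scoped ENNReal Pointwise

/-- If `S` and `S⁻¹` are both bounded on `E`, `φ ∈ F(ℤ)` and the convolution operator
`M_φ : x ↦ φ ∗ x` maps `E` into `E` (hence is bounded), then
`|φ̃(z)| ≤ ‖M_φ‖` for every `z` with `1/ρ(S⁻¹) ≤ |z| ≤ ρ(S)`. -/
theorem stmt12
    {E : Type*} [NormedAddCommGroup E] [NormedSpace ℂ E] [CompleteSpace E]
    (ι : E →ₗ[ℂ] (ℤ → ℂ)) (hι : Function.Injective ι)
    (e : ℤ → E) (he : ∀ k : ℤ, ι (e k) = Pi.single k 1)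
    (hdense : Dense (Submodule.span ℂ (Set.range e) : Set E))
    (hcoord : ∀ n : ℤ, Continuous fun x : E => ι x n)
    (Ψ : ℂ → E → E)
    (hΨ : ∀ z : ℂ, ‖z‖ = 1 → ∀ x : E, ∀ n : ℤ, ι (Ψ z x) n = ι x n * z ^ n)
    (hΨbdd : ∃ C : ℝ, ∀ z : ℂ, ‖z‖ = 1 → ∀ x : E, ‖Ψ z x‖ ≤ C * ‖x‖)
    -- `S` and `S⁻¹` are both bounded, with restrictions `Sop` and `Top` to `E`:
    (Sop Top : E →L[ℂ] E)
    (hSop : ∀ x : E, ∀ n : ℤ, ι (Sop x) n = ι x (n - 1))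
    (hTop : ∀ x : E, ∀ n : ℤ, ι (Top x) n = ι x (n + 1))
    -- `φ` is a finite sequence and `M_φ` is the operator of convolution with `φ`:
    (φ : ℤ →₀ ℂ) (Mφ : E →L[ℂ] E)
    (hMφ : ∀ x : E, ∀ m : ℤ, ι (Mφ x) m = ∑ n ∈ φ.support, φ n * ι x (m - n)) :
    ∀ z : ℂ, (spectralRadius ℂ Top)⁻¹ ≤ (‖z‖₊ : ℝ≥0∞) →
      (‖z‖₊ : ℝ≥0∞) ≤ spectralRadius ℂ Sop →
      ‖∑ n ∈ φ.support, φ n * z ^ n‖ ≤ ‖Mφ‖ := by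
  classical
  intro z hz1 hz2
  -- E is nontrivial
  have he0 : e 0 ≠ 0 := by
    intro h
    have := congrFun (he 0) 0
    rw [h] at this
    simp at this
  haveI : Nontrivial E := ⟨e 0, 0, he0⟩
  haveI : Nontrivial (E →L[ℂ] E) := ⟨1, 0, by
    intro h
    have := congrFun (congrArg DFunLike.coe h) (e 0)
    simp at this
    exact he0 this⟩
  -- S and T are mutually inverse
  have hST : Sop * Top = 1 := by
    ext x
    apply hι
    funext n
    show ι (Sop (Top x)) n = ι x n
    rw [hSop, hTop]
    norm_num
  have hTS : Top * Sop = 1 := by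
    ext x
    apply hι
    funext n
    show ι (Top (Sop x)) n = ι x n
    rw [hTop, hSop]
    norm_num
  have hunitS : IsUnit Sop := ⟨⟨Sop, Top, hST, hTS⟩, rfl⟩
  -- coordinates of powers
  have hSpow : ∀ (k : ℕ) (x : E) (n : ℤ), ι ((Sop ^ k) x) n = ι x (n - k) := by
    intro k
    induction k with
    | zero => intro x n; simp
    | succ k ih =>
      intro x n
      rw [pow_succ']
      show ι (Sop ((Sop ^ k) x)) n = _
      rw [hSop, ih]
      congr 1
      push_cast
      ring
  have hTpow : ∀ (k : ℕ) (x : E) (n : ℤ), ι ((Top ^ k) x) n = ι x (n + k) := by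
    intro k
    induction k with
    | zero => intro x n; simp
    | succ k ih =>
      intro x n
      rw [pow_succ']
      show ι (Top ((Top ^ k) x)) n = _
      rw [hTop, ih]
      congr 1
      push_cast
      ring
  -- the multipliers Ψ_ω as continuous linear maps
  obtain ⟨C, hC⟩ := hΨbdd
  have mkPsi : ∀ ω : ℂ, ‖ω‖ = 1 → ∃ P : E →L[ℂ] E,
      ∀ x : E, ∀ n : ℤ, ι (P x) n = ι x n * ω ^ n := by
    intro ω hω
    refine ⟨LinearMap.mkContinuous
      { toFun := Ψ ω
        map_add' := ?_
        map_smul' := ?_ } C (hC ω hω), ?_⟩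
    · intro x y
      apply hι
      funext n
      rw [map_add]
      show ι (Ψ ω (x + y)) n = ι (Ψ ω x) n + ι (Ψ ω y) n
      rw [hΨ ω hω, hΨ ω hω, hΨ ω hω, map_add]
      show (ι x n + ι y n) * ω ^ n = _
      ring
    · intro c x
      apply hι
      funext n
      show ι (Ψ ω (c • x)) n = ι (c • Ψ ω x) n
      rw [hΨ ω hω, map_smul, map_smul]
      show (c • ι x) n * ω ^ n = (c • ι (Ψ ω x)) n
      rw [Pi.smul_apply, Pi.smul_apply, hΨ ω hω]
      simp only [smul_eq_mul]
      ring
    · intro x n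
      exact hΨ ω hω x n
  -- conjugation by Ψ_ω
  have hconjgen : ∀ ω : ℂ, ‖ω‖ = 1 → ∃ u : (E →L[ℂ] E)ˣ,
      (↑u * Sop * ↑u⁻¹ = ω • Sop) ∧ (↑u * Top * ↑u⁻¹ = ω⁻¹ • Top) := by
    intro ω hω
    have hω0 : ω ≠ 0 := by
      intro h; rw [h, norm_zero] at hω; norm_num at hω
    have hωinv : ‖ω⁻¹‖ = 1 := by rw [norm_inv, hω]; norm_num
    obtain ⟨P, hP⟩ := mkPsi ω hω
    obtain ⟨Q, hQ⟩ := mkPsi ω⁻¹ hωinv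
    have hPQ : P * Q = 1 := by
      ext x; apply hι; funext n
      show ι (P (Q x)) n = ι x n
      rw [hP, hQ, inv_zpow]
      have : (ω ^ n)⁻¹ * ω ^ n = 1 := inv_mul_cancel₀ (zpow_ne_zero n hω0)
      rw [mul_assoc, this, mul_one]
    have hQP : Q * P = 1 := by
      ext x; apply hι; funext n
      show ι (Q (P x)) n = ι x n
      rw [hQ, hP, inv_zpow]
      have : ω ^ n * (ω ^ n)⁻¹ = 1 := mul_inv_cancel₀ (zpow_ne_zero n hω0)
      rw [mul_assoc, this, mul_one]
    refine ⟨⟨P, Q, hPQ, hQP⟩, ?_, ?_⟩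
    · show P * Sop * Q = ω • Sop
      have h1 : P * Sop = ω • (Sop * P) := by
        ext x; apply hι; funext n
        have e1 : ι ((P * Sop) x) n = ι x (n - 1) * ω ^ n := by
          show ι (P (Sop x)) n = _
          rw [hP, hSop]
        have e2 : ι ((ω • (Sop * P)) x) n = ω * (ι x (n - 1) * ω ^ (n - 1)) := by
          show ι (ω • (Sop (P x))) n = _
          rw [map_smul]
          show ω * ι (Sop (P x)) n = _
          rw [hSop, hP]
        rw [e1, e2, zpow_sub_one₀ hω0]
        field_simp
      rw [h1, smul_mul_assoc, mul_assoc, hPQ, mul_one]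
    · show P * Top * Q = ω⁻¹ • Top
      have h1 : P * Top = ω⁻¹ • (Top * P) := by
        ext x; apply hι; funext n
        have e1 : ι ((P * Top) x) n = ι x (n + 1) * ω ^ n := by
          show ι (P (Top x)) n = _
          rw [hP, hTop]
        have e2 : ι ((ω⁻¹ • (Top * P)) x) n = ω⁻¹ * (ι x (n + 1) * ω ^ (n + 1)) := by
          show ι (ω⁻¹ • (Top (P x))) n = _
          rw [map_smul]
          show ω⁻¹ * ι (Top (P x)) n = _
          rw [hTop, hP]
        rw [e1, e2, zpow_add_one₀ hω0]
        field_simp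
      rw [h1, smul_mul_assoc, mul_assoc, hPQ, mul_one]
  -- rotation invariance of the spectra
  have hrotS : ∀ ω : ℂ, ‖ω‖ = 1 → ∀ w ∈ spectrum ℂ Sop, ω * w ∈ spectrum ℂ Sop := by
    intro ω hω w hw
    have hω0 : ω ≠ 0 := by
      intro h; rw [h, norm_zero] at hω; norm_num at hω
    obtain ⟨u, hu, -⟩ := hconjgen ω hω
    have hmem : ω * w ∈ (Units.mk0 ω hω0) • spectrum ℂ Sop := ⟨w, hw, rfl⟩
    rw [← spectrum.unit_smul_eq_smul Sop (Units.mk0 ω hω0)] at hmem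
    have heq : (Units.mk0 ω hω0) • Sop = ω • Sop := rfl
    rw [heq, ← hu, spectrum.units_conjugate] at hmem
    exact hmem
  have hrotT : ∀ ω : ℂ, ‖ω‖ = 1 → ∀ w ∈ spectrum ℂ Top, ω * w ∈ spectrum ℂ Top := by
    intro ω hω w hw
    have hω0 : ω ≠ 0 := by
      intro h; rw [h, norm_zero] at hω; norm_num at hω
    have hωinv : ‖ω⁻¹‖ = 1 := by rw [norm_inv, hω]; norm_num
    obtain ⟨u, -, hu⟩ := hconjgen ω⁻¹ hωinv
    rw [inv_inv] at hu
    have hmem : ω * w ∈ (Units.mk0 ω hω0) • spectrum ℂ Top := ⟨w, hw, rfl⟩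
    rw [← spectrum.unit_smul_eq_smul Top (Units.mk0 ω hω0)] at hmem
    have heq : (Units.mk0 ω hω0) • Top = ω • Top := rfl
    rw [heq, ← hu, spectrum.units_conjugate] at hmem
    exact hmem
  -- circles of maximal radius lie in the spectrum
  have hcircleS : ∀ w : ℂ, w ≠ 0 → (‖w‖₊ : ℝ≥0∞) = spectralRadius ℂ Sop →
      w ∈ spectrum ℂ Sop := by
    intro w hw0 hw
    obtain ⟨z₀, hz₀mem, hz₀⟩ := spectrum.exists_nnnorm_eq_spectralRadius Sop
    have hz₀0 : z₀ ≠ 0 := by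
      rintro rfl
      rw [← hz₀] at hw
      have : ‖w‖₊ = ‖(0 : ℂ)‖₊ := by exact_mod_cast hw
      simp at this
      exact hw0 this
    have hnorm : ‖w‖ = ‖z₀‖ := by
      have h2 : ‖w‖₊ = ‖z₀‖₊ := by exact_mod_cast hw.trans hz₀.symm
      rw [← coe_nnnorm, ← coe_nnnorm, h2]
    have hω : ‖w / z₀‖ = 1 := by
      rw [norm_div, hnorm, div_self (norm_ne_zero_iff.mpr hz₀0)]
    have := hrotS (w / z₀) hω z₀ hz₀mem
    rwa [div_mul_cancel₀ w hz₀0] at this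
  have hcircleT : ∀ w : ℂ, w ≠ 0 → (‖w‖₊ : ℝ≥0∞) = spectralRadius ℂ Top →
      w ∈ spectrum ℂ Top := by
    intro w hw0 hw
    obtain ⟨z₀, hz₀mem, hz₀⟩ := spectrum.exists_nnnorm_eq_spectralRadius Top
    have hz₀0 : z₀ ≠ 0 := by
      rintro rfl
      rw [← hz₀] at hw
      have : ‖w‖₊ = ‖(0 : ℂ)‖₊ := by exact_mod_cast hw
      simp at this
      exact hw0 this
    have hnorm : ‖w‖ = ‖z₀‖ := by
      have h2 : ‖w‖₊ = ‖z₀‖₊ := by exact_mod_cast hw.trans hz₀.symm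
      rw [← coe_nnnorm, ← coe_nnnorm, h2]
    have hω : ‖w / z₀‖ = 1 := by
      rw [norm_div, hnorm, div_self (norm_ne_zero_iff.mpr hz₀0)]
    have := hrotT (w / z₀) hω z₀ hz₀mem
    rwa [div_mul_cancel₀ w hz₀0] at this
  -- spectral mapping
  have hmain : ∀ w : ℂ, w ≠ 0 → w ∈ spectrum ℂ Sop →
      (∑ n ∈ φ.support, φ n * w ^ n) ∈ spectrum ℂ Mφ := by
    intro w hw0 hw
    set N : ℕ := φ.support.sup (fun n => n.natAbs) with hN
    have hNn : ∀ n ∈ φ.support, (0 : ℤ) ≤ n + N := by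
      intro n hn
      have : n.natAbs ≤ N := Finset.le_sup (f := fun n => n.natAbs) hn
      omega
    set p : Polynomial ℂ := ∑ n ∈ φ.support, Polynomial.C (φ n) * Polynomial.X ^ (n + N).toNat
      with hp
    have haeval : ∀ x : E, ∀ j : ℤ, ι ((Polynomial.aeval Sop p) x) j
        = ∑ n ∈ φ.support, φ n * ι x (j - (n + N)) := by
      intro x j
      rw [hp, map_sum, ContinuousLinearMap.sum_apply, map_sum, Finset.sum_apply]
      apply Finset.sum_congr rfl
      intro n hn
      rw [map_mul, Polynomial.aeval_C, Polynomial.aeval_X_pow, ← Algebra.smul_def,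
        ContinuousLinearMap.smul_apply, map_smul]
      show φ n * ι ((Sop ^ (n + N).toNat) x) j = _
      rw [hSpow, Int.toNat_of_nonneg (hNn n hn)]
    have hfact : Mφ = Top ^ N * (Polynomial.aeval Sop p) := by
      ext x; apply hι; funext m
      rw [hMφ]
      show _ = ι ((Top ^ N) ((Polynomial.aeval Sop p) x)) m
      rw [hTpow, haeval]
      apply Finset.sum_congr rfl
      intro n hn
      congr 1
      ring
    have hpw : Polynomial.eval w p = (∑ n ∈ φ.support, φ n * w ^ n) * w ^ N := by
      rw [hp]
      simp only [Polynomial.eval_finset_sum, Polynomial.eval_mul, Polynomial.eval_C,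
        Polynomial.eval_pow, Polynomial.eval_X, Finset.sum_mul]
      apply Finset.sum_congr rfl
      intro n hn
      rw [mul_assoc]
      congr 1
      rw [← zpow_natCast w ((n + N).toNat), Int.toNat_of_nonneg (hNn n hn),
        zpow_add₀ hw0, zpow_natCast]
    have hcommST : Commute Sop Top := hST.trans hTS.symm
    have hSTN : Sop ^ N * Top ^ N = 1 := by
      have h := hcommST.mul_pow N
      rw [hST, one_pow] at h
      exact h.symm
    rw [spectrum.mem_iff]
    intro hu
    set q : Polynomial ℂ := Polynomial.C (Polynomial.eval w p) * Polynomial.X ^ N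
      - Polynomial.C (w ^ N) * p with hq
    have hroot : Polynomial.IsRoot q w := by
      simp only [hq, Polynomial.IsRoot.def, Polynomial.eval_sub, Polynomial.eval_mul,
        Polynomial.eval_C, Polynomial.eval_pow, Polynomial.eval_X]
      ring
    obtain ⟨r, hr⟩ := Polynomial.dvd_iff_isRoot.mpr hroot
    have happ : Polynomial.aeval Sop q
        = (Sop - algebraMap ℂ (E →L[ℂ] E) w) * Polynomial.aeval Sop r := by
      rw [hr, map_mul, map_sub, Polynomial.aeval_X, Polynomial.aeval_C]
    have key : (w ^ N) • (Sop ^ N *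
        (algebraMap ℂ (E →L[ℂ] E) (∑ n ∈ φ.support, φ n * w ^ n) - Mφ))
        = (Sop - algebraMap ℂ (E →L[ℂ] E) w) * Polynomial.aeval Sop r := by
      rw [← happ, hq, map_sub, map_mul, map_mul, Polynomial.aeval_C, Polynomial.aeval_C,
        Polynomial.aeval_X_pow]
      rw [mul_sub, smul_sub]
      congr 1
      · rw [← Algebra.commutes, ← Algebra.smul_def, smul_smul, ← Algebra.smul_def, hpw]
        congr 1
        ring
      · rw [hfact, ← mul_assoc, hSTN, one_mul, ← Algebra.smul_def]
    have hunit : IsUnit ((Sop - algebraMap ℂ (E →L[ℂ] E) w) * Polynomial.aeval Sop r) := by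
      rw [← key, Algebra.smul_def]
      exact ((isUnit_iff_ne_zero.mpr (pow_ne_zero N hw0)).map
        (algebraMap ℂ (E →L[ℂ] E))).mul ((hunitS.pow N).mul hu)
    have hcomm2 : Commute (Sop - algebraMap ℂ (E →L[ℂ] E) w) (Polynomial.aeval Sop r) := by
      have h := (Commute.all (Polynomial.X - Polynomial.C w) r).map (Polynomial.aeval Sop)
      simpa [map_sub] using h
    have hSunit' : IsUnit (Sop - algebraMap ℂ (E →L[ℂ] E) w) :=
      (hcomm2.isUnit_mul_iff.mp hunit).1
    have hSunit'' : IsUnit (algebraMap ℂ (E →L[ℂ] E) w - Sop) := by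
      have := hSunit'.neg
      rwa [neg_sub] at this
    exact spectrum.mem_iff.mp hw hSunit''
  have hbound : ∀ w : ℂ, w ≠ 0 → w ∈ spectrum ℂ Sop →
      ‖∑ n ∈ φ.support, φ n * w ^ n‖ ≤ ‖Mφ‖ := fun w hw0 hw =>
    spectrum.norm_le_norm_of_mem (hmain w hw0 hw)
  -- numerics
  have hρS_ne_top : spectralRadius ℂ Sop ≠ ⊤ :=
    ne_top_of_le_ne_top ENNReal.coe_ne_top (spectrum.spectralRadius_le_nnnorm (𝕜 := ℂ) Sop)
  have hρT_ne_top : spectralRadius ℂ Top ≠ ⊤ :=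
    ne_top_of_le_ne_top ENNReal.coe_ne_top (spectrum.spectralRadius_le_nnnorm (𝕜 := ℂ) Top)
  have hρT_ne_zero : spectralRadius ℂ Top ≠ 0 := by
    intro h
    rw [h, ENNReal.inv_zero, top_le_iff] at hz1
    exact ENNReal.coe_ne_top hz1
  have hz0 : z ≠ 0 := by
    rintro rfl
    simp only [nnnorm_zero, ENNReal.coe_zero, nonpos_iff_eq_zero, ENNReal.inv_eq_zero] at hz1
    exact hρT_ne_top hz1
  have hρS_ne_zero : spectralRadius ℂ Sop ≠ 0 := by
    intro h
    rw [h, nonpos_iff_eq_zero, ENNReal.coe_eq_zero, nnnorm_eq_zero] at hz2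
    exact hz0 hz2
  set r₁ : ℝ := ((spectralRadius ℂ Top).toReal)⁻¹ with hr₁
  set r₂ : ℝ := (spectralRadius ℂ Sop).toReal with hr₂
  have hρT_pos : 0 < (spectralRadius ℂ Top).toReal :=
    ENNReal.toReal_pos hρT_ne_zero hρT_ne_top
  have hr₁_pos : 0 < r₁ := by positivity
  have hr₂_pos : 0 < r₂ := ENNReal.toReal_pos hρS_ne_zero hρS_ne_top
  have hzr₁ : r₁ ≤ ‖z‖ := by
    have h : ((spectralRadius ℂ Top)⁻¹).toReal ≤ ((‖z‖₊ : ℝ≥0∞)).toReal :=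
      ENNReal.toReal_mono ENNReal.coe_ne_top hz1
    rwa [ENNReal.toReal_inv, ENNReal.coe_toReal, coe_nnnorm] at h
  have hzr₂ : ‖z‖ ≤ r₂ := by
    have h : ((‖z‖₊ : ℝ≥0∞)).toReal ≤ (spectralRadius ℂ Sop).toReal :=
      ENNReal.toReal_mono hρS_ne_top hz2
    rwa [ENNReal.coe_toReal, coe_nnnorm] at h
  -- boundary estimates
  have hfront : ∀ w : ℂ, (‖w‖ = r₁ ∨ ‖w‖ = r₂) →
      ‖∑ n ∈ φ.support, φ n * w ^ n‖ ≤ ‖Mφ‖ := by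
    rintro w (hwn | hwn)
    · have hw0 : w ≠ 0 := by
        intro h; rw [h, norm_zero] at hwn; exact hr₁_pos.ne hwn
      have hwi : w⁻¹ ∈ spectrum ℂ Top := by
        apply hcircleT _ (inv_ne_zero hw0)
        have hni : ‖w⁻¹‖ = (spectralRadius ℂ Top).toReal := by
          rw [norm_inv, hwn, hr₁, inv_inv]
        rw [← enorm_eq_nnnorm, ← ofReal_norm, hni, ENNReal.ofReal_toReal hρT_ne_top]
      have hws : w ∈ spectrum ℂ Sop := by
        have hu : (↑(Units.mk0 w hw0)⁻¹ : ℂ) ∈ spectrum ℂ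
            ((↑(⟨Sop, Top, hST, hTS⟩ : (E →L[ℂ] E)ˣ)⁻¹ : (E →L[ℂ] E))) := hwi
        exact spectrum.inv_mem_iff.mpr hu
      exact hbound w hw0 hws
    · have hw0 : w ≠ 0 := by
        intro h; rw [h, norm_zero] at hwn; exact hr₂_pos.ne hwn
      refine hbound w hw0 (hcircleS w hw0 ?_)
      rw [← enorm_eq_nnnorm, ← ofReal_norm, hwn, hr₂, ENNReal.ofReal_toReal hρS_ne_top]
  -- maximum modulus principle
  by_cases h1 : ‖z‖ = r₁
  · exact hfront z (Or.inl h1)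
  by_cases h2 : ‖z‖ = r₂
  · exact hfront z (Or.inr h2)
  have hz1' : r₁ < ‖z‖ := lt_of_le_of_ne hzr₁ (Ne.symm h1)
  have hz2' : ‖z‖ < r₂ := lt_of_le_of_ne hzr₂ h2
  set f : ℂ → ℂ := fun w => ∑ n ∈ φ.support, φ n * w ^ n with hf
  have hdiff : ∀ w : ℂ, w ≠ 0 → DifferentiableAt ℂ f w := by
    intro w hw
    apply DifferentiableAt.fun_sum
    intro n _
    exact (differentiableAt_zpow.mpr (Or.inl hw)).const_mul _
  set U : Set ℂ := Metric.ball (0 : ℂ) r₂ ∩ (Metric.closedBall (0 : ℂ) r₁)ᶜ with hU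
  have hzU : z ∈ U := by
    constructor
    · rwa [Metric.mem_ball, dist_zero_right]
    · rw [Set.mem_compl_iff, Metric.mem_closedBall, dist_zero_right]
      exact not_le.mpr hz1'
  have hUsub : closure U ⊆ (Metric.ball (0 : ℂ) r₁)ᶜ := by
    apply closure_minimal _ Metric.isOpen_ball.isClosed_compl
    intro u hu
    rw [Set.mem_compl_iff, Metric.mem_ball, dist_zero_right]
    intro habs
    exact hu.2 (by rw [Metric.mem_closedBall, dist_zero_right]; exact habs.le)
  have hUne : ∀ w ∈ closure U, w ≠ 0 := by
    intro w hw
    have := hUsub hw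
    rw [Set.mem_compl_iff, Metric.mem_ball, dist_zero_right, not_lt] at this
    intro h
    rw [h, norm_zero] at this
    exact absurd this (not_le.mpr hr₁_pos)
  have hbd : Bornology.IsBounded U := Metric.isBounded_ball.subset Set.inter_subset_left
  have hdc : DiffContOnCl ℂ f U :=
    ⟨fun w hw => (hdiff w (hUne w (subset_closure hw))).differentiableWithinAt,
     fun w hw => (hdiff w (hUne w hw)).continuousAt.continuousWithinAt⟩
  have hfrontU : ∀ w ∈ frontier U, ‖f w‖ ≤ ‖Mφ‖ := by
    intro w hw
    have h := frontier_inter_subset (Metric.ball (0 : ℂ) r₂)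
      (Metric.closedBall (0 : ℂ) r₁)ᶜ hw
    rcases h with ⟨h', -⟩ | ⟨-, h'⟩
    · rw [frontier_ball (0 : ℂ) hr₂_pos.ne'] at h'
      rw [Metric.mem_sphere, dist_zero_right] at h'
      exact hfront w (Or.inr h')
    · rw [frontier_compl, frontier_closedBall (0 : ℂ) hr₁_pos.ne'] at h'
      rw [Metric.mem_sphere, dist_zero_right] at h'
      exact hfront w (Or.inl h')
  exact Complex.norm_le_of_forall_mem_frontier_norm_le hbd hdc hfrontU (subset_closure hzU)
end

section
/- Assume S is not bounded but S⁻¹ is bounded on E. Let φ ∈ F(ℤ) with φ(n) = 0 for all n > 0 be such that φ ∗ x ∈ E for every x ∈ E, and let M_φ : E → E be the (bounded) operator x ↦ φ ∗ x. Then |φ̃(z)| ≤ ‖M_φ‖ for every z ∈ ℂ with |z| ≥ 1/ρ(S⁻¹), where φ̃(z) = Σ_n φ(n) zⁿ (a finite sum). -/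
open scoped ENNReal

/-- If `S` is not bounded but `S⁻¹` is bounded on `E`, `φ ∈ F(ℤ⁻)` and the
convolution operator `M_φ : x ↦ φ ∗ x` maps `E` into `E` (hence is bounded), then
`|φ̃(z)| ≤ ‖M_φ‖` for every `z` with `|z| ≥ 1/ρ(S⁻¹)`. -/
theorem stmt13
    {E : Type*} [NormedAddCommGroup E] [NormedSpace ℂ E] [CompleteSpace E]
    (ι : E →ₗ[ℂ] (ℤ → ℂ)) (hι : Function.Injective ι)
    (e : ℤ → E) (he : ∀ k : ℤ, ι (e k) = Pi.single k 1)
    (hdense : Dense (Submodule.span ℂ (Set.range e) : Set E))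
    (hcoord : ∀ n : ℤ, Continuous fun x : E => ι x n)
    (Ψ : ℂ → E → E)
    (hΨ : ∀ z : ℂ, ‖z‖ = 1 → ∀ x : E, ∀ n : ℤ, ι (Ψ z x) n = ι x n * z ^ n)
    (hΨbdd : ∃ C : ℝ, ∀ z : ℂ, ‖z‖ = 1 → ∀ x : E, ‖Ψ z x‖ ≤ C * ‖x‖)
    -- `S` is not bounded:
    (hSnb : ¬ ∀ x : E, ∃ y : E, ∀ n : ℤ, ι y n = ι x (n - 1))
    -- `S⁻¹` is bounded, with restriction `Top` to `E`:
    (Top : E →L[ℂ] E)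
    (hTop : ∀ x : E, ∀ n : ℤ, ι (Top x) n = ι x (n + 1))
    -- `φ` is a finite sequence supported in `ℤ⁻`, `M_φ` the convolution operator:
    (φ : ℤ →₀ ℂ) (hφ : ∀ n : ℤ, 0 < n → φ n = 0)
    (Mφ : E →L[ℂ] E)
    (hMφ : ∀ x : E, ∀ m : ℤ, ι (Mφ x) m = ∑ n ∈ φ.support, φ n * ι x (m - n)) :
    ∀ z : ℂ, (spectralRadius ℂ Top)⁻¹ ≤ (‖z‖₊ : ℝ≥0∞) →
      ‖∑ n ∈ φ.support, φ n * z ^ n‖ ≤ ‖Mφ‖ := by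
  -- E is nontrivial
  have hE : Nontrivial E := by
    refine nontrivial_of_ne (e 0) 0 fun h => ?_
    have h1 : ι (e 0) 0 = (1 : ℂ) := by rw [he 0]; simp
    rw [h] at h1; simp at h1
  haveI := hE
  -- the Ψ maps as continuous linear maps
  obtain ⟨C, hC⟩ := hΨbdd
  have mk : ∀ w : ℂ, ‖w‖ = 1 → ∃ ψ : E →L[ℂ] E, ∀ x n, ι (ψ x) n = ι x n * w ^ n := by
    intro w hw
    refine ⟨LinearMap.mkContinuous
      { toFun := Ψ w
        map_add' := fun x y => hι ?_
        map_smul' := fun c x => hι ?_ } C (fun x => hC w hw x), fun x n => hΨ w hw x n⟩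
    · funext n
      simp [hΨ w hw, map_add, add_mul]
    · funext n
      simp [hΨ w hw, map_smul, mul_assoc]
  -- rotation invariance of the spectrum
  have key : ∀ u ∈ spectrum ℂ Top, ∀ w : ℂ, ‖w‖ = 1 → w * u ∈ spectrum ℂ Top := by
    intro u hu w hw
    have hw0 : w ≠ 0 := by intro h; rw [h] at hw; simp at hw
    have hwinv : ‖w⁻¹‖ = 1 := by rw [norm_inv, hw]; norm_num
    obtain ⟨ψ1, hψ1⟩ := mk w hw
    obtain ⟨ψ2, hψ2⟩ := mk w⁻¹ hwinv
    have hcomp12 : ψ1 * ψ2 = 1 := by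
      ext x
      apply hι; funext n
      simp only [ContinuousLinearMap.mul_apply, ContinuousLinearMap.one_apply, hψ1, hψ2]
      rw [mul_assoc, ← mul_zpow, inv_mul_cancel₀ hw0, one_zpow, mul_one]
    have hcomp21 : ψ2 * ψ1 = 1 := by
      ext x
      apply hι; funext n
      simp only [ContinuousLinearMap.mul_apply, ContinuousLinearMap.one_apply, hψ1, hψ2]
      rw [mul_assoc, ← mul_zpow, mul_inv_cancel₀ hw0, one_zpow, mul_one]
    set U : (E →L[ℂ] E)ˣ := ⟨ψ1, ψ2, hcomp12, hcomp21⟩ with hU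
    have hconj : Top = ↑U * (w • Top) * ↑U⁻¹ := by
      ext x
      apply hι; funext n
      have hUinv : (↑U⁻¹ : E →L[ℂ] E) = ψ2 := rfl
      simp only [ContinuousLinearMap.mul_apply, hUinv, hU]
      rw [ContinuousLinearMap.smul_apply, map_smul]
      rw [show (Units.val (⟨ψ1, ψ2, hcomp12, hcomp21⟩ : (E →L[ℂ] E)ˣ)⁻¹ : E →L[ℂ] E) = ψ2 from rfl]
      rw [show ι ((w • ψ1 (Top (ψ2 x)))) n = w * ι (ψ1 (Top (ψ2 x))) n by simp]
      simp only [hTop, hψ1, hψ2, inv_zpow]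
      have hzp : w ^ (n+1) ≠ 0 := zpow_ne_zero _ hw0
      field_simp
      rw [zpow_add₀ hw0, zpow_one]
      ring
    rw [hconj, spectrum.units_conjugate]
    have : (Units.mk0 w hw0) • u ∈ spectrum ℂ ((Units.mk0 w hw0) • Top) :=
      spectrum.smul_mem_smul_iff.mpr hu
    simpa [Units.smul_def] using this
  intro z hz
  -- basic facts about the spectral radius
  have hρ_ne_top : spectralRadius ℂ Top ≠ ⊤ :=
    ((spectrum.spectralRadius_le_nnnorm Top).trans_lt ENNReal.coe_lt_top).ne
  have hρ0 : spectralRadius ℂ Top ≠ 0 := by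
    intro h
    rw [h, ENNReal.inv_zero, top_le_iff] at hz
    exact ENNReal.coe_ne_top hz
  set r : NNReal := (spectralRadius ℂ Top).toNNReal with hrdef
  have hr : (r : ℝ≥0∞) = spectralRadius ℂ Top := ENNReal.coe_toNNReal hρ_ne_top
  have hr0 : r ≠ 0 := by
    intro h; apply hρ0; rw [← hr, h]; rfl
  have hrpos : (0:ℝ) < r := by positivity
  -- z is nonzero and ‖z⁻¹‖ ≤ r
  have hzle : r⁻¹ ≤ ‖z‖₊ := by
    rw [← ENNReal.coe_le_coe, ENNReal.coe_inv hr0, hr]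
    exact hz
  have hz0 : z ≠ 0 := by
    intro h
    rw [h] at hzle
    simp at hzle
    exact hr0 (by simpa using hzle)
  have hzinv : ‖z⁻¹‖ ≤ (r : ℝ) := by
    rw [norm_inv]
    have h1 : (r : ℝ)⁻¹ ≤ ‖z‖ := by exact_mod_cast hzle
    have h2 : (0:ℝ) < ‖z‖ := norm_pos_iff.mpr hz0
    rw [inv_le_comm₀ h2 hrpos] at *
    · exact h1
  -- the sphere of radius r is in the spectrum
  obtain ⟨u₀, hu₀mem, hu₀⟩ := spectrum.exists_nnnorm_eq_spectralRadius (a := Top)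
  have hu₀norm : ‖u₀‖ = (r : ℝ) := by
    have h1 : (‖u₀‖₊ : ℝ≥0∞) = (r : ℝ≥0∞) := by rw [hu₀, hr]
    have h2 : ‖u₀‖₊ = r := by exact_mod_cast h1
    simpa [coe_nnnorm] using congrArg NNReal.toReal h2
  have hu₀0 : u₀ ≠ 0 := by
    intro h; rw [h] at hu₀norm; simp at hu₀norm; exact hrpos.ne' hu₀norm.symm
  have hsphere : ∀ v : ℂ, ‖v‖ = (r : ℝ) → v ∈ spectrum ℂ Top := by
    intro v hv
    have hwnorm : ‖v / u₀‖ = 1 := by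
      rw [norm_div, hv, hu₀norm, div_self hrpos.ne']
    have := key u₀ hu₀mem (v / u₀) hwnorm
    rwa [div_mul_cancel₀ v hu₀0] at this
  -- the polynomial p
  set p : Polynomial ℂ := ∑ n ∈ φ.support, Polynomial.C (φ n) * Polynomial.X ^ (-n).toNat
    with hpdef
  have hsupp : ∀ n ∈ φ.support, n ≤ 0 := fun n hn =>
    le_of_not_gt fun h => (Finsupp.mem_support_iff.mp hn) (hφ n h)
  -- Top powers
  have hTopPow : ∀ (k : ℕ) (x : E) (m : ℤ), ι ((Top ^ k) x) m = ι x (m + k) := by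
    intro k
    induction k with
    | zero => intro x m; simp
    | succ k ih =>
      intro x m
      rw [pow_succ, ContinuousLinearMap.mul_apply]
      rw [ih (Top x) m, hTop]
      push_cast; ring_nf
  -- Mφ = p(Top)
  have hp : Mφ = Polynomial.aeval Top p := by
    ext x
    apply hι; funext m
    have h1 : (Polynomial.aeval Top p) x = ∑ n ∈ φ.support, φ n • ((Top ^ (-n).toNat) x) := by
      simp only [hpdef, map_sum, ContinuousLinearMap.sum_apply]
      refine Finset.sum_congr rfl fun n _ => ?_
      simp [Polynomial.aeval_C, Algebra.algebraMap_eq_smul_one]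
    rw [h1, map_sum, Finset.sum_apply, hMφ x m]
    refine Finset.sum_congr rfl fun n hn => ?_
    rw [show ι (φ n • (Top ^ (-n).toNat) x) m = φ n * ι ((Top ^ (-n).toNat) x) m by simp]
    rw [hTopPow, Int.toNat_of_nonneg (neg_nonneg.mpr (hsupp n hn))]
    ring_nf
  -- spectral mapping: points on the sphere
  have hbound : ∀ v : ℂ, ‖v‖ = (r : ℝ) → ‖p.eval v‖ ≤ ‖Mφ‖ := by
    intro v hv
    have hmem : p.eval v ∈ spectrum ℂ (Polynomial.aeval Top p) :=
      spectrum.subset_polynomial_aeval Top p ⟨v, hsphere v hv, rfl⟩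
    rw [← hp] at hmem
    exact spectrum.norm_le_norm_of_mem hmem
  -- maximum modulus
  have hmax : ‖p.eval z⁻¹‖ ≤ ‖Mφ‖ := by
    have hball : z⁻¹ ∈ closure (Metric.ball (0:ℂ) (r:ℝ)) := by
      rw [closure_ball 0 hrpos.ne']
      simpa [Metric.mem_closedBall, dist_zero_right] using hzinv
    refine Complex.norm_le_of_forall_mem_frontier_norm_le Metric.isBounded_ball
      (p.differentiable.diffContOnCl) ?_ hball
    intro v hv
    rw [frontier_ball 0 hrpos.ne'] at hv
    have : ‖v‖ = (r : ℝ) := by simpa [mem_sphere_iff_norm] using hv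
    exact hbound v this
  -- rewrite the sum as p.eval z⁻¹
  have heval : Polynomial.eval z⁻¹ p = ∑ n ∈ φ.support, φ n * z ^ n := by
    simp only [hpdef, Polynomial.eval_finset_sum, Polynomial.eval_mul, Polynomial.eval_C,
      Polynomial.eval_pow, Polynomial.eval_X]
    refine Finset.sum_congr rfl fun n hn => ?_
    congr 1
    rw [← zpow_natCast, Int.toNat_of_nonneg (neg_nonneg.mpr (hsupp n hn)),
      zpow_neg, inv_zpow, inv_inv]
  rw [← heval]
  exact hmax
end

section
/- Assume S is bounded but S⁻¹ is not bounded on E. Let φ ∈ F(ℤ) with φ(n) = 0 for all n < 0 be such that φ ∗ x ∈ E for every x ∈ E, and let M_φ : E → E be the (bounded) operator x ↦ φ ∗ x. Then |φ̃(z)| ≤ ‖M_φ‖ for every z ∈ ℂ with |z| ≤ ρ(S), where φ̃(z) = Σ_n φ(n) zⁿ (a finite sum, i.e. a polynomial in z). -/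
open scoped ENNReal
open Pointwise

/-- If `S` is bounded but `S⁻¹` is not bounded on `E`, `φ ∈ F(ℤ⁺)` and the
convolution operator `M_φ : x ↦ φ ∗ x` maps `E` into `E` (hence is bounded), then
`|φ̃(z)| ≤ ‖M_φ‖` for every `z` with `|z| ≤ ρ(S)`. -/
theorem stmt14
    {E : Type*} [NormedAddCommGroup E] [NormedSpace ℂ E] [CompleteSpace E]
    (ι : E →ₗ[ℂ] (ℤ → ℂ)) (hι : Function.Injective ι)
    (e : ℤ → E) (he : ∀ k : ℤ, ι (e k) = Pi.single k 1)
    (hdense : Dense (Submodule.span ℂ (Set.range e) : Set E))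
    (hcoord : ∀ n : ℤ, Continuous fun x : E => ι x n)
    (Ψ : ℂ → E → E)
    (hΨ : ∀ z : ℂ, ‖z‖ = 1 → ∀ x : E, ∀ n : ℤ, ι (Ψ z x) n = ι x n * z ^ n)
    (hΨbdd : ∃ C : ℝ, ∀ z : ℂ, ‖z‖ = 1 → ∀ x : E, ‖Ψ z x‖ ≤ C * ‖x‖)
    -- `S` is bounded, with restriction `Sop` to `E`:
    (Sop : E →L[ℂ] E)
    (hSop : ∀ x : E, ∀ n : ℤ, ι (Sop x) n = ι x (n - 1))
    -- `S⁻¹` is not bounded: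
    (hTnb : ¬ ∀ x : E, ∃ y : E, ∀ n : ℤ, ι y n = ι x (n + 1))
    -- `φ` is a finite sequence supported in `ℤ⁺`, `M_φ` the convolution operator:
    (φ : ℤ →₀ ℂ) (hφ : ∀ n : ℤ, n < 0 → φ n = 0)
    (Mφ : E →L[ℂ] E)
    (hMφ : ∀ x : E, ∀ m : ℤ, ι (Mφ x) m = ∑ n ∈ φ.support, φ n * ι x (m - n)) :
    ∀ z : ℂ, (‖z‖₊ : ℝ≥0∞) ≤ spectralRadius ℂ Sop →
      ‖∑ n ∈ φ.support, φ n * z ^ n‖ ≤ ‖Mφ‖ := by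
  classical
  have hE : Nontrivial E := by
    refine ⟨e 0, 0, fun h => ?_⟩
    have h1 := congrFun (he 0) 0
    rw [h, map_zero] at h1
    simp at h1
  -- coordinates of powers of Sop
  have hpow : ∀ (m : ℕ) (x : E) (n : ℤ), ι ((Sop ^ m) x) n = ι x (n - m) := by
    intro m
    induction m with
    | zero => intro x n; simp
    | succ m ih =>
      intro x n
      have : (Sop ^ (m + 1)) x = (Sop ^ m) (Sop x) := by
        rw [pow_succ]; rfl
      rw [this, ih, hSop]
      push_cast
      ring_nf
  -- support of φ is nonnegative
  have hsupp : ∀ n ∈ φ.support, (0 : ℤ) ≤ n := by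
    intro n hn
    by_contra h
    exact Finsupp.mem_support_iff.mp hn (hφ n (lt_of_not_ge h))
  -- the polynomial
  set P : Polynomial ℂ := ∑ n ∈ φ.support, Polynomial.C (φ n) * Polynomial.X ^ n.toNat with hP
  have hPeval : ∀ w : ℂ, P.eval w = ∑ n ∈ φ.support, φ n * w ^ n.toNat := by
    intro w
    rw [hP, Polynomial.eval_finset_sum]
    simp
  -- Mφ = aeval Sop P
  have haeval : Polynomial.aeval Sop P = ∑ n ∈ φ.support, φ n • Sop ^ n.toNat := by
    rw [hP, map_sum]
    refine Finset.sum_congr rfl fun n _ => ?_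
    rw [map_mul, map_pow, Polynomial.aeval_C, Polynomial.aeval_X, Algebra.smul_def]
  have key : Mφ = Polynomial.aeval Sop P := by
    apply ContinuousLinearMap.ext_on hdense
    rintro _ ⟨k, rfl⟩
    apply hι
    funext m
    rw [hMφ, haeval]
    simp only [ContinuousLinearMap.sum_apply, ContinuousLinearMap.smul_apply, map_sum,
      map_smul, Finset.sum_apply, Pi.smul_apply, smul_eq_mul]
    refine Finset.sum_congr rfl fun n hn => ?_
    congr 1
    have := hpow n.toNat (e k) m
    rw [Int.toNat_of_nonneg (hsupp n hn)] at this
    exact this.symm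
  -- rotation invariance of the spectrum
  obtain ⟨C, hC⟩ := hΨbdd
  have hrot : ∀ u : ℂ, ‖u‖ = 1 → u • spectrum ℂ Sop = spectrum ℂ Sop := by
    intro u hu
    have hune : u ≠ 0 := by
      intro h; rw [h] at hu; simp at hu
    have huinv : ‖u⁻¹‖ = 1 := by rw [norm_inv, hu]; norm_num
    -- linear maps from Ψ
    have mkL : ∀ v : ℂ, ‖v‖ = 1 → ∃ L : E →L[ℂ] E, ∀ x, L x = Ψ v x := by
      intro v hv
      have hadd : ∀ x y : E, Ψ v (x + y) = Ψ v x + Ψ v y := by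
        intro x y; apply hι; funext n
        rw [map_add]
        simp only [Pi.add_apply, hΨ v hv]
        rw [map_add]
        simp only [Pi.add_apply]
        ring
      have hsmul : ∀ (c : ℂ) (x : E), Ψ v (c • x) = c • Ψ v x := by
        intro c x; apply hι; funext n
        rw [map_smul]
        simp only [Pi.smul_apply, smul_eq_mul, hΨ v hv]
        rw [map_smul]
        simp only [Pi.smul_apply, smul_eq_mul]
        ring
      refine ⟨LinearMap.mkContinuous ⟨⟨Ψ v, hadd⟩, hsmul⟩ C (hC v hv), fun x => rfl⟩
    obtain ⟨Lu, hLu⟩ := mkL u hu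
    obtain ⟨Lv, hLv⟩ := mkL u⁻¹ huinv
    have hzne : ∀ n : ℤ, u ^ n ≠ 0 := fun n => zpow_ne_zero n hune
    have hLuv : Lu * Lv = 1 := by
      ext x; apply hι; funext n
      show ι (Lu (Lv x)) n = ι x n
      rw [hLu, hLv, hΨ u hu, hΨ u⁻¹ huinv, inv_zpow, mul_assoc, inv_mul_cancel₀ (hzne n), mul_one]
    have hLvu : Lv * Lu = 1 := by
      ext x; apply hι; funext n
      show ι (Lv (Lu x)) n = ι x n
      rw [hLv, hLu, hΨ u⁻¹ huinv, hΨ u hu, inv_zpow, mul_assoc, mul_inv_cancel₀ (hzne n), mul_one]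
    set U : (E →L[ℂ] E)ˣ := ⟨Lu, Lv, hLuv, hLvu⟩ with hU
    -- conjugation relation: Lu * Sop = u • (Sop * Lu)
    have hconj : Lu * Sop = u • (Sop * Lu) := by
      ext x; apply hι; funext n
      show ι (Lu (Sop x)) n = ι ((u • (Sop * Lu)) x) n
      rw [hLu, hΨ u hu, hSop]
      have : (u • (Sop * Lu)) x = u • (Sop (Lu x)) := rfl
      rw [this, map_smul]
      simp only [Pi.smul_apply, smul_eq_mul]
      rw [hSop, hLu, hΨ u hu]
      have huu : u * u ^ (n - 1) = u ^ n := by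
        rw [mul_comm, ← zpow_add_one₀ hune, sub_add_cancel]
      rw [← huu]; ring
    have hUconj : u • Sop = ↑U * Sop * ↑U⁻¹ := by
      have h1 : (↑U : E →L[ℂ] E) = Lu := rfl
      have h2 : (↑U⁻¹ : E →L[ℂ] E) = Lv := rfl
      rw [h1, h2, hconj]
      rw [smul_mul_assoc, mul_assoc, hLuv, mul_one]
    calc u • spectrum ℂ Sop
        = (Units.mk0 u hune) • spectrum ℂ Sop := rfl
      _ = spectrum ℂ ((Units.mk0 u hune : ℂ) • Sop) := (spectrum.unit_smul_eq_smul Sop _).symm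
      _ = spectrum ℂ (↑U * Sop * ↑U⁻¹) := by rw [Units.val_mk0, hUconj]
      _ = spectrum ℂ Sop := spectrum.units_conjugate
  -- the spectral radius is attained
  obtain ⟨l, hlσ, hl⟩ := spectrum.exists_nnnorm_eq_spectralRadius Sop
  set r : ℝ := ‖l‖
  have hrρ : (spectralRadius ℂ Sop) = ENNReal.ofReal r := by
    rw [← hl]
    exact (ofReal_norm l).symm
  have hr0 : 0 ≤ r := norm_nonneg l
  -- sphere of radius r is in the spectrum
  have hsph : ∀ w : ℂ, ‖w‖ = r → w ∈ spectrum ℂ Sop := by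
    intro w hw
    rcases eq_or_ne r 0 with h0 | h0
    · have hw0 : w = 0 := by rwa [h0, norm_eq_zero] at hw
      have hl0 : l = 0 := by
        have : ‖l‖ = 0 := h0
        rwa [norm_eq_zero] at this
      rw [hw0, ← hl0]; exact hlσ
    · have hlne : l ≠ 0 := by
        intro h; apply h0; simp [r, h]
      have hu1 : ‖w / l‖ = 1 := by
        rw [norm_div, hw]
        exact div_self h0
      rw [← hrot (w / l) hu1]
      exact ⟨l, hlσ, by show (w / l) * l = w; exact div_mul_cancel₀ w hlne⟩
  -- bound on the sphere
  have hbound : ∀ w : ℂ, ‖w‖ = r → ‖P.eval w‖ ≤ ‖Mφ‖ := by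
    intro w hw
    have hw' : w ∈ spectrum ℂ Sop := hsph w hw
    have : P.eval w ∈ spectrum ℂ (Polynomial.aeval Sop P) :=
      spectrum.subset_polynomial_aeval Sop P ⟨w, hw', rfl⟩
    rw [← key] at this
    exact spectrum.norm_le_norm_of_mem this
  -- final
  intro z hz
  have hzr : ‖z‖ ≤ r := by
    rw [hrρ] at hz
    have := ENNReal.toReal_mono (by simp) hz
    simpa [ENNReal.toReal_ofReal hr0] using this
  have hgoal : (∑ n ∈ φ.support, φ n * z ^ n) = P.eval z := by
    rw [hPeval]
    refine Finset.sum_congr rfl fun n hn => ?_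
    congr 1
    rw [← zpow_natCast, Int.toNat_of_nonneg (hsupp n hn)]
  rw [hgoal]
  rcases eq_or_lt_of_le hzr with heq | hlt
  · exact hbound z heq
  · have hrpos : 0 < r := lt_of_le_of_lt (norm_nonneg z) hlt
    have hdiff : DiffContOnCl ℂ (fun w => P.eval w) (Metric.ball (0 : ℂ) r) :=
      (P.differentiable).diffContOnCl
    refine Complex.norm_le_of_forall_mem_frontier_norm_le Metric.isBounded_ball hdiff ?_ ?_
    · intro w hw
      rw [frontier_ball (0 : ℂ) hrpos.ne'] at hw
      exact hbound w (by simpa using hw)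
    · rw [closure_ball (0 : ℂ) hrpos.ne']
      simpa using hzr
end

section
/- If 𝐒 is bounded on 𝐄 but 𝐒₋₁ is not bounded, then every Toeplitz operator T on 𝐄 satisfies T̂(k) = 0 for all k < 0; symmetrically, if 𝐒₋₁ is bounded on 𝐄 but 𝐒 is not bounded, then every Toeplitz operator T on 𝐄 satisfies T̂(k) = 0 for all k > 0. -/
open Complex intervalIntegral Real Filter Topology

private lemma intExp16 (k : ℤ) :
    (∫ θ in (0:ℝ)..(2*Real.pi), Complex.exp ((k:ℂ) * θ * Complex.I)) =
      if k = 0 then (2*Real.pi : ℂ) else 0 := by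
  rcases eq_or_ne k 0 with hk | hk
  · simp [hk]
  · rw [if_neg hk]
    have hc : (k:ℂ) * Complex.I ≠ 0 := by
      simp [Complex.I_ne_zero, hk]
    have h0 : (∫ θ in (0:ℝ)..(2*Real.pi), Complex.exp (((k:ℂ)*Complex.I) * θ)) =
        (Complex.exp (((k:ℂ)*Complex.I) * ((2*Real.pi : ℝ):ℂ))
          - Complex.exp (((k:ℂ)*Complex.I) * ((0:ℝ):ℂ))) / ((k:ℂ)*Complex.I) :=
      integral_exp_mul_complex hc
    have h1 : Complex.exp (((k:ℂ)*Complex.I) * ((2*Real.pi:ℝ):ℂ)) = 1 := by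
      rw [← Complex.exp_int_mul_two_pi_mul_I k]
      push_cast
      ring_nf
    rw [show (fun θ : ℝ => Complex.exp ((k:ℂ) * θ * Complex.I))
        = fun θ : ℝ => Complex.exp (((k:ℂ)*Complex.I) * θ) by funext θ; ring_nf]
    rw [h0, h1]
    simp

private lemma normExp16 (r : ℝ) : ‖Complex.exp ((r:ℂ) * Complex.I)‖ = 1 := by
  simp [Complex.norm_exp]

/-- If `𝐒` is bounded on `𝐄` but `𝐒₋₁` is not, then every Toeplitz operator `T`
satisfies `T̂(k) = 0` for `k < 0`; symmetrically, if `𝐒₋₁` is bounded but `𝐒` is not,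
then `T̂(k) = 0` for `k > 0`. -/
theorem stmt16
    {E : Type*} [NormedAddCommGroup E] [NormedSpace ℂ E] [CompleteSpace E]
    (ι : E →ₗ[ℂ] (ℕ → ℂ)) (hι : Function.Injective ι)
    (e : ℕ → E) (he : ∀ k : ℕ, ι (e k) = Pi.single k 1)
    (hdense : Dense (Submodule.span ℂ (Set.range e) : Set E))
    (hcoord : ∀ n : ℕ, Continuous fun x : E => ι x n)
    (Γ : ℂ → E → E)
    (hΓ : ∀ z : ℂ, ‖z‖ = 1 → ∀ x : E, ∀ n : ℕ, ι (Γ z x) n = z ^ n * ι x n)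
    (hΓbdd : ∃ C : ℝ, ∀ z : ℂ, ‖z‖ = 1 → ∀ x : E, ‖Γ z x‖ ≤ C * ‖x‖)
    -- `T` is a Toeplitz operator on `𝐄`:
    (T : E →L[ℂ] E)
    (hT : ∀ k n : ℕ, ι (T (e (k + 1))) (n + 1) = ι (T (e k)) n)
    -- `Th` is the symbol sequence `T̂`:
    (Th : ℤ → ℂ)
    (hTh₁ : ∀ n : ℕ, Th n = ι (T (e 0)) n)
    (hTh₂ : ∀ n : ℕ, Th (-(n : ℤ)) = ι (T (e n)) 0) :
    -- if `𝐒` is bounded but `𝐒₋₁` is not bounded, then `T̂(k) = 0` for `k < 0`: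
    ((∀ x : E, ∃ y : E, ι y 0 = 0 ∧ ∀ n : ℕ, ι y (n + 1) = ι x n) →
      (¬ ∀ x : E, ∃ y : E, ∀ n : ℕ, ι y n = ι x (n + 1)) →
      ∀ k : ℤ, k < 0 → Th k = 0) ∧
    -- if `𝐒₋₁` is bounded but `𝐒` is not bounded, then `T̂(k) = 0` for `k > 0`:
    ((∀ x : E, ∃ y : E, ∀ n : ℕ, ι y n = ι x (n + 1)) →
      (¬ ∀ x : E, ∃ y : E, ι y 0 = 0 ∧ ∀ n : ℕ, ι y (n + 1) = ι x n) →
      ∀ k : ℤ, 0 < k → Th k = 0) := by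
  classical
  obtain ⟨C₀, hC₀⟩ := hΓbdd
  set C : ℝ := max C₀ 1 with hCdef
  have hC : ∀ z : ℂ, ‖z‖ = 1 → ∀ x : E, ‖Γ z x‖ ≤ C * ‖x‖ := fun z hz x =>
    (hC₀ z hz x).trans (mul_le_mul_of_nonneg_right (le_max_left _ _) (norm_nonneg x))
  have hCpos : (0:ℝ) < C := lt_of_lt_of_le one_pos (le_max_right _ _)
  -- the coordinate continuous linear functionals
  set φ : ℕ → (E →L[ℂ] ℂ) := fun n => ⟨(LinearMap.proj n).comp ι, hcoord n⟩ with hφdef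
  have hφ : ∀ (n : ℕ) (x : E), φ n x = ι x n := fun n x => rfl
  -- matrix entries of T
  have ht : ∀ k n : ℕ, ι (T (e k)) n = Th ((n:ℤ) - (k:ℤ)) := by
    intro k
    induction k with
    | zero => intro n; rw [show ((n:ℤ) - (0:ℕ)) = (n:ℤ) by simp, hTh₁ n]
    | succ k ih =>
      intro n
      cases n with
      | zero =>
        rw [show ((0:ℕ):ℤ) - ((k+1:ℕ):ℤ) = -((k+1:ℕ):ℤ) by simp, hTh₂ (k+1)]
      | succ n =>
        rw [hT k n, ih n]
        congr 1
        push_cast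
        ring
  -- Γ is subtractive
  have hΓsub : ∀ z : ℂ, ‖z‖ = 1 → ∀ a b : E, Γ z a - Γ z b = Γ z (a - b) := by
    intro z hz a b
    apply hι
    funext n
    rw [map_sub, Pi.sub_apply, hΓ z hz, hΓ z hz, hΓ z hz, map_sub, Pi.sub_apply]
    ring
  -- Γ on finitely supported elements
  have hΓfin : ∀ (w : ℂ), ‖w‖ = 1 → ∀ (c : ℕ →₀ ℂ),
      Γ w (c.sum fun i a => a • e i) = c.sum fun i a => (a * w ^ i) • e i := by
    intro w hw c
    apply hι
    funext n
    rw [hΓ w hw, map_finsuppSum, map_finsuppSum, Finsupp.sum, Finsupp.sum,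
      Finset.sum_apply, Finset.sum_apply, Finset.mul_sum]
    apply Finset.sum_congr rfl
    intro i _
    rw [map_smul, map_smul, he, Pi.smul_apply, Pi.smul_apply, Pi.single_apply]
    rcases eq_or_ne n i with h | h
    · subst h; rw [if_pos rfl]; simp; ring
    · rw [if_neg h]; simp
  -- coordinates of finitely supported elements
  have hfc : ∀ (c : ℕ →₀ ℂ) (m : ℕ), ι (c.sum fun i a => a • e i) m = c m := by
    intro c m
    rw [map_finsuppSum, Finsupp.sum, Finset.sum_apply]
    have : ∀ i ∈ c.support, (ι (c i • e i)) m = if i = m then c i else 0 := by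
      intro i _
      rw [map_smul, he, Pi.smul_apply, Pi.single_apply]
      split_ifs with h1 h2 h2
      · exact mul_one _
      · exact absurd h1.symm h2
      · exact absurd h2.symm h1
      · exact smul_zero _
    rw [Finset.sum_congr rfl this, Finset.sum_ite_eq' c.support m (fun i => c i)]
    split_ifs with h
    · rfl
    · exact (Finsupp.notMem_support_iff.mp h).symm
  -- continuity of θ ↦ Γ(e^{iθ}) y
  have hcontΓ : ∀ y : E, Continuous fun θ : ℝ => Γ (Complex.exp ((θ:ℂ) * Complex.I)) y := by
    intro y
    obtain ⟨u, humem, hulim⟩ := mem_closure_iff_seq_limit.mp (hdense y)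
    have hfin : ∀ j : ℕ, ∃ c : ℕ →₀ ℂ, (c.sum fun i a => a • e i) = u j := fun j =>
      Finsupp.mem_span_range_iff_exists_finsupp.mp (humem j)
    choose c hcc using hfin
    have hcont_j : ∀ j : ℕ, Continuous fun θ : ℝ => Γ (Complex.exp ((θ:ℂ)*Complex.I)) (u j) := by
      intro j
      have heq : (fun θ : ℝ => Γ (Complex.exp ((θ:ℂ)*Complex.I)) (u j))
          = fun θ : ℝ => ∑ i ∈ (c j).support,
              ((c j) i * Complex.exp ((θ:ℂ)*Complex.I) ^ i) • e i := by
        funext θ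
        rw [← hcc j, hΓfin _ (normExp16 θ) (c j)]
        rfl
      rw [heq]
      apply continuous_finset_sum
      intro i _
      exact (continuous_const.mul
        (((Complex.continuous_ofReal.mul continuous_const).cexp).pow i)).smul continuous_const
    have hTU : TendstoUniformly (fun (j : ℕ) (θ : ℝ) => Γ (Complex.exp ((θ:ℂ)*Complex.I)) (u j))
        (fun (θ : ℝ) => Γ (Complex.exp ((θ:ℂ)*Complex.I)) y) atTop := by
      rw [Metric.tendstoUniformly_iff]
      intro ε hε
      have hd : Tendsto (fun j => dist (u j) y) atTop (𝓝 0) :=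
        tendsto_iff_dist_tendsto_zero.mp hulim
      filter_upwards [hd.eventually (gt_mem_nhds (by positivity : (0:ℝ) < ε / C))] with j hj θ
      have h1 : dist (Γ (Complex.exp ((θ:ℂ)*Complex.I)) y)
          (Γ (Complex.exp ((θ:ℂ)*Complex.I)) (u j))
          = ‖Γ (Complex.exp ((θ:ℂ)*Complex.I)) (y - u j)‖ := by
        rw [dist_eq_norm, hΓsub _ (normExp16 θ)]
      rw [h1]
      calc ‖Γ (Complex.exp ((θ:ℂ)*Complex.I)) (y - u j)‖ ≤ C * ‖y - u j‖ :=
              hC _ (normExp16 θ) _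
        _ = C * dist (u j) y := by rw [← dist_eq_norm, dist_comm]
        _ < C * (ε / C) := by exact (mul_lt_mul_iff_right₀ hCpos).mpr hj
        _ = ε := by field_simp
    exact hTU.continuous (Filter.Eventually.of_forall hcont_j).frequently
  -- continuity of the full integrand
  have hGcont : ∀ x : E, Continuous fun θ : ℝ =>
      Γ (Complex.exp ((θ:ℂ) * Complex.I))
        (T (Γ (Complex.exp ((-θ:ℝ) * Complex.I)) x)) := by
    intro x
    have hg : Continuous fun θ : ℝ => T (Γ (Complex.exp ((-θ:ℝ) * Complex.I)) x) :=
      T.continuous.comp ((hcontΓ x).comp continuous_neg)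
    set g : ℝ → E := fun θ : ℝ => T (Γ (Complex.exp ((-θ:ℝ) * Complex.I)) x) with hgdef
    rw [continuous_iff_continuousAt]
    intro θ₀
    have hzero : Tendsto (fun (θ : ℝ) => ‖Γ (Complex.exp ((θ:ℂ)*Complex.I)) (g θ)
        - Γ (Complex.exp (((θ₀:ℝ):ℂ)*Complex.I)) (g θ₀)‖) (𝓝 θ₀) (𝓝 0) := by
      have t1 : Tendsto (fun (θ : ℝ) => ‖g θ - g θ₀‖) (𝓝 θ₀) (𝓝 0) := by
        have := ((hg.tendsto θ₀).sub (tendsto_const_nhds (x := g θ₀) (f := 𝓝 θ₀))).norm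
        simpa using this
      have t2 : Tendsto (fun (θ : ℝ) => ‖Γ (Complex.exp ((θ:ℂ)*Complex.I)) (g θ₀)
          - Γ (Complex.exp (((θ₀:ℝ):ℂ)*Complex.I)) (g θ₀)‖) (𝓝 θ₀) (𝓝 0) := by
        have := ((((hcontΓ (g θ₀)).tendsto θ₀)).sub
          (tendsto_const_nhds (f := 𝓝 θ₀)
            (x := Γ (Complex.exp (((θ₀:ℝ):ℂ)*Complex.I)) (g θ₀)))).norm
        simpa using this
      have hbound : ∀ θ : ℝ, ‖Γ (Complex.exp ((θ:ℂ)*Complex.I)) (g θ)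
          - Γ (Complex.exp (((θ₀:ℝ):ℂ)*Complex.I)) (g θ₀)‖
          ≤ C * ‖g θ - g θ₀‖ + ‖Γ (Complex.exp ((θ:ℂ)*Complex.I)) (g θ₀)
              - Γ (Complex.exp (((θ₀:ℝ):ℂ)*Complex.I)) (g θ₀)‖ := by
        intro θ
        have hsplit : Γ (Complex.exp ((θ:ℂ)*Complex.I)) (g θ)
            - Γ (Complex.exp (((θ₀:ℝ):ℂ)*Complex.I)) (g θ₀)
            = (Γ (Complex.exp ((θ:ℂ)*Complex.I)) (g θ)
                - Γ (Complex.exp ((θ:ℂ)*Complex.I)) (g θ₀))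
              + (Γ (Complex.exp ((θ:ℂ)*Complex.I)) (g θ₀)
                - Γ (Complex.exp (((θ₀:ℝ):ℂ)*Complex.I)) (g θ₀)) := by abel
        rw [hsplit]
        refine (norm_add_le _ _).trans ?_
        gcongr
        rw [hΓsub _ (normExp16 θ)]
        exact hC _ (normExp16 θ) _
      have hlim : Tendsto (fun (θ : ℝ) => C * ‖g θ - g θ₀‖
          + ‖Γ (Complex.exp ((θ:ℂ)*Complex.I)) (g θ₀)
            - Γ (Complex.exp (((θ₀:ℝ):ℂ)*Complex.I)) (g θ₀)‖) (𝓝 θ₀) (𝓝 0) := by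
        have := (t1.const_mul C).add t2
        simpa using this
      exact squeeze_zero (fun θ => norm_nonneg _) hbound hlim
    have hfinal : Tendsto (fun (θ : ℝ) => Γ (Complex.exp ((θ:ℂ)*Complex.I)) (g θ)) (𝓝 θ₀)
        (𝓝 (Γ (Complex.exp (((θ₀:ℝ):ℂ)*Complex.I)) (g θ₀))) := by
      rw [tendsto_iff_norm_sub_tendsto_zero]
      exact hzero
    exact hfinal
  -- the key diagonal-extraction identity
  have key : ∀ (d : ℤ) (x : E) (n : ℕ),
      ι (∫ θ in (0:ℝ)..(2*Real.pi), Complex.exp ((d:ℂ) * θ * Complex.I) •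
          Γ (Complex.exp ((θ:ℂ) * Complex.I))
            (T (Γ (Complex.exp ((-θ:ℝ) * Complex.I)) x))) n
        = (2*Real.pi:ℂ) * Th (-d) *
            (if h : 0 ≤ (n:ℤ) + d then ι x ((n + d).toNat) else 0) := by
    intro d
    -- integrability of the integrand
    have hexpc : Continuous fun θ : ℝ => Complex.exp ((d:ℂ) * θ * Complex.I) :=
      (((continuous_const.mul Complex.continuous_ofReal).mul continuous_const)).cexp
    have hInt : ∀ x' : E, IntervalIntegrable (fun θ : ℝ =>
        Complex.exp ((d:ℂ) * θ * Complex.I) •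
          Γ (Complex.exp ((θ:ℂ) * Complex.I))
            (T (Γ (Complex.exp ((-θ:ℝ) * Complex.I)) x')))
        MeasureTheory.volume 0 (2*Real.pi) := fun x' =>
      (hexpc.smul (hGcont x')).intervalIntegrable _ _
    -- the identity on finitely supported elements
    have keyFin : ∀ u : E, u ∈ (Submodule.span ℂ (Set.range e) : Set E) → ∀ n : ℕ,
        ι (∫ θ in (0:ℝ)..(2*Real.pi), Complex.exp ((d:ℂ) * θ * Complex.I) •
            Γ (Complex.exp ((θ:ℂ) * Complex.I))
              (T (Γ (Complex.exp ((-θ:ℝ) * Complex.I)) u))) n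
          = (2*Real.pi:ℂ) * Th (-d) *
              (if h : 0 ≤ (n:ℤ) + d then ι u ((n + d).toNat) else 0) := by
      intro u humem n
      obtain ⟨c, rfl⟩ := Finsupp.mem_span_range_iff_exists_finsupp.mp humem
      -- pull the coordinate functional inside the integral
      have h1 : ι (∫ θ in (0:ℝ)..(2*Real.pi), Complex.exp ((d:ℂ) * θ * Complex.I) •
            Γ (Complex.exp ((θ:ℂ) * Complex.I))
              (T (Γ (Complex.exp ((-θ:ℝ) * Complex.I)) (c.sum fun i a => a • e i)))) n
          = ∫ θ in (0:ℝ)..(2*Real.pi), Complex.exp ((d:ℂ) * θ * Complex.I) *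
              ι (Γ (Complex.exp ((θ:ℂ) * Complex.I))
                (T (Γ (Complex.exp ((-θ:ℝ) * Complex.I)) (c.sum fun i a => a • e i)))) n := by
        rw [← hφ n, ← ContinuousLinearMap.intervalIntegral_comp_comm (φ n) (hInt _)]
        congr 1
        funext θ
        rw [map_smul]
        rfl
      rw [h1]
      -- rewrite the scalar integrand as a finite sum of exponentials
      have h2 : ∀ θ : ℝ, Complex.exp ((d:ℂ) * θ * Complex.I) *
            ι (Γ (Complex.exp ((θ:ℂ) * Complex.I))
              (T (Γ (Complex.exp ((-θ:ℝ) * Complex.I)) (c.sum fun i a => a • e i)))) n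
          = ∑ i ∈ c.support, (c i * Th ((n:ℤ) - i)) *
              Complex.exp (((d + n - i : ℤ):ℂ) * θ * Complex.I) := by
        intro θ
        rw [hΓ _ (normExp16 θ), hΓfin _ (normExp16 (-θ)) c,
          show (c.sum fun i a => (a * Complex.exp (((-θ:ℝ):ℂ) * Complex.I) ^ i) • e i)
            = ∑ i ∈ c.support, (c i * Complex.exp (((-θ:ℝ):ℂ) * Complex.I) ^ i) • e i
            from rfl,
          map_sum, map_sum, Finset.sum_apply, ← mul_assoc, Finset.mul_sum]
        apply Finset.sum_congr rfl
        intro i _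
        rw [map_smul, map_smul, Pi.smul_apply, smul_eq_mul, ht i n]
        have hexp : Complex.exp ((d:ℂ) * θ * Complex.I) *
              Complex.exp ((θ:ℂ) * Complex.I) ^ n *
              Complex.exp (((-θ:ℝ):ℂ) * Complex.I) ^ i
            = Complex.exp (((d + n - i : ℤ):ℂ) * θ * Complex.I) := by
          rw [← Complex.exp_nat_mul, ← Complex.exp_nat_mul, mul_assoc,
            ← Complex.exp_add, ← Complex.exp_add]
          congr 1
          push_cast
          ring
        calc Complex.exp ((d:ℂ) * θ * Complex.I) * Complex.exp ((θ:ℂ) * Complex.I) ^ n *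
              (c i * Complex.exp (((-θ:ℝ):ℂ) * Complex.I) ^ i * Th ((n:ℤ) - i))
            = (c i * Th ((n:ℤ) - i)) * (Complex.exp ((d:ℂ) * θ * Complex.I) *
                Complex.exp ((θ:ℂ) * Complex.I) ^ n *
                Complex.exp (((-θ:ℝ):ℂ) * Complex.I) ^ i) := by ring
          _ = (c i * Th ((n:ℤ) - i)) *
                Complex.exp (((d + n - i : ℤ):ℂ) * θ * Complex.I) := by rw [hexp]
      rw [intervalIntegral.integral_congr (g := fun θ : ℝ => ∑ i ∈ c.support,
          (c i * Th ((n:ℤ) - i)) * Complex.exp (((d + n - i : ℤ):ℂ) * θ * Complex.I))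
          (fun θ _ => h2 θ)]
      rw [intervalIntegral.integral_finset_sum (f := fun i (θ : ℝ) => (c i * Th ((n:ℤ) - i)) *
          Complex.exp (((d + n - i : ℤ):ℂ) * θ * Complex.I)) (fun i _ =>
        ((continuous_const.mul ((((continuous_const.mul Complex.continuous_ofReal).mul
          continuous_const)).cexp)).intervalIntegrable _ _))]
      have h3 : ∀ i ∈ c.support, (∫ θ in (0:ℝ)..(2*Real.pi),
            (c i * Th ((n:ℤ) - i)) * Complex.exp (((d + n - i : ℤ):ℂ) * θ * Complex.I))
          = (c i * Th ((n:ℤ) - i)) * (if (d + n - i : ℤ) = 0 then (2*Real.pi:ℂ) else 0) := by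
        intro i _
        rw [intervalIntegral.integral_const_mul, intExp16 (d + n - i)]
      rw [Finset.sum_congr rfl h3]
      rcases le_or_gt 0 ((n:ℤ) + d) with h | h
      · rw [dif_pos h]
        have h4 : ∀ i ∈ c.support, (c i * Th ((n:ℤ) - i)) *
              (if (d + n - i : ℤ) = 0 then (2*Real.pi:ℂ) else 0)
            = if i = ((n:ℤ) + d).toNat then (c i * Th ((n:ℤ) - i)) * (2*Real.pi:ℂ) else 0 := by
          intro i _
          rcases eq_or_ne i (((n:ℤ) + d).toNat) with hi | hi
          · rw [if_pos hi, if_pos (by omega)]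
          · rw [if_neg hi, if_neg (by omega), mul_zero]
        rw [Finset.sum_congr rfl h4,
          Finset.sum_ite_eq' c.support (((n:ℤ) + d).toNat)
            (fun i => (c i * Th ((n:ℤ) - i)) * (2*Real.pi:ℂ))]
        rw [hfc c (((n:ℤ) + d).toNat)]
        have hth : Th ((n:ℤ) - (((n:ℤ) + d).toNat : ℤ)) = Th (-d) := by congr 1; omega
        split_ifs with hmem
        · rw [hth]; ring
        · rw [Finsupp.notMem_support_iff.mp hmem]; ring
      · rw [dif_neg (by omega)]
        rw [Finset.sum_eq_zero, mul_zero]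
        intro i _
        rw [if_neg (by omega), mul_zero]
    -- extend to all of E by density
    intro x n
    obtain ⟨u, humem, hulim⟩ := mem_closure_iff_seq_limit.mp (hdense x)
    set D : ℝ := ‖φ n‖ * ((C * (‖T‖ * C)) * |2*Real.pi - 0|) with hDdef
    have hL1 : Tendsto (fun j => ι (∫ θ in (0:ℝ)..(2*Real.pi),
        Complex.exp ((d:ℂ) * θ * Complex.I) • Γ (Complex.exp ((θ:ℂ) * Complex.I))
          (T (Γ (Complex.exp ((-θ:ℝ) * Complex.I)) (u j)))) n) atTop
        (𝓝 (ι (∫ θ in (0:ℝ)..(2*Real.pi),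
          Complex.exp ((d:ℂ) * θ * Complex.I) • Γ (Complex.exp ((θ:ℂ) * Complex.I))
            (T (Γ (Complex.exp ((-θ:ℝ) * Complex.I)) x))) n)) := by
      rw [← tendsto_sub_nhds_zero_iff]
      have hbnd : ∀ j : ℕ, ‖ι (∫ θ in (0:ℝ)..(2*Real.pi),
          Complex.exp ((d:ℂ) * θ * Complex.I) • Γ (Complex.exp ((θ:ℂ) * Complex.I))
            (T (Γ (Complex.exp ((-θ:ℝ) * Complex.I)) (u j)))) n
          - ι (∫ θ in (0:ℝ)..(2*Real.pi),
          Complex.exp ((d:ℂ) * θ * Complex.I) • Γ (Complex.exp ((θ:ℂ) * Complex.I))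
            (T (Γ (Complex.exp ((-θ:ℝ) * Complex.I)) x))) n‖ ≤ D * ‖u j - x‖ := by
        intro j
        have hdiff : (∫ θ in (0:ℝ)..(2*Real.pi),
            Complex.exp ((d:ℂ) * θ * Complex.I) • Γ (Complex.exp ((θ:ℂ) * Complex.I))
              (T (Γ (Complex.exp ((-θ:ℝ) * Complex.I)) (u j))))
            - (∫ θ in (0:ℝ)..(2*Real.pi),
            Complex.exp ((d:ℂ) * θ * Complex.I) • Γ (Complex.exp ((θ:ℂ) * Complex.I))
              (T (Γ (Complex.exp ((-θ:ℝ) * Complex.I)) x)))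
            = ∫ θ in (0:ℝ)..(2*Real.pi),
            Complex.exp ((d:ℂ) * θ * Complex.I) • Γ (Complex.exp ((θ:ℂ) * Complex.I))
              (T (Γ (Complex.exp ((-θ:ℝ) * Complex.I)) (u j - x))) := by
          rw [← intervalIntegral.integral_sub (hInt (u j)) (hInt x)]
          congr 1
          funext θ
          rw [← smul_sub, hΓsub _ (normExp16 θ), ← map_sub, hΓsub _ (normExp16 (-θ))]
        have hnormint : ‖∫ θ in (0:ℝ)..(2*Real.pi),
            Complex.exp ((d:ℂ) * θ * Complex.I) • Γ (Complex.exp ((θ:ℂ) * Complex.I))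
              (T (Γ (Complex.exp ((-θ:ℝ) * Complex.I)) (u j - x)))‖
            ≤ (C * (‖T‖ * (C * ‖u j - x‖))) * |2*Real.pi - 0| := by
          apply intervalIntegral.norm_integral_le_of_norm_le_const
          intro θ _
          rw [norm_smul]
          have hone : ‖Complex.exp ((d:ℂ) * θ * Complex.I)‖ = 1 := by
            rw [show (d:ℂ) * θ * Complex.I = (((d * θ : ℝ)):ℂ) * Complex.I by push_cast; ring]
            exact normExp16 _
          rw [hone, one_mul]
          calc ‖Γ (Complex.exp ((θ:ℂ) * Complex.I))
                (T (Γ (Complex.exp ((-θ:ℝ) * Complex.I)) (u j - x)))‖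
              ≤ C * ‖T (Γ (Complex.exp ((-θ:ℝ) * Complex.I)) (u j - x))‖ :=
                hC _ (normExp16 θ) _
            _ ≤ C * (‖T‖ * ‖Γ (Complex.exp ((-θ:ℝ) * Complex.I)) (u j - x)‖) := by
                gcongr; exact T.le_opNorm _
            _ ≤ C * (‖T‖ * (C * ‖u j - x‖)) :=
                mul_le_mul_of_nonneg_left (mul_le_mul_of_nonneg_left
                  (hC _ (normExp16 (-θ)) _) (norm_nonneg _)) hCpos.le
        calc ‖ι (∫ θ in (0:ℝ)..(2*Real.pi),
            Complex.exp ((d:ℂ) * θ * Complex.I) • Γ (Complex.exp ((θ:ℂ) * Complex.I))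
              (T (Γ (Complex.exp ((-θ:ℝ) * Complex.I)) (u j)))) n
            - ι (∫ θ in (0:ℝ)..(2*Real.pi),
            Complex.exp ((d:ℂ) * θ * Complex.I) • Γ (Complex.exp ((θ:ℂ) * Complex.I))
              (T (Γ (Complex.exp ((-θ:ℝ) * Complex.I)) x))) n‖
            = ‖(φ n) ((∫ θ in (0:ℝ)..(2*Real.pi),
              Complex.exp ((d:ℂ) * θ * Complex.I) • Γ (Complex.exp ((θ:ℂ) * Complex.I))
                (T (Γ (Complex.exp ((-θ:ℝ) * Complex.I)) (u j))))
              - (∫ θ in (0:ℝ)..(2*Real.pi),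
              Complex.exp ((d:ℂ) * θ * Complex.I) • Γ (Complex.exp ((θ:ℂ) * Complex.I))
                (T (Γ (Complex.exp ((-θ:ℝ) * Complex.I)) x))))‖ := by rw [map_sub]; rfl
          _ ≤ ‖φ n‖ * ‖(∫ θ in (0:ℝ)..(2*Real.pi),
              Complex.exp ((d:ℂ) * θ * Complex.I) • Γ (Complex.exp ((θ:ℂ) * Complex.I))
                (T (Γ (Complex.exp ((-θ:ℝ) * Complex.I)) (u j))))
              - (∫ θ in (0:ℝ)..(2*Real.pi),
              Complex.exp ((d:ℂ) * θ * Complex.I) • Γ (Complex.exp ((θ:ℂ) * Complex.I))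
                (T (Γ (Complex.exp ((-θ:ℝ) * Complex.I)) x)))‖ := (φ n).le_opNorm _
          _ ≤ ‖φ n‖ * ((C * (‖T‖ * (C * ‖u j - x‖))) * |2*Real.pi - 0|) := by
              rw [hdiff]
              exact mul_le_mul_of_nonneg_left hnormint (norm_nonneg _)
          _ = D * ‖u j - x‖ := by rw [hDdef]; ring
      have hbase : Tendsto (fun j => ‖u j - x‖) atTop (𝓝 0) :=
        tendsto_iff_norm_sub_tendsto_zero.mp hulim
      have hDlim : Tendsto (fun j => D * ‖u j - x‖) atTop (𝓝 0) := by
        have := hbase.const_mul D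
        simpa using this
      exact squeeze_zero_norm hbnd hDlim
    have hL2 : Tendsto (fun j => (2*Real.pi:ℂ) * Th (-d) *
        (if h : 0 ≤ (n:ℤ) + d then ι (u j) ((n + d).toNat) else 0)) atTop
        (𝓝 ((2*Real.pi:ℂ) * Th (-d) *
          (if h : 0 ≤ (n:ℤ) + d then ι x ((n + d).toNat) else 0))) := by
      rcases le_or_gt 0 ((n:ℤ) + d) with h | h
      · simp only [dif_pos h]
        exact (((hcoord (((n:ℤ) + d).toNat)).tendsto x).comp hulim).const_mul _
      · simp only [dif_neg (not_le.mpr h)]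
        exact tendsto_const_nhds
    have heq : (fun j => ι (∫ θ in (0:ℝ)..(2*Real.pi),
        Complex.exp ((d:ℂ) * θ * Complex.I) • Γ (Complex.exp ((θ:ℂ) * Complex.I))
          (T (Γ (Complex.exp ((-θ:ℝ) * Complex.I)) (u j)))) n)
        = fun j => (2*Real.pi:ℂ) * Th (-d) *
          (if h : 0 ≤ (n:ℤ) + d then ι (u j) ((n + d).toNat) else 0) :=
      funext fun j => keyFin (u j) (humem j) n
    rw [heq] at hL1
    exact tendsto_nhds_unique hL1 hL2
  have h2π : ((2*Real.pi : ℂ)) ≠ 0 :=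
    mul_ne_zero two_ne_zero (Complex.ofReal_ne_zero.mpr Real.pi_ne_zero)
  constructor
  · -- 𝐒 bounded, 𝐒₋₁ unbounded: negative coefficients vanish
    intro hS hnS k hk
    by_contra hc
    apply hnS
    intro x
    obtain ⟨m, hm1, hm⟩ : ∃ m : ℕ, 1 ≤ m ∧ (m:ℤ) = -k :=
      ⟨(-k).toNat, by omega, by omega⟩
    set y₀ : E := ((2*Real.pi:ℂ) * Th k)⁻¹ •
      (∫ θ in (0:ℝ)..(2*Real.pi), Complex.exp (((m:ℤ):ℂ) * θ * Complex.I) •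
          Γ (Complex.exp ((θ:ℂ) * Complex.I))
            (T (Γ (Complex.exp ((-θ:ℝ) * Complex.I)) x))) with hy₀def
    have hy₀ : ∀ n : ℕ, ι y₀ n = ι x (n + m) := by
      intro n
      rw [hy₀def, map_smul, Pi.smul_apply, key (m:ℤ) x n]
      rw [dif_pos (by positivity)]
      have h1 : (((n:ℤ) + m).toNat) = n + m := by omega
      rw [h1, show (-(m:ℤ)) = k by omega]
      rw [smul_eq_mul, ← mul_assoc, inv_mul_cancel₀ (mul_ne_zero h2π hc), one_mul]
    -- now shift down using boundedness of 𝐒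
    have shift : ∀ j : ℕ, ∃ w : E, (∀ n, n < j → ι w n = 0) ∧
        ∀ n, ι w (n + j) = ι x (n + m) := by
      intro j
      induction j with
      | zero => exact ⟨y₀, fun n hn => absurd hn (Nat.not_lt_zero n), fun n => hy₀ n⟩
      | succ j ih =>
        obtain ⟨w, hw0, hw⟩ := ih
        obtain ⟨w', hw'0, hw'⟩ := hS w
        refine ⟨w', ?_, ?_⟩
        · intro n hn
          cases n with
          | zero => exact hw'0
          | succ n => rw [hw' n]; exact hw0 n (by omega)
        · intro n
          rw [show n + (j+1) = (n + j) + 1 by omega, hw' (n+j), hw n]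
    obtain ⟨w, hw0, hw⟩ := shift (m - 1)
    refine ⟨w + ∑ j ∈ Finset.range (m-1), ι x (j+1) • e j, fun n => ?_⟩
    rw [map_add, Pi.add_apply, map_sum, Finset.sum_apply]
    have hsum : (∑ j ∈ Finset.range (m-1), (ι (ι x (j+1) • e j)) n)
        = if n < m - 1 then ι x (n+1) else 0 := by
      have : ∀ j ∈ Finset.range (m-1), (ι (ι x (j+1) • e j)) n
          = if j = n then ι x (j+1) else 0 := by
        intro j _
        rw [map_smul, he, Pi.smul_apply, Pi.single_apply]
        split_ifs with h1 h2 h2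
        · exact mul_one _
        · exact absurd h1.symm h2
        · exact absurd h2.symm h1
        · exact smul_zero _
      rw [Finset.sum_congr rfl this, Finset.sum_ite_eq' (Finset.range (m-1)) n]
      simp [Finset.mem_range]
    rw [hsum]
    rcases lt_or_ge n (m-1) with h | h
    · rw [if_pos h, hw0 n h, zero_add]
    · have h2 := hw (n - (m-1))
      have e1 : n - (m-1) + (m-1) = n := by omega
      have e2 : n - (m-1) + m = n + 1 := by omega
      rw [e1, e2] at h2
      rw [if_neg (by omega), add_zero, h2]
  · -- 𝐒₋₁ bounded, 𝐒 unbounded: positive coefficients vanish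
    intro hSm1 hnS k hk
    by_contra hc
    apply hnS
    intro x
    obtain ⟨m, hm1, hm⟩ : ∃ m : ℕ, 1 ≤ m ∧ (m:ℤ) = k :=
      ⟨k.toNat, by omega, by omega⟩
    set y₀ : E := ((2*Real.pi:ℂ) * Th k)⁻¹ •
      (∫ θ in (0:ℝ)..(2*Real.pi), Complex.exp ((((-(m:ℤ)) : ℤ):ℂ) * θ * Complex.I) •
          Γ (Complex.exp ((θ:ℂ) * Complex.I))
            (T (Γ (Complex.exp ((-θ:ℝ) * Complex.I)) x))) with hy₀def
    have hy₀ : (∀ n, n < m → ι y₀ n = 0) ∧ ∀ n : ℕ, ι y₀ (n + m) = ι x n := by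
      constructor
      · intro n hn
        rw [hy₀def, map_smul, Pi.smul_apply, key (-(m:ℤ)) x n]
        rw [dif_neg (by omega)]
        simp
      · intro n
        rw [hy₀def, map_smul, Pi.smul_apply, key (-(m:ℤ)) x (n+m)]
        rw [dif_pos (by push_cast; omega)]
        have h1 : ((((n+m:ℕ):ℤ) + -(m:ℤ)).toNat) = n := by omega
        rw [h1, show (-(-(m:ℤ))) = k by omega]
        rw [smul_eq_mul, ← mul_assoc, inv_mul_cancel₀ (mul_ne_zero h2π hc), one_mul]
    -- shift up using boundedness of 𝐒₋₁
    have shift : ∀ j : ℕ, j ≤ m - 1 → ∃ w : E, (∀ n, n < m - j → ι w n = 0) ∧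
        ∀ n, ι w (n + (m - j)) = ι x n := by
      intro j
      induction j with
      | zero => intro _; exact ⟨y₀, fun n hn => hy₀.1 n hn, fun n => hy₀.2 n⟩
      | succ j ih =>
        intro hj
        obtain ⟨w, hw0, hw⟩ := ih (by omega)
        obtain ⟨w', hw'⟩ := hSm1 w
        refine ⟨w', ?_, ?_⟩
        · intro n hn
          rw [hw' n]
          exact hw0 (n+1) (by omega)
        · intro n
          rw [hw' (n + (m - (j+1)))]
          rw [show n + (m - (j+1)) + 1 = n + (m - j) by omega]
          exact hw n
    obtain ⟨w, hw0, hw⟩ := shift (m-1) le_rfl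
    have hmm : m - (m-1) = 1 := by omega
    rw [hmm] at hw0 hw
    exact ⟨w, hw0 0 one_pos, fun n => hw n⟩
end
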